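/- arXiv:1803.03105 — 8 statements merged into one kernel-verified Lean document; each statement's English description precedes it below -/
import Mathlib

section
/- Let a : ℕ → ℝ be a sequence with a_k ≥ 0 for all k and Σ_{k=0}^∞ a_k < ∞, and define f : [-1,1] → ℝ by f(t) = Σ_{k=0}^∞ a_k t^k. Then the kernel (x,y) ∈ S^∞ × S^∞ ↦ f(⟨x,y⟩) is strictly positive definite on S^∞ if, and only if, the set {k ∈ ℕ : a_k > 0} contains infinitely many even integers and infinitely many odd integers. -/
open scoped BigOperators RealInnerProductSpace
open Finset

noncomputable section

section Aux

variable {E : Type*} [NormedAddCommGroup E] [InnerProductSpace ℝ E]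

lemma gram_quadform_eq (n : ℕ) (x : Fin n → E) (c : Fin n → ℝ) :
    ∑ i, ∑ j, c i * c j * ⟪x i, x j⟫ = ⟪∑ i, c i • x i, ∑ j, c j • x j⟫ := by
  rw [sum_inner]
  refine Finset.sum_congr rfl fun i _ => ?_
  rw [inner_sum]
  refine Finset.sum_congr rfl fun j _ => ?_
  rw [real_inner_smul_left, real_inner_smul_right]; ring

lemma gram_quadform_nonneg (n : ℕ) (x : Fin n → E) (c : Fin n → ℝ) :
    0 ≤ ∑ i, ∑ j, c i * c j * ⟪x i, x j⟫ := by
  rw [gram_quadform_eq]; exact real_inner_self_nonneg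

lemma sum_sq_expand (n k : ℕ) (B : Matrix (Fin n) (Fin n) ℝ) (c : Fin n → ℝ) :
    ∑ i, ∑ j, c i * c j * (∑ l, B l i * B l j) ^ k
      = ∑ m : Fin k → Fin n, (∑ i, c i * ∏ t, B (m t) i) ^ 2 := by
  classical
  have key : ∀ i j : Fin n, (∑ l, B l i * B l j) ^ k
      = ∑ m : Fin k → Fin n, (∏ t, B (m t) i) * (∏ t, B (m t) j) := by
    intro i j
    have h1 : (∏ _t : Fin k, (∑ l, B l i * B l j)) = (∑ l, B l i * B l j) ^ k := by
      simp [Finset.prod_const]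
    rw [← h1, Finset.prod_univ_sum (fun _ : Fin k => (univ : Finset (Fin n)))
        (fun _ l => B l i * B l j), Fintype.piFinset_univ]
    exact Finset.sum_congr rfl fun m _ => by rw [Finset.prod_mul_distrib]
  calc ∑ i, ∑ j, c i * c j * (∑ l, B l i * B l j) ^ k
      = ∑ i, ∑ j, ∑ m : Fin k → Fin n,
          (c i * ∏ t, B (m t) i) * (c j * ∏ t, B (m t) j) := by
        refine Finset.sum_congr rfl fun i _ => Finset.sum_congr rfl fun j _ => ?_
        rw [key, Finset.mul_sum]
        exact Finset.sum_congr rfl fun m _ => by ring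
    _ = ∑ i, ∑ m : Fin k → Fin n, ∑ j,
          (c i * ∏ t, B (m t) i) * (c j * ∏ t, B (m t) j) := by
        exact Finset.sum_congr rfl fun i _ => Finset.sum_comm
    _ = ∑ m : Fin k → Fin n, ∑ i, ∑ j,
          (c i * ∏ t, B (m t) i) * (c j * ∏ t, B (m t) j) := Finset.sum_comm
    _ = ∑ m : Fin k → Fin n, (∑ i, c i * ∏ t, B (m t) i) ^ 2 := by
        refine Finset.sum_congr rfl fun m _ => ?_
        rw [sq, Finset.sum_mul_sum]

lemma pow_quadform_nonneg (n k : ℕ) (x : Fin n → E) (c : Fin n → ℝ) :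
    0 ≤ ∑ i, ∑ j, c i * c j * ⟪x i, x j⟫ ^ k := by
  classical
  set G : Matrix (Fin n) (Fin n) ℝ := Matrix.of fun i j => ⟪x i, x j⟫ with hG
  have hpsd : G.PosSemidef := by
    rw [Matrix.posSemidef_iff_dotProduct_mulVec]
    constructor
    · ext i j
      simp only [hG, Matrix.conjTranspose_apply, Matrix.of_apply, star_trivial]
      exact real_inner_comm _ _
    · intro v
      have h := gram_quadform_nonneg n x v
      have : dotProduct (star v) (G.mulVec v) = ∑ i, ∑ j, v i * v j * ⟪x i, x j⟫ := by
        simp only [dotProduct, Matrix.mulVec, dotProduct, star_trivial,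
          Pi.star_apply, hG, Matrix.of_apply, Finset.mul_sum]
        exact Finset.sum_congr rfl fun i _ => Finset.sum_congr rfl fun j _ => by ring
      rw [this]; exact h
  obtain ⟨B, hB⟩ : ∃ B : Matrix (Fin n) (Fin n) ℝ, G = Matrix.conjTranspose B * B := by
    open scoped MatrixOrder in
    obtain ⟨X, hX, -, hXX⟩ := CFC.exists_sqrt_of_isSelfAdjoint_of_quasispectrumRestricts
      hpsd.isHermitian (QuasispectrumRestricts.nnreal_of_nonneg hpsd.nonneg)
    exact ⟨X, by rw [← Matrix.star_eq_conjTranspose, hX.star_eq]; exact hXX.symm⟩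
  have hij : ∀ i j, ⟪x i, x j⟫ = ∑ l, B l i * B l j := by
    intro i j
    have h := congrFun (congrFun hB i) j
    simpa [hG, Matrix.mul_apply, Matrix.conjTranspose_apply] using h
  have : ∑ i, ∑ j, c i * c j * ⟪x i, x j⟫ ^ k
      = ∑ i, ∑ j, c i * c j * (∑ l, B l i * B l j) ^ k := by
    refine Finset.sum_congr rfl fun i _ => Finset.sum_congr rfl fun j _ => ?_
    rw [hij]
  rw [this, sum_sq_expand]
  exact Finset.sum_nonneg fun m _ => sq_nonneg _

lemma summable_aq {a : ℕ → ℝ} (ha : ∀ k, 0 ≤ a k) (hsa : Summable a) {t : ℝ}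
    (ht : |t| ≤ 1) : Summable (fun k => a k * t ^ k) := by
  refine Summable.of_norm_bounded hsa fun k => ?_
  rw [norm_mul, norm_pow, Real.norm_eq_abs, Real.norm_eq_abs, abs_of_nonneg (ha k)]
  have h1 : |t| ^ k ≤ 1 := pow_le_one₀ (abs_nonneg t) ht
  calc a k * |t| ^ k ≤ a k * 1 := by
        exact mul_le_mul_of_nonneg_left h1 (ha k)
    _ = a k := mul_one _

variable {a : ℕ → ℝ} {f : ℝ → ℝ}

lemma quadform_eq_tsum (ha : ∀ k, 0 ≤ a k) (hsa : Summable a)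
    (hf : ∀ t ∈ Set.Icc (-1 : ℝ) 1, f t = ∑' k : ℕ, a k * t ^ k)
    (n : ℕ) (x : Fin n → E) (hx : ∀ i, ‖x i‖ = 1) (c : Fin n → ℝ) :
    ∑ i, ∑ j, c i * c j * f ⟪x i, x j⟫
      = ∑' k, a k * ∑ i, ∑ j, c i * c j * ⟪x i, x j⟫ ^ k := by
  have habs : ∀ i j, |⟪x i, x j⟫| ≤ 1 := fun i j => by
    have h := abs_real_inner_le_norm (x i) (x j)
    rwa [hx i, hx j, one_mul] at h
  have hsum : ∀ i j : Fin n, Summable (fun k => c i * c j * (a k * ⟪x i, x j⟫ ^ k)) :=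
    fun i j => (summable_aq ha hsa (habs i j)).mul_left _
  have step1 : ∑ i, ∑ j, c i * c j * f ⟪x i, x j⟫
      = ∑ i, ∑ j, ∑' k, c i * c j * (a k * ⟪x i, x j⟫ ^ k) := by
    refine Finset.sum_congr rfl fun i _ => Finset.sum_congr rfl fun j _ => ?_
    rw [hf _ (Set.mem_Icc.mpr (abs_le.mp (habs i j))), ← tsum_mul_left]
  rw [step1]
  have step2 : ∑ i, ∑ j, ∑' k, c i * c j * (a k * ⟪x i, x j⟫ ^ k)
      = ∑' k, ∑ i, ∑ j, c i * c j * (a k * ⟪x i, x j⟫ ^ k) := by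
    calc ∑ i, ∑ j, ∑' k, c i * c j * (a k * ⟪x i, x j⟫ ^ k)
        = ∑ i, ∑' k, ∑ j, c i * c j * (a k * ⟪x i, x j⟫ ^ k) :=
          Finset.sum_congr rfl fun i _ => (Summable.tsum_finsetSum (fun j _ => hsum i j)).symm
      _ = ∑' k, ∑ i, ∑ j, c i * c j * (a k * ⟪x i, x j⟫ ^ k) :=
          (Summable.tsum_finsetSum (fun i _ => summable_sum (fun j _ => hsum i j))).symm
  rw [step2]
  refine tsum_congr fun k => ?_
  rw [Finset.mul_sum]
  refine Finset.sum_congr rfl fun i _ => ?_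
  rw [Finset.mul_sum]
  exact Finset.sum_congr rfl fun j _ => by ring

lemma summable_aQ (ha : ∀ k, 0 ≤ a k) (hsa : Summable a)
    (n : ℕ) (x : Fin n → E) (hx : ∀ i, ‖x i‖ = 1) (c : Fin n → ℝ) :
    Summable (fun k => a k * ∑ i, ∑ j, c i * c j * ⟪x i, x j⟫ ^ k) := by
  have habs : ∀ i j, |⟪x i, x j⟫| ≤ 1 := fun i j => by
    have h := abs_real_inner_le_norm (x i) (x j)
    rwa [hx i, hx j, one_mul] at h
  have hsum : ∀ i j : Fin n, Summable (fun k => c i * c j * (a k * ⟪x i, x j⟫ ^ k)) :=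
    fun i j => (summable_aq ha hsa (habs i j)).mul_left _
  have h : Summable (fun k => ∑ i, ∑ j, c i * c j * (a k * ⟪x i, x j⟫ ^ k)) :=
    summable_sum (fun i _ => summable_sum (fun j _ => hsum i j))
  refine h.congr fun k => ?_
  rw [Finset.mul_sum]
  refine Finset.sum_congr rfl fun i _ => ?_
  rw [Finset.mul_sum]
  exact Finset.sum_congr rfl fun j _ => by ring

lemma coeffs_zero_of_quad_zero (n : ℕ) (x : Fin n → E) (hx : ∀ i, ‖x i‖ = 1)
    (hinj : Function.Injective x) (c : Fin n → ℝ) (N : Set ℕ)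
    (hQ : ∀ k ∈ N, ∑ i, ∑ j, c i * c j * ⟪x i, x j⟫ ^ k = 0)
    (hNe : (N ∩ {k | Even k}).Infinite) (hNo : (N ∩ {k | Odd k}).Infinite) :
    c = 0 := by
  classical
  set t : Fin n × Fin n → ℝ := fun p => ⟪x p.1, x p.2⟫ with ht
  have habs : ∀ p, |t p| ≤ 1 := fun p => by
    have h := abs_real_inner_le_norm (x p.1) (x p.2)
    rwa [hx p.1, hx p.2, one_mul] at h
  have hQ' : ∀ k ∈ N, ∑ p : Fin n × Fin n, c p.1 * c p.2 * t p ^ k = 0 := by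
    intro k hk
    rw [← hQ k hk, ← Finset.univ_product_univ, Finset.sum_product]
  set U1 : Finset (Fin n × Fin n) := Finset.univ.filter (fun p => t p = 1) with hU1
  set U2 : Finset (Fin n × Fin n) :=
    (Finset.univ.filter (fun p => ¬ t p = 1)).filter (fun p => t p = -1) with hU2
  set U3 : Finset (Fin n × Fin n) :=
    (Finset.univ.filter (fun p => ¬ t p = 1)).filter (fun p => ¬ t p = -1) with hU3
  have hsplit : ∀ k : ℕ, ∑ p : Fin n × Fin n, c p.1 * c p.2 * t p ^ k
      = (∑ p ∈ U1, c p.1 * c p.2 * t p ^ k) + ((∑ p ∈ U2, c p.1 * c p.2 * t p ^ k)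
        + (∑ p ∈ U3, c p.1 * c p.2 * t p ^ k)) := by
    intro k
    rw [hU1, hU2, hU3, Finset.sum_filter_add_sum_filter_not,
      Finset.sum_filter_add_sum_filter_not]
  set S1 : ℝ := ∑ p ∈ U1, c p.1 * c p.2 with hS1
  set S2 : ℝ := ∑ p ∈ U2, c p.1 * c p.2 with hS2
  set g : ℕ → ℝ := fun k => ∑ p ∈ U3, |c p.1 * c p.2| * |t p| ^ k with hg
  have hU3lt : ∀ p ∈ U3, |t p| < 1 := by
    intro p hp
    simp only [hU3, Finset.mem_filter, Finset.mem_univ, true_and] at hp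
    rcases lt_or_eq_of_le (habs p) with h | h
    · exact h
    · exfalso
      rcases abs_eq (by norm_num : (0:ℝ) ≤ 1) |>.mp h with h1 | h1
      · exact hp.1 h1
      · exact hp.2 h1
  have hgto : Filter.Tendsto g Filter.atTop (nhds 0) := by
    have : Filter.Tendsto (fun k => ∑ p ∈ U3, |c p.1 * c p.2| * |t p| ^ k)
        Filter.atTop (nhds (∑ p ∈ U3, |c p.1 * c p.2| * 0)) := by
      refine tendsto_finset_sum _ fun p hp => ?_
      exact (tendsto_pow_atTop_nhds_zero_of_lt_one (abs_nonneg _) (hU3lt p hp)).const_mul _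
    simpa [hg, abs_mul] using this
  have hRabs : ∀ k : ℕ, |∑ p ∈ U3, c p.1 * c p.2 * t p ^ k| ≤ g k := by
    intro k
    refine (Finset.abs_sum_le_sum_abs _ _).trans_eq ?_
    rw [hg]
    exact Finset.sum_congr rfl fun p _ => by rw [abs_mul, abs_pow]
  have hzero : ∀ s : ℝ, (∀ K : ℕ, ∃ k, K < k ∧ |s| ≤ g k) → s = 0 := by
    intro s hs
    by_contra h
    have hε : 0 < |s| := abs_pos.mpr h
    obtain ⟨K, hK⟩ := Filter.eventually_atTop.mp (hgto.eventually_lt_const hε)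
    obtain ⟨k, hk1, hk2⟩ := hs K
    exact absurd (hk2.trans_lt (hK k hk1.le)) (lt_irrefl _)
  have e1 : ∀ k : ℕ, ∑ p ∈ U1, c p.1 * c p.2 * t p ^ k = S1 := by
    intro k
    rw [hS1]
    refine Finset.sum_congr rfl fun p hp => ?_
    have h1 : t p = 1 := by
      rw [hU1, Finset.mem_filter] at hp
      exact hp.2
    rw [h1, one_pow, mul_one]
  have heven : S1 + S2 = 0 := by
    refine hzero _ fun K => ?_
    obtain ⟨k, hk, hKk⟩ := hNe.exists_gt K
    refine ⟨k, hKk, ?_⟩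
    have h0 := hQ' k hk.1
    rw [hsplit k] at h0
    have e2 : ∑ p ∈ U2, c p.1 * c p.2 * t p ^ k = S2 := by
      rw [hS2]
      refine Finset.sum_congr rfl fun p hp => ?_
      have h2 : t p = -1 := by
        rw [hU2, Finset.mem_filter] at hp
        exact hp.2
      rw [h2, (hk.2 : Even k).neg_one_pow, mul_one]
    rw [e1 k, e2] at h0
    have h3 : S1 + S2 = -(∑ p ∈ U3, c p.1 * c p.2 * t p ^ k) := by linarith
    rw [h3, abs_neg]
    exact hRabs k
  have hodd : S1 - S2 = 0 := by
    refine hzero _ fun K => ?_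
    obtain ⟨k, hk, hKk⟩ := hNo.exists_gt K
    refine ⟨k, hKk, ?_⟩
    have h0 := hQ' k hk.1
    rw [hsplit k] at h0
    have e2 : ∑ p ∈ U2, c p.1 * c p.2 * t p ^ k = -S2 := by
      rw [hS2, ← Finset.sum_neg_distrib]
      refine Finset.sum_congr rfl fun p hp => ?_
      have h2 : t p = -1 := by
        rw [hU2, Finset.mem_filter] at hp
        exact hp.2
      rw [h2, (hk.2 : Odd k).neg_one_pow]
      ring
    rw [e1 k, e2] at h0
    have h3 : S1 - S2 = -(∑ p ∈ U3, c p.1 * c p.2 * t p ^ k) := by linarith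
    rw [h3, abs_neg]
    exact hRabs k
  have hS1zero : S1 = 0 := by linarith
  have hU1eq : U1 = Finset.univ.filter (fun p : Fin n × Fin n => p.1 = p.2) := by
    rw [hU1]
    refine Finset.filter_congr fun p _ => ?_
    simp only [ht]
    exact (inner_eq_one_iff_of_norm_eq_one (hx p.1) (hx p.2)).trans
      ⟨fun h => hinj h, fun h => by rw [h]⟩
  have hS1diag : S1 = ∑ i, c i * c i := by
    rw [hS1, hU1eq, Finset.sum_filter, ← Finset.univ_product_univ, Finset.sum_product]
    refine Finset.sum_congr rfl fun i _ => ?_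
    simp
  have hsum0 : ∑ i, c i * c i = 0 := by rw [← hS1diag]; exact hS1zero
  funext i
  have := (Finset.sum_eq_zero_iff_of_nonneg
    (fun j _ => mul_self_nonneg (c j))).mp hsum0 i (Finset.mem_univ i)
  exact mul_self_eq_zero.mp this

end Aux


section Circle

open Complex Finset

lemma alt_sum_zero (m : ℕ) (hm : 0 < m) (q : ℤ)
    (hq : ¬ ((2 * (m : ℤ)) ∣ (q + m))) :
    ∑ j ∈ Finset.range (2 * m),
      ((-1 : ℂ)) ^ j * (Complex.exp ((j : ℂ) * ((Real.pi : ℂ) / m) * Complex.I)) ^ q = 0 := by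
  set α : ℂ := (Real.pi : ℂ) / m with hα
  set w : ℂ := -Complex.exp ((q : ℂ) * α * Complex.I) with hw
  have hm' : (m : ℂ) ≠ 0 := Nat.cast_ne_zero.mpr hm.ne'
  have hπ : (Real.pi : ℂ) ≠ 0 := Complex.ofReal_ne_zero.mpr Real.pi_ne_zero
  have hterm : ∀ j : ℕ, ((-1 : ℂ)) ^ j * (Complex.exp ((j : ℂ) * α * Complex.I)) ^ q
      = w ^ j := by
    intro j
    have h1 : (Complex.exp ((j : ℂ) * α * Complex.I)) ^ q
        = Complex.exp ((q : ℂ) * ((j : ℂ) * α * Complex.I)) :=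
      (Complex.exp_int_mul _ q).symm
    have h2 : (q : ℂ) * ((j : ℂ) * α * Complex.I) = (j : ℂ) * ((q : ℂ) * α * Complex.I) := by
      ring
    rw [h1, h2, show ((j : ℂ) * ((q : ℂ) * α * Complex.I)) = ((j : ℕ) : ℂ) * ((q : ℂ) * α * Complex.I) by norm_num,
      Complex.exp_nat_mul, hw, neg_pow, ← mul_pow]
    ring_nf
  have hw1 : w ≠ 1 := by
    intro hweq
    have h2 : Complex.exp ((q : ℂ) * α * Complex.I + (Real.pi : ℂ) * Complex.I) = 1 := by
      rw [Complex.exp_add, Complex.exp_pi_mul_I]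
      rw [hw] at hweq
      linear_combination hweq
    obtain ⟨nn, hn⟩ := Complex.exp_eq_one_iff.mp h2
    have h3 : ((q : ℂ) * α + (Real.pi : ℂ)) * Complex.I = ((nn : ℂ) * (2 * (Real.pi : ℂ))) * Complex.I := by
      rw [hα]; linear_combination hn
    have h4 := mul_right_cancel₀ Complex.I_ne_zero h3
    rw [hα] at h4
    have h5 : (q : ℂ) * (Real.pi : ℂ) + (m : ℂ) * (Real.pi : ℂ)
        = (nn : ℂ) * (2 * (Real.pi : ℂ)) * m := by
      field_simp at h4
      linear_combination (Real.pi : ℂ) * h4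
    have h6 : ((q + m : ℤ) : ℂ) = ((2 * nn * m : ℤ) : ℂ) := by
      push_cast
      have := mul_right_cancel₀ hπ (by linear_combination h5 :
        ((q : ℂ) + m) * (Real.pi : ℂ) = (2 * nn * m : ℂ) * (Real.pi : ℂ))
      exact this
    have h7 : q + m = 2 * nn * m := Int.cast_injective h6
    exact hq ⟨nn, by linarith⟩
  have hgeom : ∑ j ∈ Finset.range (2 * m), w ^ j = 0 := by
    rw [geom_sum_eq hw1]
    have hw2m : w ^ (2 * m) = 1 := by
      rw [hw, neg_pow, ← Complex.exp_nat_mul]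
      have he : ((2 * m : ℕ) : ℂ) * ((q : ℂ) * α * Complex.I) = (q : ℂ) * (2 * (Real.pi : ℂ) * Complex.I) := by
        rw [hα]; push_cast; field_simp
      rw [he, Complex.exp_int_mul_two_pi_mul_I]
      simp [pow_mul]
    rw [hw2m]
    simp
  rw [← hgeom]
  exact Finset.sum_congr rfl fun j _ => hterm j

lemma circle_quad_zero (m : ℕ) (hm : 0 < m) (k : ℕ) (hk : k % 2 ≠ m % 2 ∨ k < m) :
    ∑ i ∈ Finset.range (2 * m), ∑ j ∈ Finset.range (2 * m),
      ((-1 : ℝ)) ^ i * (-1) ^ j *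
        Real.cos (i * Real.pi / m - j * Real.pi / m) ^ k = 0 := by
  set α : ℂ := (Real.pi : ℂ) / m with hα
  set z : ℕ → ℂ := fun j => Complex.exp ((j : ℂ) * α * Complex.I) with hz
  have hz0 : ∀ j, z j ≠ 0 := fun j => Complex.exp_ne_zero _
  have hm' : (m : ℂ) ≠ 0 := Nat.cast_ne_zero.mpr hm.ne'
  -- the complex-valued double sum vanishes
  suffices hC : ∑ i ∈ Finset.range (2 * m), ∑ j ∈ Finset.range (2 * m),
      ((-1 : ℂ)) ^ i * (-1) ^ j *
        ((Real.cos (i * Real.pi / m - j * Real.pi / m) : ℝ) : ℂ) ^ k = 0 by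
    have h2 : ((∑ i ∈ Finset.range (2 * m), ∑ j ∈ Finset.range (2 * m),
        ((-1 : ℝ)) ^ i * (-1) ^ j *
          Real.cos (i * Real.pi / m - j * Real.pi / m) ^ k : ℝ) : ℂ)
        = ∑ i ∈ Finset.range (2 * m), ∑ j ∈ Finset.range (2 * m),
            ((-1 : ℂ)) ^ i * (-1) ^ j *
              ((Real.cos (i * Real.pi / m - j * Real.pi / m) : ℝ) : ℂ) ^ k := by
      norm_cast
    exact Complex.ofReal_injective (by rw [h2, hC]; simp)
  have hcos : ∀ i j : ℕ, ((Real.cos (i * Real.pi / m - j * Real.pi / m) : ℝ) : ℂ) ^ k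
      = (∑ l ∈ Finset.range (k + 1), (Nat.choose k l : ℂ)
          * (z i ^ ((2 * l - k : ℤ))) * (z j ^ ((k - 2 * l : ℤ)))) / 2 ^ k := by
    intro i j
    have hu : z i / z j ≠ 0 := div_ne_zero (hz0 i) (hz0 j)
    have hcos1 : ((Real.cos (i * Real.pi / m - j * Real.pi / m) : ℝ) : ℂ)
        = (z i / z j + z j / z i) / 2 := by
      rw [Complex.ofReal_cos]
      simp only [Complex.cos]
      have e1 : ((i * Real.pi / m - j * Real.pi / m : ℝ) : ℂ) * Complex.I
          = (i : ℂ) * α * Complex.I - (j : ℂ) * α * Complex.I := by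
        rw [hα]; push_cast; ring
      have e2 : -((i * Real.pi / m - j * Real.pi / m : ℝ) : ℂ) * Complex.I
          = (j : ℂ) * α * Complex.I - (i : ℂ) * α * Complex.I := by
        rw [hα]; push_cast; ring
      rw [e1, e2, Complex.exp_sub, Complex.exp_sub]
    rw [hcos1, div_pow]
    congr 1
    have hji : z j / z i = (z i / z j)⁻¹ := by rw [inv_div]
    rw [hji, add_pow]
    refine Finset.sum_congr rfl fun l hl => ?_
    have hlk : l ≤ k := Nat.lt_succ_iff.mp (Finset.mem_range.mp hl)
    have e3 : (z i / z j) ^ l * ((z i / z j)⁻¹) ^ (k - l)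
        = (z i / z j) ^ ((2 * l - k : ℤ)) := by
      rw [← zpow_natCast (z i / z j) l, inv_pow, ← zpow_natCast (z i / z j) (k - l),
        ← zpow_neg, ← zpow_add₀ hu]
      congr 1
      rw [Nat.cast_sub hlk]
      ring
    have e4 : (z i / z j) ^ ((2 * l - k : ℤ)) = z i ^ ((2 * l - k : ℤ)) * z j ^ ((k - 2 * l : ℤ)) := by
      rw [div_zpow, div_eq_mul_inv, ← zpow_neg]
      congr 1
      ring
    rw [e3, e4]
    ring
  have hdiv : ∀ l, l ∈ Finset.range (k + 1) →
      ¬ ((2 * (m : ℤ)) ∣ ((k - 2 * l : ℤ) + m)) := by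
    intro l hl hdvd
    have hlk : l < k + 1 := Finset.mem_range.mp hl
    rcases hk with h | h
    · obtain ⟨e, he⟩ := (dvd_mul_right (2 : ℤ) (m : ℤ)).trans hdvd
      omega
    · have h1 : (0 : ℤ) < (k - 2 * l : ℤ) + m := by omega
      have h2 := Int.le_of_dvd h1 hdvd
      omega
  calc ∑ i ∈ Finset.range (2 * m), ∑ j ∈ Finset.range (2 * m),
        ((-1 : ℂ)) ^ i * (-1) ^ j *
          ((Real.cos (i * Real.pi / m - j * Real.pi / m) : ℝ) : ℂ) ^ k
      = ∑ i ∈ Finset.range (2 * m), ∑ j ∈ Finset.range (2 * m), ∑ l ∈ Finset.range (k + 1),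
          ((Nat.choose k l : ℂ) / 2 ^ k) * (((-1 : ℂ)) ^ i * z i ^ ((2 * l - k : ℤ)))
            * (((-1 : ℂ)) ^ j * z j ^ ((k - 2 * l : ℤ))) := by
        refine Finset.sum_congr rfl fun i _ => Finset.sum_congr rfl fun j _ => ?_
        rw [hcos i j, div_eq_mul_inv, Finset.sum_mul, Finset.mul_sum]
        refine Finset.sum_congr rfl fun l _ => ?_
        field_simp
    _ = ∑ l ∈ Finset.range (k + 1), ∑ i ∈ Finset.range (2 * m), ∑ j ∈ Finset.range (2 * m),
          ((Nat.choose k l : ℂ) / 2 ^ k) * (((-1 : ℂ)) ^ i * z i ^ ((2 * l - k : ℤ)))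
            * (((-1 : ℂ)) ^ j * z j ^ ((k - 2 * l : ℤ))) := by
        rw [show (∑ i ∈ Finset.range (2*m), ∑ j ∈ Finset.range (2*m), ∑ l ∈ Finset.range (k+1),
          ((Nat.choose k l : ℂ) / 2 ^ k) * (((-1 : ℂ)) ^ i * z i ^ ((2 * l - k : ℤ)))
            * (((-1 : ℂ)) ^ j * z j ^ ((k - 2 * l : ℤ))))
          = ∑ i ∈ Finset.range (2*m), ∑ l ∈ Finset.range (k+1), ∑ j ∈ Finset.range (2*m),
          ((Nat.choose k l : ℂ) / 2 ^ k) * (((-1 : ℂ)) ^ i * z i ^ ((2 * l - k : ℤ)))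
            * (((-1 : ℂ)) ^ j * z j ^ ((k - 2 * l : ℤ)))
          from Finset.sum_congr rfl fun i _ => Finset.sum_comm]
        exact Finset.sum_comm
    _ = ∑ l ∈ Finset.range (k + 1),
          ((Nat.choose k l : ℂ) / 2 ^ k) * (∑ i ∈ Finset.range (2 * m), ((-1 : ℂ)) ^ i * z i ^ ((2 * l - k : ℤ)))
            * (∑ j ∈ Finset.range (2 * m), ((-1 : ℂ)) ^ j * z j ^ ((k - 2 * l : ℤ))) := by
        refine Finset.sum_congr rfl fun l _ => ?_
        simp only [Finset.mul_sum, Finset.sum_mul]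
        exact Finset.sum_comm
    _ = 0 := by
        refine Finset.sum_eq_zero fun l hl => ?_
        rw [alt_sum_zero m hm ((k - 2 * l : ℤ)) (hdiv l hl), mul_zero]

end Circle

/-- A real kernel `K` on `X` is positive definite. -/
def IsPosDefKernel {X : Type*} (K : X → X → ℝ) : Prop :=
  ∀ (n : ℕ) (x : Fin n → X) (c : Fin n → ℝ),
    0 ≤ ∑ i, ∑ j, c i * c j * K (x i) (x j)

/-- A real kernel `K` on `X` is strictly positive definite. -/
def IsStrictPosDefKernel {X : Type*} (K : X → X → ℝ) : Prop :=
  IsPosDefKernel K ∧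
    ∀ (n : ℕ) (x : Fin n → X) (c : Fin n → ℝ),
      Function.Injective x → c ≠ 0 →
        0 < ∑ i, ∑ j, c i * c j * K (x i) (x j)

/-- The real Hilbert space `ℓ²` of square-summable real sequences. -/
abbrev EllTwo : Type := lp (fun _ : ℕ => ℝ) 2

section Points

def pt (m : ℕ) (j : ℕ) : EllTwo :=
  Real.cos (j * Real.pi / m) • lp.single 2 0 1 + Real.sin (j * Real.pi / m) • lp.single 2 1 1

lemma inner_single_single : ⟪(lp.single 2 0 1 : EllTwo), (lp.single 2 0 1 : EllTwo)⟫ = 1 ∧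
    ⟪(lp.single 2 1 1 : EllTwo), (lp.single 2 1 1 : EllTwo)⟫ = 1 ∧
    ⟪(lp.single 2 0 1 : EllTwo), (lp.single 2 1 1 : EllTwo)⟫ = 0 ∧
    ⟪(lp.single 2 1 1 : EllTwo), (lp.single 2 0 1 : EllTwo)⟫ = 0 := by
  refine ⟨?_, ?_, ?_, ?_⟩ <;>
    rw [lp.inner_single_left] <;>
    simp [lp.single_apply, RCLike.inner_apply]

lemma inner_pt (m : ℕ) (i j : ℕ) :
    ⟪pt m i, pt m j⟫ = Real.cos (i * Real.pi / m - j * Real.pi / m) := by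
  obtain ⟨h00, h11, h01, h10⟩ := inner_single_single
  rw [pt, pt, inner_add_left, inner_add_right, inner_add_right,
    real_inner_smul_left, real_inner_smul_left, real_inner_smul_left,
    real_inner_smul_left, real_inner_smul_right, real_inner_smul_right,
    real_inner_smul_right, real_inner_smul_right, h00, h11, h01, h10,
    Real.cos_sub]
  ring

lemma norm_pt (m : ℕ) (j : ℕ) : ‖pt m j‖ = 1 := by
  have h := inner_pt m j j
  rw [sub_self, Real.cos_zero, real_inner_self_eq_norm_mul_norm] at h
  nlinarith [norm_nonneg (pt m j)]

lemma pt_injective (m : ℕ) (hm : 0 < m) :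
    ∀ i j : ℕ, i < 2 * m → j < 2 * m → pt m i = pt m j → i = j := by
  intro i j hi hj heq
  have h1 : ⟪pt m i, pt m j⟫ = 1 := by
    rw [heq, real_inner_self_eq_norm_mul_norm, norm_pt]; norm_num
  rw [inner_pt] at h1
  have hπ := Real.pi_pos
  have hm' : (0:ℝ) < m := Nat.cast_pos.mpr hm
  have hb1 : -(2 * Real.pi) < i * Real.pi / m - j * Real.pi / m := by
    have hj' : (j : ℝ) < 2 * m := by exact_mod_cast hj
    have h2 : (j : ℝ) * Real.pi / m < 2 * Real.pi := by
      rw [div_lt_iff₀ hm']; nlinarith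
    have h3 : 0 ≤ (i : ℝ) * Real.pi / m := by positivity
    linarith
  have hb2 : i * Real.pi / m - j * Real.pi / m < 2 * Real.pi := by
    have hi' : (i : ℝ) < 2 * m := by exact_mod_cast hi
    have h2 : (i : ℝ) * Real.pi / m < 2 * Real.pi := by
      rw [div_lt_iff₀ hm']; nlinarith
    have h3 : 0 ≤ (j : ℝ) * Real.pi / m := by positivity
    linarith
  have h4 := (Real.cos_eq_one_iff_of_lt_of_lt hb1 hb2).mp h1
  have h5 : (i : ℝ) = j := by
    have h6 : (i : ℝ) * Real.pi / m = j * Real.pi / m := by linarith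
    field_simp at h6
    exact_mod_cast h6
  exact_mod_cast h5

end Points

section Necessity

lemma not_spd (a : ℕ → ℝ) (ha : ∀ k, 0 ≤ a k) (hsa : Summable a) (f : ℝ → ℝ)
    (hf : ∀ t ∈ Set.Icc (-1 : ℝ) 1, f t = ∑' k : ℕ, a k * t ^ k)
    (m : ℕ) (hm : 0 < m)
    (hcond : ∀ k, 0 < a k → (k % 2 ≠ m % 2 ∨ k < m)) :
    ¬ IsStrictPosDefKernel
      (fun x y : Metric.sphere (0 : EllTwo) 1 => f ⟪(x : EllTwo), (y : EllTwo)⟫) := by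
  rintro ⟨-, hstrict⟩
  set x : Fin (2 * m) → Metric.sphere (0 : EllTwo) 1 := fun j => ⟨pt m j, by
    rw [mem_sphere_zero_iff_norm]; exact norm_pt m j⟩ with hx
  set c : Fin (2 * m) → ℝ := fun j => (-1 : ℝ) ^ (j : ℕ) with hc
  have hinj : Function.Injective x := by
    intro i j hij
    have h := congrArg Subtype.val hij
    exact Fin.ext (pt_injective m hm i j i.isLt j.isLt h)
  have hc0 : c ≠ 0 := by
    intro h
    have h2 := congrFun h ⟨0, by omega⟩
    simp [hc] at h2
  have hpos := hstrict (2 * m) x c hinj hc0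
  have hnorm : ∀ i : Fin (2 * m), ‖((x i : EllTwo))‖ = 1 := fun i => norm_pt m i
  have hval : ∑ i, ∑ j, c i * c j * f ⟪(x i : EllTwo), (x j : EllTwo)⟫ = 0 := by
    rw [quadform_eq_tsum ha hsa hf (2 * m) (fun i => (x i : EllTwo)) hnorm c]
    have hzero : ∀ k : ℕ,
        a k * (∑ i, ∑ j, c i * c j * ⟪(x i : EllTwo), (x j : EllTwo)⟫ ^ k) = 0 := by
      intro k
      rcases eq_or_lt_of_le (ha k) with h | h
      · rw [← h, zero_mul]
      · have hQ : ∑ i, ∑ j, c i * c j * ⟪(x i : EllTwo), (x j : EllTwo)⟫ ^ k = 0 := by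
          have hper : ∀ i j : Fin (2 * m),
              c i * c j * ⟪(x i : EllTwo), (x j : EllTwo)⟫ ^ k
                = (-1 : ℝ) ^ (i : ℕ) * (-1 : ℝ) ^ (j : ℕ) *
                    Real.cos ((i : ℕ) * Real.pi / m - (j : ℕ) * Real.pi / m) ^ k := by
            intro i j
            rw [hc]
            have h5 : ⟪(x i : EllTwo), (x j : EllTwo)⟫
                = Real.cos ((i : ℕ) * Real.pi / m - (j : ℕ) * Real.pi / m) := inner_pt m i j
            rw [h5]
          calc ∑ i, ∑ j, c i * c j * ⟪(x i : EllTwo), (x j : EllTwo)⟫ ^ k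
              = ∑ i : Fin (2 * m), ∑ j : Fin (2 * m),
                  (-1 : ℝ) ^ (i : ℕ) * (-1 : ℝ) ^ (j : ℕ) *
                    Real.cos ((i : ℕ) * Real.pi / m - (j : ℕ) * Real.pi / m) ^ k :=
                Finset.sum_congr rfl fun i _ => Finset.sum_congr rfl fun j _ => hper i j
            _ = ∑ i : Fin (2 * m), ∑ j ∈ Finset.range (2 * m),
                  (-1 : ℝ) ^ (i : ℕ) * (-1 : ℝ) ^ j *
                    Real.cos ((i : ℕ) * Real.pi / m - j * Real.pi / m) ^ k :=
                Finset.sum_congr rfl fun i _ => Fin.sum_univ_eq_sum_range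
                  (fun j => (-1 : ℝ) ^ (i : ℕ) * (-1 : ℝ) ^ j *
                    Real.cos ((i : ℕ) * Real.pi / m - j * Real.pi / m) ^ k) (2 * m)
            _ = ∑ i ∈ Finset.range (2 * m), ∑ j ∈ Finset.range (2 * m),
                  (-1 : ℝ) ^ i * (-1 : ℝ) ^ j *
                    Real.cos (i * Real.pi / m - j * Real.pi / m) ^ k :=
                Fin.sum_univ_eq_sum_range (fun i => ∑ j ∈ Finset.range (2 * m),
                  (-1 : ℝ) ^ i * (-1 : ℝ) ^ j *
                    Real.cos (i * Real.pi / m - j * Real.pi / m) ^ k) (2 * m)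
            _ = 0 := circle_quad_zero m hm k (hcond k h)
        rw [hQ, mul_zero]
    rw [tsum_congr hzero, tsum_zero]
  rw [hval] at hpos
  exact lt_irrefl 0 hpos

end Necessity

theorem spd_on_infinite_sphere
    (a : ℕ → ℝ) (ha : ∀ k, 0 ≤ a k) (hsa : Summable a)
    (f : ℝ → ℝ)
    (hf : ∀ t ∈ Set.Icc (-1 : ℝ) 1, f t = ∑' k : ℕ, a k * t ^ k) :
    IsStrictPosDefKernel
      (fun x y : Metric.sphere (0 : EllTwo) 1 => f ⟪(x : EllTwo), (y : EllTwo)⟫) ↔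
    ({k : ℕ | 0 < a k} ∩ {n : ℕ | Even n}).Infinite ∧
      ({k : ℕ | 0 < a k} ∩ {n : ℕ | Odd n}).Infinite := by
  constructor
  · intro h
    by_contra hcon
    rw [not_and_or] at hcon
    rcases hcon with hfin | hfin
    · have hfin' : ({k : ℕ | 0 < a k} ∩ {n : ℕ | Even n}).Finite := Set.not_infinite.mp hfin
      obtain ⟨M, hM⟩ := hfin'.bddAbove
      refine not_spd a ha hsa f hf (2 * M + 2) (by omega) (fun k hk => ?_) h
      rcases Nat.even_or_odd k with he | ho
      · right
        have h1 : k ≤ M := hM ⟨hk, he⟩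
        omega
      · left
        have h1 := Nat.odd_iff.mp ho
        omega
    · have hfin' : ({k : ℕ | 0 < a k} ∩ {n : ℕ | Odd n}).Finite := Set.not_infinite.mp hfin
      obtain ⟨M, hM⟩ := hfin'.bddAbove
      refine not_spd a ha hsa f hf (2 * M + 1) (by omega) (fun k hk => ?_) h
      rcases Nat.even_or_odd k with he | ho
      · left
        have h1 := Nat.even_iff.mp he
        omega
      · right
        have h1 : k ≤ M := hM ⟨hk, ho⟩
        omega
  · rintro ⟨hE, hO⟩
    constructor
    · intro n x c
      rw [quadform_eq_tsum ha hsa hf n (fun i => (x i : EllTwo))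
        (fun i => mem_sphere_zero_iff_norm.mp (x i).2) c]
      exact tsum_nonneg fun k => mul_nonneg (ha k) (pow_quadform_nonneg n k _ c)
    · intro n x c hinj hc0
      set x' : Fin n → EllTwo := fun i => (x i : EllTwo) with hx'
      have hnorm : ∀ i, ‖x' i‖ = 1 := fun i => mem_sphere_zero_iff_norm.mp (x i).2
      have hinj' : Function.Injective x' := fun i j h => hinj (Subtype.ext h)
      rw [show (∑ i, ∑ j, c i * c j * f ⟪((x i : EllTwo)), ((x j : EllTwo))⟫)
        = ∑' k, a k * ∑ i, ∑ j, c i * c j * ⟪x' i, x' j⟫ ^ k from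
        quadform_eq_tsum ha hsa hf n x' hnorm c]
      set Q : ℕ → ℝ := fun k => ∑ i, ∑ j, c i * c j * ⟪x' i, x' j⟫ ^ k with hQdef
      have hQnn : ∀ k, 0 ≤ Q k := fun k => pow_quadform_nonneg n k x' c
      by_cases hall : ∀ k ∈ {k : ℕ | 0 < a k}, Q k = 0
      · exact absurd (coeffs_zero_of_quad_zero n x' hnorm hinj' c _ hall hE hO) hc0
      · push_neg at hall
        obtain ⟨k₀, hk₀N, hk₀⟩ := hall
        have hk₀pos : 0 < Q k₀ := (hQnn k₀).lt_of_ne (Ne.symm hk₀)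
        have hsummable := summable_aQ ha hsa n x' hnorm c
        have hle : a k₀ * Q k₀ ≤ ∑' k, a k * Q k :=
          hsummable.le_tsum k₀ fun j _ => mul_nonneg (ha j) (hQnn j)
        exact lt_of_lt_of_le (mul_pos hk₀N hk₀pos) hle
end
end

section
/- Let a : ℕ → ℝ be a sequence with a_k ≥ 0 for all k and Σ_{k=0}^∞ a_k < ∞, define f : [-1,1] → ℝ by f(t) = Σ_{k=0}^∞ a_k t^k, and let λ ∈ ℝ. Then the kernel ((u,x),(v,y)) ∈ (ℝ × S^∞)² ↦ f(⟨x,y⟩ · cos(λ(u−v))) is positive definite on ℝ × S^∞ (with complex scalars). -/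
open scoped BigOperators RealInnerProductSpace ComplexConjugate

noncomputable section

namespace PDAux

/-- Our notion of real positive semidefinite matrix (as a function). -/
def MyPSD {n : ℕ} (A : Fin n → Fin n → ℝ) : Prop :=
  (∀ i j, A i j = A j i) ∧ ∀ y : Fin n → ℝ, 0 ≤ ∑ i, ∑ j, y i * y j * A i j

lemma myPSD_rankOne {n : ℕ} (v : Fin n → ℝ) : MyPSD (fun i j => v i * v j) := by
  refine ⟨fun i j => mul_comm _ _, fun y => ?_⟩
  have : ∑ i, ∑ j, y i * y j * (v i * v j) = (∑ i, y i * v i) * (∑ j, y j * v j) := by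
    rw [Finset.sum_mul_sum]
    exact Finset.sum_congr rfl fun i _ => Finset.sum_congr rfl fun j _ => by ring
  rw [this]
  exact mul_self_nonneg _

lemma myPSD_add {n : ℕ} {A B : Fin n → Fin n → ℝ} (hA : MyPSD A) (hB : MyPSD B) :
    MyPSD (fun i j => A i j + B i j) := by
  refine ⟨fun i j => show A i j + B i j = A j i + B j i by rw [hA.1 i j, hB.1 i j], fun y => ?_⟩
  have : ∑ i, ∑ j, y i * y j * (A i j + B i j)
      = (∑ i, ∑ j, y i * y j * A i j) + ∑ i, ∑ j, y i * y j * B i j := by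
    simp_rw [mul_add, Finset.sum_add_distrib]
  rw [this]
  exact add_nonneg (hA.2 y) (hB.2 y)

/-- Bridge to Mathlib. -/
lemma myPSD_iff_posSemidef {n : ℕ} (A : Fin n → Fin n → ℝ) :
    MyPSD A ↔ (Matrix.of A).PosSemidef := by
  rw [Matrix.posSemidef_iff_dotProduct_mulVec]
  constructor
  · rintro ⟨hsym, hq⟩
    constructor
    · ext i j
      simpa [Matrix.IsHermitian, Matrix.conjTranspose, Matrix.transpose] using (hsym j i)
    · intro y
      have := hq y
      simpa [dotProduct, Matrix.mulVec, Finset.mul_sum, mul_assoc, mul_comm, mul_left_comm]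
        using this
  · rintro ⟨hherm, hq⟩
    constructor
    · intro i j
      have := congrFun (congrFun hherm j) i
      simpa [Matrix.conjTranspose_apply] using this
    · intro y
      have := hq y
      simpa [dotProduct, Matrix.mulVec, Finset.mul_sum, mul_assoc, mul_comm, mul_left_comm]
        using this

open scoped MatrixOrder in
/-- Schur product theorem for `MyPSD`. -/
lemma myPSD_hadamard {n : ℕ} {A B : Fin n → Fin n → ℝ} (hA : MyPSD A) (hB : MyPSD B) :
    MyPSD (fun i j => A i j * B i j) := by
  have hB' : (Matrix.of B).PosSemidef := (myPSD_iff_posSemidef B).1 hB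
  set S := CFC.sqrt (Matrix.of B) with hS
  have hSpsd : S.PosSemidef := Matrix.nonneg_iff_posSemidef.1 (CFC.sqrt_nonneg _)
  have hSsym : ∀ i j, S i j = S j i := by
    intro i j
    have := congrFun (congrFun hSpsd.1 j) i
    simpa [Matrix.conjTranspose_apply] using this
  have hdecomp : ∀ i j, B i j = ∑ r, S i r * S j r := by
    intro i j
    have := congrFun (congrFun (CFC.sqrt_mul_sqrt_self (Matrix.of B) hB'.nonneg) i) j
    rw [Matrix.mul_apply] at this
    rw [show (Matrix.of B) i j = B i j from rfl] at this
    rw [← this]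
    exact Finset.sum_congr rfl fun r _ => by rw [hSsym j r]
  refine ⟨fun i j => show A i j * B i j = A j i * B j i by rw [hA.1 i j, hB.1 i j], fun y => ?_⟩
  have key : ∑ i, ∑ j, y i * y j * (A i j * B i j)
      = ∑ r, ∑ i, ∑ j, (y i * S i r) * (y j * S j r) * A i j := by
    simp_rw [hdecomp, Finset.mul_sum]
    rw [show (∑ i, ∑ j, ∑ r, y i * y j * (A i j * (S i r * S j r)))
        = ∑ i, ∑ r, ∑ j, y i * y j * (A i j * (S i r * S j r)) from
      Finset.sum_congr rfl fun i _ => Finset.sum_comm]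
    rw [Finset.sum_comm]
    exact Finset.sum_congr rfl fun r _ => Finset.sum_congr rfl fun i _ =>
      Finset.sum_congr rfl fun j _ => by ring
  rw [key]
  exact Finset.sum_nonneg fun r _ => hA.2 (fun i => y i * S i r)

lemma myPSD_pow {n : ℕ} {A : Fin n → Fin n → ℝ} (hA : MyPSD A) (k : ℕ) :
    MyPSD (fun i j => A i j ^ k) := by
  induction k with
  | zero => simpa using myPSD_rankOne (fun _ : Fin n => (1 : ℝ))
  | succ k ih =>
      have := myPSD_hadamard ih hA
      simpa [pow_succ] using this

/-- Complex quadratic form of a `MyPSD` matrix. -/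
lemma quadform_complex {n : ℕ} {A : Fin n → Fin n → ℝ} (hA : MyPSD A) (c : Fin n → ℂ) :
    0 ≤ (∑ i, ∑ j, c i * conj (c j) * (A i j : ℂ)).re ∧
      (∑ i, ∑ j, c i * conj (c j) * (A i j : ℂ)).im = 0 := by
  have hre : (∑ i, ∑ j, c i * conj (c j) * (A i j : ℂ)).re
      = (∑ i, ∑ j, (c i).re * (c j).re * A i j) + ∑ i, ∑ j, (c i).im * (c j).im * A i j := by
    rw [Complex.re_sum, ← Finset.sum_add_distrib]
    refine Finset.sum_congr rfl fun i _ => ?_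
    rw [Complex.re_sum, ← Finset.sum_add_distrib]
    refine Finset.sum_congr rfl fun j _ => ?_
    simp [Complex.mul_re, Complex.mul_im]
    ring
  have him : (∑ i, ∑ j, c i * conj (c j) * (A i j : ℂ)).im
      = (∑ i, ∑ j, (c i).im * (c j).re * A i j) - ∑ i, ∑ j, (c i).re * (c j).im * A i j := by
    rw [Complex.im_sum, ← Finset.sum_sub_distrib]
    refine Finset.sum_congr rfl fun i _ => ?_
    rw [Complex.im_sum, ← Finset.sum_sub_distrib]
    refine Finset.sum_congr rfl fun j _ => ?_
    simp [Complex.mul_re, Complex.mul_im]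
    ring
  constructor
  · rw [hre]
    exact add_nonneg (hA.2 (fun i => (c i).re)) (hA.2 (fun i => (c i).im))
  · rw [him, sub_eq_zero]
    rw [Finset.sum_comm]
    refine Finset.sum_congr rfl fun j _ => Finset.sum_congr rfl fun i _ => ?_
    rw [hA.1 j i]
    ring

variable {E : Type*} [NormedAddCommGroup E] [InnerProductSpace ℝ E]

lemma myPSD_gram {n : ℕ} (v : Fin n → E) : MyPSD (fun i j => ⟪v i, v j⟫) := by
  refine ⟨fun i j => real_inner_comm _ _, fun y => ?_⟩
  have h : ⟪∑ i, y i • v i, ∑ j, y j • v j⟫ = ∑ i, ∑ j, y i * y j * ⟪v i, v j⟫ := by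
    simp_rw [sum_inner, inner_sum, real_inner_smul_left, real_inner_smul_right]
    exact Finset.sum_congr rfl fun i _ => Finset.sum_congr rfl fun j _ => by ring
  rw [← h]
  exact real_inner_self_nonneg

lemma myPSD_cos {n : ℕ} (lam : ℝ) (u : Fin n → ℝ) :
    MyPSD (fun i j => Real.cos (lam * (u i - u j))) := by
  have hfun : (fun i j => Real.cos (lam * (u i - u j)))
      = fun i j => (Real.cos (lam * u i) * Real.cos (lam * u j)
          + Real.sin (lam * u i) * Real.sin (lam * u j)) := by
    funext i j
    rw [mul_sub, Real.cos_sub]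
  rw [hfun]
  exact myPSD_add (myPSD_rankOne _) (myPSD_rankOne _)

end PDAux

/-- A complex kernel `K` on `X` is positive definite: every quadratic form
`∑ᵢⱼ cᵢ conj(cⱼ) K(xᵢ, xⱼ)` is a nonnegative real number. -/
def IsPosDefKernelC {X : Type*} (K : X → X → ℂ) : Prop :=
  ∀ (n : ℕ) (x : Fin n → X) (c : Fin n → ℂ),
    0 ≤ (∑ i, ∑ j, c i * conj (c j) * K (x i) (x j)).re ∧
      (∑ i, ∑ j, c i * conj (c j) * K (x i) (x j)).im = 0

theorem pd_on_time_cross_sphere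
    (a : ℕ → ℝ) (ha : ∀ k, 0 ≤ a k) (hsa : Summable a)
    (f : ℝ → ℝ)
    (hf : ∀ t ∈ Set.Icc (-1 : ℝ) 1, f t = ∑' k : ℕ, a k * t ^ k)
    (lam : ℝ) :
    IsPosDefKernelC
      (fun p q : ℝ × Metric.sphere (0 : EllTwo) 1 =>
        ((f (⟪(p.2 : EllTwo), (q.2 : EllTwo)⟫ * Real.cos (lam * (p.1 - q.1))) : ℝ) : ℂ)) := by
  intro n x c
  set t : Fin n → Fin n → ℝ := fun i j =>
    ⟪((x i).2 : EllTwo), ((x j).2 : EllTwo)⟫ * Real.cos (lam * ((x i).1 - (x j).1)) with ht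
  -- entries lie in [-1, 1]
  have htmem : ∀ i j, t i j ∈ Set.Icc (-1 : ℝ) 1 := by
    intro i j
    have h1 : |⟪((x i).2 : EllTwo), ((x j).2 : EllTwo)⟫| ≤ 1 := by
      have := abs_real_inner_le_norm ((x i).2 : EllTwo) ((x j).2 : EllTwo)
      rwa [norm_eq_of_mem_sphere, norm_eq_of_mem_sphere, mul_one] at this
    have h2 : |Real.cos (lam * ((x i).1 - (x j).1))| ≤ 1 := Real.abs_cos_le_one _
    have habs : |t i j| ≤ 1 := by
      rw [ht]
      calc |⟪((x i).2 : EllTwo), ((x j).2 : EllTwo)⟫ * Real.cos (lam * ((x i).1 - (x j).1))|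
          = |⟪((x i).2 : EllTwo), ((x j).2 : EllTwo)⟫| * |Real.cos (lam * ((x i).1 - (x j).1))| :=
            abs_mul _ _
        _ ≤ 1 * 1 := mul_le_mul h1 h2 (abs_nonneg _) zero_le_one
        _ = 1 := one_mul 1
    exact Set.mem_Icc.2 (abs_le.1 habs)
  -- the matrices (t i j ^ k) are PSD
  have hPSDk : ∀ k, PDAux.MyPSD (fun i j => t i j ^ k) := fun k =>
    PDAux.myPSD_pow
      (PDAux.myPSD_hadamard (PDAux.myPSD_gram (fun i => ((x i).2 : EllTwo)))
        (PDAux.myPSD_cos lam (fun i => (x i).1))) k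
  have hTk := fun k => PDAux.quadform_complex (hPSDk k) c
  -- summability
  have hsum1 : ∀ i j, Summable (fun k => ((a k * t i j ^ k : ℝ) : ℂ)) := by
    intro i j
    rw [Complex.summable_ofReal]
    refine Summable.of_norm_bounded hsa fun k => ?_
    have h1 : |t i j| ≤ 1 := abs_le.2 ⟨(htmem i j).1, (htmem i j).2⟩
    calc ‖a k * t i j ^ k‖ = a k * |t i j| ^ k := by
          rw [Real.norm_eq_abs, abs_mul, abs_of_nonneg (ha k), abs_pow]
      _ ≤ a k * 1 := by
          refine mul_le_mul_of_nonneg_left ?_ (ha k)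
          exact pow_le_one₀ (abs_nonneg _) h1
      _ = a k := mul_one _
  have hsum2 : ∀ i j, Summable (fun k => c i * conj (c j) * ((a k * t i j ^ k : ℝ) : ℂ)) :=
    fun i j => (hsum1 i j).mul_left _
  have hsumS : Summable (fun k => ∑ i, ∑ j, c i * conj (c j) * ((a k * t i j ^ k : ℝ) : ℂ)) := by
    refine summable_sum fun i _ => summable_sum fun j _ => hsum2 i j
  -- factor out a k
  have hterm : ∀ k, (∑ i, ∑ j, c i * conj (c j) * ((a k * t i j ^ k : ℝ) : ℂ))
      = (a k : ℂ) * ∑ i, ∑ j, c i * conj (c j) * ((t i j ^ k : ℝ) : ℂ) := by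
    intro k
    rw [Finset.mul_sum]
    refine Finset.sum_congr rfl fun i _ => ?_
    rw [Finset.mul_sum]
    refine Finset.sum_congr rfl fun j _ => ?_
    push_cast
    ring
  have hsumS' : Summable (fun k => (a k : ℂ) * ∑ i, ∑ j, c i * conj (c j) * ((t i j ^ k : ℝ) : ℂ)) :=
    hsumS.congr hterm
  -- rewrite the quadratic form as a tsum
  have hQ : (∑ i, ∑ j, c i * conj (c j) *
        ((fun p q : ℝ × Metric.sphere (0 : EllTwo) 1 =>
          ((f (⟪(p.2 : EllTwo), (q.2 : EllTwo)⟫ * Real.cos (lam * (p.1 - q.1))) : ℝ) : ℂ))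
          (x i) (x j)))
      = ∑' k, (a k : ℂ) * ∑ i, ∑ j, c i * conj (c j) * ((t i j ^ k : ℝ) : ℂ) := by
    rw [← tsum_congr hterm]
    rw [Summable.tsum_finsetSum (fun i _ => summable_sum fun j _ => hsum2 i j)]
    refine Finset.sum_congr rfl fun i _ => ?_
    rw [Summable.tsum_finsetSum (fun j _ => hsum2 i j)]
    refine Finset.sum_congr rfl fun j _ => ?_
    rw [tsum_mul_left]
    congr 1
    show ((f (t i j) : ℝ) : ℂ) = _
    rw [hf (t i j) (htmem i j), Complex.ofReal_tsum]
  rw [hQ]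
  constructor
  · rw [Complex.re_tsum hsumS']
    refine tsum_nonneg fun k => ?_
    have : ((a k : ℂ) * ∑ i, ∑ j, c i * conj (c j) * ((t i j ^ k : ℝ) : ℂ)).re
        = a k * (∑ i, ∑ j, c i * conj (c j) * ((t i j ^ k : ℝ) : ℂ)).re := by
      simp [Complex.mul_re]
    rw [this]
    exact mul_nonneg (ha k) (hTk k).1
  · rw [Complex.im_tsum hsumS']
    have : ∀ k, ((a k : ℂ) * ∑ i, ∑ j, c i * conj (c j) * ((t i j ^ k : ℝ) : ℂ)).im = 0 := by
      intro k
      have h0 : (∑ i, ∑ j, c i * conj (c j) * ((t i j ^ k : ℝ) : ℂ)).im = 0 := (hTk k).2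
      rw [Complex.mul_im, h0, mul_zero, Complex.ofReal_im, zero_mul, add_zero]
    simp only [this, tsum_zero]
end
end

section
/- Let a : ℕ → ℝ be a sequence with a_k ≥ 0 for all k and Σ_{k=0}^∞ a_k < ∞, define f : [-1,1] → ℝ by f(t) = Σ_{k=0}^∞ a_k t^k, and let λ ∈ ℝ. Then the kernel ((u,x),(v,y)) ∈ (ℝ × S^∞)² ↦ f(⟨x,y⟩ · cos(λ(u−v))) is NOT strictly positive definite on ℝ × S^∞: there exist finitely many pairwise distinct points in ℝ × S^∞ and a nonzero complex coefficient vector for which the associated quadratic form vanishes. -/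
open scoped BigOperators RealInnerProductSpace ComplexConjugate

noncomputable section

theorem not_spd_on_time_cross_sphere
    (a : ℕ → ℝ) (ha : ∀ k, 0 ≤ a k) (hsa : Summable a)
    (f : ℝ → ℝ)
    (hf : ∀ t ∈ Set.Icc (-1 : ℝ) 1, f t = ∑' k : ℕ, a k * t ^ k)
    (lam : ℝ) :
    ∃ (n : ℕ) (x : Fin n → ℝ × Metric.sphere (0 : EllTwo) 1) (c : Fin n → ℂ),
      Function.Injective x ∧ c ≠ 0 ∧
        (∑ i, ∑ j, c i * conj (c j) *
          ((f (⟪((x i).2 : EllTwo), ((x j).2 : EllTwo)⟫ *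
            Real.cos (lam * ((x i).1 - (x j).1))) : ℝ) : ℂ)) = 0 := by
  -- the basis vector e₀ on the sphere
  have hnorm : ‖(lp.single 2 0 (1 : ℝ) : EllTwo)‖ = 1 := by
    simpa using lp.norm_single (p := 2) (E := fun _ : ℕ => ℝ) (by norm_num)
      (fun _ : ℕ => (1:ℝ)) 0
  set e : Metric.sphere (0 : EllTwo) 1 :=
    ⟨lp.single 2 0 (1 : ℝ), by simp [mem_sphere_iff_norm, hnorm]⟩ with he
  set T : ℝ := if lam = 0 then 1 else 2 * Real.pi / lam with hT
  have hTne : T ≠ 0 := by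
    rcases eq_or_ne lam 0 with h | h
    · simp [hT, h]
    · simp only [hT, if_neg h]
      exact div_ne_zero (by positivity) h
  have hcos : Real.cos (lam * T) = 1 := by
    rcases eq_or_ne lam 0 with h | h
    · simp [h]
    · have : lam * T = 2 * Real.pi := by
        rw [hT, if_neg h]; field_simp
      rw [this, Real.cos_two_pi]
  have hinner : ⟪(e : EllTwo), (e : EllTwo)⟫ = 1 := by
    rw [real_inner_self_eq_norm_sq, hnorm]
    norm_num
  refine ⟨2, ![(0, e), (T, e)], ![1, -1], ?_, ?_, ?_⟩
  · intro i j hij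
    clear he hT
    fin_cases i <;> fin_cases j <;> simp_all <;>
      exact absurd hij.1 (by simpa using hTne.symm) <;> skip
  · intro h
    have := congrFun h 0
    simp at this
  · have h00 : Real.cos (lam * ((0:ℝ) - 0)) = 1 := by simp
    have hTT : Real.cos (lam * (T - T)) = 1 := by simp
    have h01 : Real.cos (lam * ((0:ℝ) - T)) = 1 := by
      rw [show lam * ((0:ℝ) - T) = -(lam * T) by ring, Real.cos_neg, hcos]
    have h10 : Real.cos (lam * (T - 0)) = 1 := by
      rw [show lam * (T - 0) = lam * T by ring, hcos]
    simp only [Fin.sum_univ_two, Matrix.cons_val_zero, Matrix.cons_val_one, Matrix.head_cons]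
    rw [hinner]
    simp only [h00, h01, h10, hTT, one_mul]
    ring
end
end

section
/- Let a, b : ℕ → ℝ be sequences with a_k ≥ 0 and b_l ≥ 0 for all k, l, with Σ_{k=0}^∞ a_k < ∞ and Σ_{l=0}^∞ b_l < ∞, and assume that {k : a_k > 0} contains infinitely many even and infinitely many odd integers, and likewise {l : b_l > 0} contains infinitely many even and infinitely many odd integers. Define f(t) = Σ_{k=0}^∞ a_k t^k and g(t) = Σ_{l=0}^∞ b_l t^l for t ∈ [-1,1]. Let λ, θ be nonzero real numbers with λ/θ irrational. Then the kernel ((u,x),(v,y)) ∈ (ℝ × S^∞)² ↦ f(⟨x,y⟩ · cos(λ(u−v))) · g(⟨x,y⟩ · cos(θ(u−v))) is strictly positive definite on ℝ × S^∞ (with complex scalars). -/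
open scoped BigOperators RealInnerProductSpace ComplexConjugate

noncomputable section

/-- A complex kernel `K` on `X` is strictly positive definite. -/
def IsStrictPosDefKernelC {X : Type*} (K : X → X → ℂ) : Prop :=
  IsPosDefKernelC K ∧
    ∀ (n : ℕ) (x : Fin n → X) (c : Fin n → ℂ),
      Function.Injective x → c ≠ 0 →
        0 < (∑ i, ∑ j, c i * conj (c j) * K (x i) (x j)).re

namespace SPDAux

open Complex Finset Matrix



/-- Finite Gram factorization of a complex kernel matrix. -/
def IsGramK {n : ℕ} (M : Fin n → Fin n → ℂ) : Prop :=
  ∃ (m : ℕ) (B : Fin m → Fin n → ℂ), ∀ i j, M i j = ∑ k, conj (B k i) * B k j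

lemma isGramK_one {n : ℕ} : IsGramK (fun (_ _ : Fin n) => (1 : ℂ)) :=
  ⟨1, fun _ _ => 1, by simp⟩

lemma IsGramK.hadamard {n : ℕ} {M M' : Fin n → Fin n → ℂ}
    (h : IsGramK M) (h' : IsGramK M') : IsGramK (fun i j => M i j * M' i j) := by
  obtain ⟨m, B, hB⟩ := h
  obtain ⟨m', B', hB'⟩ := h'
  refine ⟨m * m', fun k i =>
    B (finProdFinEquiv.symm k).1 i * B' (finProdFinEquiv.symm k).2 i, fun i j => ?_⟩
  dsimp only
  have := Equiv.sum_comp (finProdFinEquiv : Fin m × Fin m' ≃ Fin (m * m'))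
    (fun k => conj (B (finProdFinEquiv.symm k).1 i * B' (finProdFinEquiv.symm k).2 i) *
      (B (finProdFinEquiv.symm k).1 j * B' (finProdFinEquiv.symm k).2 j))
  rw [hB, hB', Finset.sum_mul_sum, ← this]
  rw [Fintype.sum_prod_type]
  refine Finset.sum_congr rfl fun k _ => Finset.sum_congr rfl fun k' _ => ?_
  simp only [Equiv.symm_apply_apply, _root_.map_mul]
  ring

lemma IsGramK.hpow {n : ℕ} {M : Fin n → Fin n → ℂ} (h : IsGramK M) :
    ∀ m : ℕ, IsGramK (fun i j => M i j ^ m)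
  | 0 => by simpa using (isGramK_one (n := n))
  | (m + 1) => by
      have := (IsGramK.hpow h m).hadamard h
      simpa [pow_succ] using this

lemma IsGramK.quad {n : ℕ} {M : Fin n → Fin n → ℂ} (h : IsGramK M) (c : Fin n → ℂ) :
    ∃ r : ℝ, 0 ≤ r ∧ (∑ i, ∑ j, c i * conj (c j) * M i j) = (r : ℂ) ∧
      (r = 0 → ∀ i, (∑ j, conj (c j) * M i j) = 0) := by
  obtain ⟨m, B, hB⟩ := h
  set s : Fin m → ℂ := fun k => ∑ j, conj (c j) * B k j with hs
  have hconj : ∀ k, conj (s k) = ∑ i, c i * conj (B k i) := by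
    intro k; simp [hs, map_sum]
  have hterm : ∀ k, (Complex.normSq (s k) : ℂ)
      = ∑ i, ∑ j, c i * conj (c j) * (conj (B k i) * B k j) := by
    intro k
    rw [← Complex.mul_conj (s k), hconj, hs]
    rw [Finset.sum_mul_sum]
    rw [Finset.sum_comm]
    refine Finset.sum_congr rfl fun i _ => Finset.sum_congr rfl fun j _ => ?_
    ring
  have key : (∑ i, ∑ j, c i * conj (c j) * M i j)
      = ((∑ k, Complex.normSq (s k) : ℝ) : ℂ) := by
    push_cast
    calc ∑ i, ∑ j, c i * conj (c j) * M i j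
        = ∑ i, ∑ j, ∑ k, c i * conj (c j) * (conj (B k i) * B k j) := by
          simp only [hB, Finset.mul_sum]
      _ = ∑ i, ∑ k, ∑ j, c i * conj (c j) * (conj (B k i) * B k j) :=
          Finset.sum_congr rfl fun i _ => Finset.sum_comm
      _ = ∑ k, ∑ i, ∑ j, c i * conj (c j) * (conj (B k i) * B k j) := Finset.sum_comm
      _ = ∑ k, (Complex.normSq (s k) : ℂ) :=
          Finset.sum_congr rfl fun k _ => (hterm k).symm
  refine ⟨∑ k, Complex.normSq (s k),
    Finset.sum_nonneg fun k _ => Complex.normSq_nonneg _, key, ?_⟩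
  intro hr i
  have hzero : ∀ k, s k = 0 := by
    intro k
    have := (Finset.sum_eq_zero_iff_of_nonneg
      (fun k _ => Complex.normSq_nonneg (s k))).mp hr k (Finset.mem_univ k)
    exact Complex.normSq_eq_zero.mp this
  calc ∑ j, conj (c j) * M i j
      = ∑ j, ∑ k, conj (c j) * (conj (B k i) * B k j) := by
        simp only [hB, Finset.mul_sum]
    _ = ∑ k, ∑ j, conj (c j) * (conj (B k i) * B k j) := Finset.sum_comm
    _ = ∑ k, conj (B k i) * s k := by
        refine Finset.sum_congr rfl fun k _ => ?_
        rw [hs, Finset.mul_sum]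
        exact Finset.sum_congr rfl fun j _ => by ring
    _ = 0 := by simp [hzero]

lemma isGramK_inner {n : ℕ} {E : Type*} [NormedAddCommGroup E] [InnerProductSpace ℝ E]
    (y : Fin n → E) : IsGramK (fun i j => ((⟪y i, y j⟫ : ℝ) : ℂ)) := by
  have hA : (Matrix.of fun i j => (⟪y i, y j⟫ : ℝ)).PosSemidef := by
    refine Matrix.PosSemidef.of_dotProduct_mulVec_nonneg ?_ ?_
    · ext i j
      simp [Matrix.conjTranspose_apply, real_inner_comm]
    · intro v
      have hrw : dotProduct (star v)
          ((Matrix.of fun i j => (⟪y i, y j⟫ : ℝ)) *ᵥ v)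
          = ⟪∑ i, v i • y i, ∑ j, v j • y j⟫ := by
        simp only [dotProduct, Matrix.mulVec, Pi.star_apply, star_trivial,
          Matrix.of_apply, sum_inner, inner_sum, real_inner_smul_left, real_inner_smul_right,
          dotProduct]
        refine Finset.sum_congr rfl fun i _ => ?_
        rw [Finset.mul_sum]
        refine Finset.sum_congr rfl fun j _ => ?_
        rw [real_inner_comm (y j)]
        ring
      rw [hrw]
      exact real_inner_self_nonneg
  obtain ⟨B, hB⟩ : ∃ B : Matrix (Fin n) (Fin n) ℝ,
      (Matrix.of fun i j => (⟪y i, y j⟫ : ℝ)) = Bᴴ * B := by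
    open MatrixOrder in
    simpa [Matrix.star_eq_conjTranspose] using CStarAlgebra.nonneg_iff_eq_star_mul_self.mp hA.nonneg
  refine ⟨n, fun k i => ((B k i : ℝ) : ℂ), fun i j => ?_⟩
  dsimp only
  have : (⟪y i, y j⟫ : ℝ) = ∑ k, B k i * B k j := by
    have := congrArg (fun M => M i j) hB
    simpa [Matrix.mul_apply, Matrix.conjTranspose_apply] using this
  rw [this]
  push_cast
  refine Finset.sum_congr rfl fun k _ => ?_
  rw [Complex.conj_ofReal]

lemma isGramK_expfreq {n : ℕ} (u : Fin n → ℝ) (ξ : ℝ) :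
    IsGramK (fun i j => Complex.exp (ξ * u i * I) * conj (Complex.exp (ξ * u j * I))) :=
  ⟨1, fun _ j => conj (Complex.exp (ξ * u j * I)), by
    intro i j; simp [mul_comm]⟩



lemma two_cos_eq (s : ℝ) :
    ((2 * Real.cos s : ℝ) : ℂ) = Complex.exp (s * I) + Complex.exp (-(s * I)) := by
  push_cast
  rw [show (-((s : ℂ) * I)) = (-(s : ℂ)) * I by ring, Complex.exp_mul_I, Complex.exp_mul_I,
    Complex.cos_neg, Complex.sin_neg]
  ring

lemma two_cos_pow (s : ℝ) (k : ℕ) :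
    ((2 * Real.cos s : ℝ) : ℂ) ^ k
      = ∑ j ∈ Finset.range (k + 1), (Nat.choose k j : ℂ) *
          Complex.exp (((2 * (j : ℤ) - (k : ℤ) : ℤ) : ℝ) * s * Complex.I) := by
  rw [two_cos_eq, add_pow]
  refine Finset.sum_congr rfl fun j hj => ?_
  have hj' : j ≤ k := Nat.lt_succ_iff.mp (Finset.mem_range.mp hj)
  rw [← Complex.exp_nat_mul, ← Complex.exp_nat_mul, ← Complex.exp_add, mul_comm]
  congr 1
  push_cast [hj']
  ring

lemma exists_freq_index {k : ℕ} {p : ℤ} (h1 : p.natAbs ≤ k) (h2 : (2 : ℤ) ∣ ((k : ℤ) + p)) :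
    ∃ j ∈ Finset.range (k + 1), 2 * (j : ℤ) - (k : ℤ) = p := by
  obtain ⟨t, ht⟩ := h2
  refine ⟨t.toNat, Finset.mem_range.mpr ?_, ?_⟩ <;> omega

lemma irr_contra {lam θ : ℝ} (hirr : Irrational (lam / θ)) (hθ : θ ≠ 0)
    {d e : ℝ} (he : e ≠ 0)
    {s t : ℤ} (ht : t ≠ 0) (h1 : lam * d = s * e) (h2 : θ * d = t * e) : False := by
  apply hirr
  refine ⟨(s : ℚ) / (t : ℚ), ?_⟩
  have hst : (s : ℝ) * θ = lam * t := by
    apply mul_right_cancel₀ he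
    linear_combination lam * h2 - θ * h1
  have ht' : (t : ℝ) ≠ 0 := Int.cast_ne_zero.mpr ht
  push_cast
  rw [div_eq_div_iff ht' hθ]
  linarith

/-- The character `(p, q) ↦ w^p z^q` as a monoid hom. -/
def chiHom (w z : ℂ) (hw : w ≠ 0) (hz : z ≠ 0) : Multiplicative (ℤ × ℤ) →* ℂ where
  toFun g := w ^ (Multiplicative.toAdd g).1 * z ^ (Multiplicative.toAdd g).2
  map_one' := by simp
  map_mul' g h := by
    simp only [toAdd_mul, Prod.fst_add, Prod.snd_add, zpow_add₀ hw, zpow_add₀ hz]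
    ring

@[simp] lemma chiHom_apply (w z : ℂ) (hw : w ≠ 0) (hz : z ≠ 0) (p q : ℤ) :
    chiHom w z hw hz (Multiplicative.ofAdd (p, q)) = w ^ p * z ^ q := rfl

lemma dedekind {ι : Type*} [Fintype ι] (χ : ι → (Multiplicative (ℤ × ℤ) →* ℂ))
    (hinj : Function.Injective χ) (d : ι → ℂ)
    (h : ∀ p q : ℤ, ∑ i, d i * χ i (Multiplicative.ofAdd (p, q)) = 0) : ∀ i, d i = 0 := by
  have li := (linearIndependent_monoidHom (Multiplicative (ℤ × ℤ)) ℂ).comp χ hinj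
  refine Fintype.linearIndependent_iff.mp li d ?_
  funext g
  have := h (Multiplicative.toAdd g).1 (Multiplicative.toAdd g).2
  simpa [Function.comp, Finset.sum_apply, Pi.smul_apply, smul_eq_mul] using this

lemma conj_exp_real_mul_I (x : ℝ) :
    conj (Complex.exp ((x : ℝ) * I)) = Complex.exp ((-x : ℝ) * I) := by
  rw [← Complex.exp_conj]
  congr 1
  simp

lemma norm_eq_zero_of_forall_lt {L : ℂ} (h : ∀ ε : ℝ, 0 < ε → ‖L‖ < ε) : L = 0 := by
  by_contra hL
  have : 0 < ‖L‖ := norm_pos_iff.mpr hL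
  exact lt_irrefl _ (h _ this)

lemma neg_one_zpow_congr {m : ℕ} {p : ℤ} (h : (2 : ℤ) ∣ ((m : ℤ) - p)) :
    ((-1 : ℂ)) ^ (m : ℕ) = (-1 : ℂ) ^ (p : ℤ) := by
  obtain ⟨t, ht⟩ := h
  have hm : (m : ℤ) = p + 2 * t := by omega
  calc ((-1 : ℂ)) ^ (m : ℕ) = ((-1 : ℂ)) ^ ((m : ℤ)) := (zpow_natCast _ _).symm
    _ = (-1 : ℂ) ^ (p + 2 * t) := by rw [hm]
    _ = (-1 : ℂ) ^ p * ((-1 : ℂ) ^ (2 * t)) := zpow_add₀ (by norm_num) _ _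
    _ = (-1 : ℂ) ^ p := by
        rw [_root_.zpow_mul]
        norm_num



abbrev EllTwo' : Type := lp (fun _ : ℕ => ℝ) 2

abbrev uu {n : ℕ} (pts : Fin n → ℝ × Metric.sphere (0 : EllTwo') 1) (i : Fin n) : ℝ :=
  (pts i).1

abbrev yy {n : ℕ} (pts : Fin n → ℝ × Metric.sphere (0 : EllTwo') 1) (i : Fin n) : EllTwo' :=
  ((pts i).2 : EllTwo')

abbrev GG {n : ℕ} (pts : Fin n → ℝ × Metric.sphere (0 : EllTwo') 1) (i j : Fin n) : ℝ :=
  ⟪yy pts i, yy pts j⟫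

abbrev tt {n : ℕ} (ρ : ℝ) (pts : Fin n → ℝ × Metric.sphere (0 : EllTwo') 1) (i j : Fin n) : ℝ :=
  GG pts i j * Real.cos (ρ * (uu pts i - uu pts j))

lemma sum_swap4 {α β γ δ M : Type*} [AddCommMonoid M]
    (s : Finset α) (t : Finset β) (s' : Finset γ) (t' : Finset δ) (F : α → β → γ → δ → M) :
    ∑ i ∈ s, ∑ j ∈ t, ∑ k ∈ s', ∑ l ∈ t', F i j k l
      = ∑ k ∈ s', ∑ l ∈ t', ∑ i ∈ s, ∑ j ∈ t, F i j k l := by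
  calc ∑ i ∈ s, ∑ j ∈ t, ∑ k ∈ s', ∑ l ∈ t', F i j k l
      = ∑ i ∈ s, ∑ k ∈ s', ∑ j ∈ t, ∑ l ∈ t', F i j k l :=
        Finset.sum_congr rfl fun i _ => Finset.sum_comm
    _ = ∑ k ∈ s', ∑ i ∈ s, ∑ j ∈ t, ∑ l ∈ t', F i j k l := Finset.sum_comm
    _ = ∑ k ∈ s', ∑ i ∈ s, ∑ l ∈ t', ∑ j ∈ t, F i j k l :=
        Finset.sum_congr rfl fun k _ => Finset.sum_congr rfl fun i _ => Finset.sum_comm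
    _ = ∑ k ∈ s', ∑ l ∈ t', ∑ i ∈ s, ∑ j ∈ t, F i j k l :=
        Finset.sum_congr rfl fun k _ => Finset.sum_comm

lemma summable_pow_norm (aa : ℕ → ℝ) (ha : ∀ k, 0 ≤ aa k) (hsa : Summable aa)
    {t : ℝ} (ht : |t| ≤ 1) : Summable (fun k => ‖aa k * t ^ k‖) := by
  refine Summable.of_nonneg_of_le (fun k => norm_nonneg _) (fun k => ?_) hsa
  rw [norm_mul, norm_pow, Real.norm_eq_abs, Real.norm_eq_abs, _root_.abs_of_nonneg (ha k)]
  exact mul_le_of_le_one_right (ha k) (pow_le_one₀ (abs_nonneg t) ht)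

lemma helem {n : ℕ} (pts : Fin n → ℝ × Metric.sphere (0 : EllTwo') 1) :
    (∀ i, ‖yy pts i‖ = 1) ∧ (∀ i j, |GG pts i j| ≤ 1) ∧
      (∀ (ρ : ℝ) (i j : Fin n), |tt ρ pts i j| ≤ 1) := by
  have h1 : ∀ i, ‖yy pts i‖ = 1 := fun i => norm_eq_of_mem_sphere ((pts i).2)
  have h2 : ∀ i j, |GG pts i j| ≤ 1 := by
    intro i j
    have := abs_real_inner_le_norm (yy pts i) (yy pts j)
    simpa [h1] using this
  refine ⟨h1, h2, fun ρ i j => ?_⟩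
  rw [abs_mul]
  exact mul_le_one₀ (h2 i j) (abs_nonneg _) (Real.abs_cos_le_one _)


set_option maxHeartbeats 1000000 in
lemma main_aux
    (a b : ℕ → ℝ) (ha : ∀ k, 0 ≤ a k) (hb : ∀ l, 0 ≤ b l)
    (hsa : Summable a) (hsb : Summable b)
    (f g : ℝ → ℝ)
    (hf : ∀ t ∈ Set.Icc (-1 : ℝ) 1, f t = ∑' k : ℕ, a k * t ^ k)
    (hg : ∀ t ∈ Set.Icc (-1 : ℝ) 1, g t = ∑' l : ℕ, b l * t ^ l)
    (lam θ : ℝ)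
    (n : ℕ) (pts : Fin n → ℝ × Metric.sphere (0 : EllTwo') 1) (c : Fin n → ℂ) :
    ∃ w : ℕ × ℕ → ℝ, (∀ kl, 0 ≤ w kl) ∧ Summable w ∧
      ((∑ i, ∑ j, c i * conj (c j) * ((f (tt lam pts i j) * g (tt θ pts i j) : ℝ) : ℂ))
        = (((∑' kl : ℕ × ℕ, w kl) : ℝ) : ℂ)) ∧
      (∀ k l : ℕ, 0 < a k → 0 < b l → w (k, l) = 0 →
        ∀ p q : ℤ, p.natAbs ≤ k → q.natAbs ≤ l →
          (2 : ℤ) ∣ ((k : ℤ) + p) → (2 : ℤ) ∣ ((l : ℤ) + q) →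
          ∀ i, ∑ j, conj (c j) * ((GG pts i j : ℝ) : ℂ) ^ (k + l) *
              Complex.exp ((((p : ℝ) * lam + (q : ℝ) * θ : ℝ) : ℂ) *
                ((uu pts j : ℝ) : ℂ) * Complex.I) = 0) := by
  classical
  obtain ⟨hn1, hGle, htle⟩ := helem pts
  have hticc : ∀ (ρ : ℝ) (i j : Fin n), tt ρ pts i j ∈ Set.Icc (-1 : ℝ) 1 := fun ρ i j =>
    Set.mem_Icc.mpr (abs_le.mp (htle ρ i j))
  have hsM : Summable (fun kl : ℕ × ℕ => a kl.1 * b kl.2) := hsa.mul_of_nonneg hsb ha hb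
  have hbnd : ∀ (i j : Fin n) (kl : ℕ × ℕ),
      ‖(((a kl.1 * tt lam pts i j ^ kl.1) * (b kl.2 * tt θ pts i j ^ kl.2) : ℝ) : ℂ)‖
        ≤ a kl.1 * b kl.2 := by
    intro i j kl
    rw [Complex.norm_real, Real.norm_eq_abs, abs_mul, abs_mul, abs_mul, _root_.abs_pow, _root_.abs_pow,
      _root_.abs_of_nonneg (ha _), _root_.abs_of_nonneg (hb _)]
    have h1 : |tt lam pts i j| ^ kl.1 ≤ 1 := pow_le_one₀ (abs_nonneg _) (htle _ _ _)
    have h2 : |tt θ pts i j| ^ kl.2 ≤ 1 := pow_le_one₀ (abs_nonneg _) (htle _ _ _)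
    calc a kl.1 * |tt lam pts i j| ^ kl.1 * (b kl.2 * |tt θ pts i j| ^ kl.2)
        ≤ a kl.1 * 1 * (b kl.2 * 1) := by
          refine mul_le_mul ?_ ?_ (mul_nonneg (hb _) (by positivity)) (mul_nonneg (ha _) zero_le_one)
          · exact mul_le_mul_of_nonneg_left h1 (ha _)
          · exact mul_le_mul_of_nonneg_left h2 (hb _)
      _ = a kl.1 * b kl.2 := by ring
  have hFs0 : ∀ i j : Fin n, Summable (fun kl : ℕ × ℕ =>
      (((a kl.1 * tt lam pts i j ^ kl.1) * (b kl.2 * tt θ pts i j ^ kl.2) : ℝ) : ℂ)) :=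
    fun i j => Summable.of_norm_bounded hsM (hbnd i j)
  set F : Fin n → Fin n → ℕ × ℕ → ℂ := fun i j kl =>
    c i * conj (c j) *
      (((a kl.1 * tt lam pts i j ^ kl.1) * (b kl.2 * tt θ pts i j ^ kl.2) : ℝ) : ℂ) with hF
  have hFs : ∀ i j : Fin n, Summable (F i j) := fun i j => (hFs0 i j).mul_left _
  have hprod : ∀ i j : Fin n, ((f (tt lam pts i j) * g (tt θ pts i j) : ℝ) : ℂ)
      = ∑' kl : ℕ × ℕ,
        (((a kl.1 * tt lam pts i j ^ kl.1) * (b kl.2 * tt θ pts i j ^ kl.2) : ℝ) : ℂ) := by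
    intro i j
    rw [hf _ (hticc lam i j), hg _ (hticc θ i j),
      tsum_mul_tsum_of_summable_norm (summable_pow_norm a ha hsa (htle lam i j))
        (summable_pow_norm b hb hsb (htle θ i j)), Complex.ofReal_tsum]
  have hS1 : (∑ i, ∑ j, c i * conj (c j) * ((f (tt lam pts i j) * g (tt θ pts i j) : ℝ) : ℂ))
      = ∑' kl : ℕ × ℕ, ∑ i, ∑ j, F i j kl := by
    have e1 : ∀ i j : Fin n,
        c i * conj (c j) * ((f (tt lam pts i j) * g (tt θ pts i j) : ℝ) : ℂ)
          = ∑' kl : ℕ × ℕ, F i j kl := by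
      intro i j
      rw [hprod i j, hF]
      exact (tsum_mul_left).symm
    calc (∑ i, ∑ j, c i * conj (c j) * ((f (tt lam pts i j) * g (tt θ pts i j) : ℝ) : ℂ))
        = ∑ i, ∑ j, ∑' kl : ℕ × ℕ, F i j kl :=
          Finset.sum_congr rfl fun i _ => Finset.sum_congr rfl fun j _ => e1 i j
      _ = ∑ i, ∑' kl : ℕ × ℕ, ∑ j, F i j kl :=
          Finset.sum_congr rfl fun i _ => (Summable.tsum_finsetSum (fun j _ => hFs i j)).symm
      _ = ∑' kl : ℕ × ℕ, ∑ i, ∑ j, F i j kl :=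
          (Summable.tsum_finsetSum (fun i _ => summable_sum (fun j _ => hFs i j))).symm
  set Tc : ℕ → ℕ → ℂ := fun k l => ∑ i, ∑ j, c i * conj (c j) *
      ((tt lam pts i j ^ k * tt θ pts i j ^ l : ℝ) : ℂ) with hTcd
  have hT : ∀ kl : ℕ × ℕ, (∑ i, ∑ j, F i j kl) = ((a kl.1 * b kl.2 : ℝ) : ℂ) * Tc kl.1 kl.2 := by
    intro kl
    rw [hTcd]
    simp only
    rw [Finset.mul_sum]
    refine Finset.sum_congr rfl fun i _ => ?_
    rw [Finset.mul_sum]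
    refine Finset.sum_congr rfl fun j _ => ?_
    rw [hF]
    push_cast
    ring
  set Nmat : ℕ → ℝ → Fin n → Fin n → ℂ := fun m ξ i j =>
    ((GG pts i j : ℝ) : ℂ) ^ m *
      (Complex.exp (ξ * uu pts i * I) * conj (Complex.exp (ξ * uu pts j * I))) with hN
  have hNg : ∀ (m : ℕ) (ξ : ℝ), IsGramK (Nmat m ξ) := by
    intro m ξ
    rw [hN]
    exact ((isGramK_inner (yy pts)).hpow m).hadamard (isGramK_expfreq (uu pts) ξ)
  set Qc : ℕ → ℝ → ℂ := fun m ξ => ∑ i, ∑ j, c i * conj (c j) * Nmat m ξ i j with hQcd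
  have hQ : ∀ (m : ℕ) (ξ : ℝ), Qc m ξ = (((Qc m ξ).re : ℝ) : ℂ) ∧ 0 ≤ (Qc m ξ).re ∧
      ((Qc m ξ).re = 0 → ∀ i, ∑ j, conj (c j) * Nmat m ξ i j = 0) := by
    intro m ξ
    obtain ⟨r, hr0, hre, hker⟩ := (hNg m ξ).quad c
    have hQr : Qc m ξ = (r : ℂ) := hre
    have hre2 : (Qc m ξ).re = r := by rw [hQr]; simp
    exact ⟨by rw [hre2, hQr], by rw [hre2]; exact hr0,
      fun h0 => hker (hre2.symm.trans h0)⟩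
  have hsplit : ∀ (ξ : ℝ) (i j : Fin n),
      Complex.exp ((ξ : ℂ) * ((uu pts i - uu pts j : ℝ) : ℂ) * I)
        = Complex.exp (ξ * uu pts i * I) * conj (Complex.exp (ξ * uu pts j * I)) := by
    intro ξ i j
    rw [← Complex.exp_conj, ← Complex.exp_add]
    congr 1
    simp only [_root_.map_mul, Complex.conj_ofReal, Complex.conj_I]
    push_cast
    ring
  have hentry : ∀ (k l : ℕ) (i j : Fin n),
      (2 : ℂ) ^ (k + l) * ((tt lam pts i j ^ k * tt θ pts i j ^ l : ℝ) : ℂ)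
        = ∑ j' ∈ Finset.range (k + 1), ∑ r' ∈ Finset.range (l + 1),
            ((k.choose j' : ℂ) * (l.choose r' : ℂ)) *
              Nmat (k + l) (((2 * (j' : ℤ) - (k : ℤ) : ℤ) : ℝ) * lam
                + ((2 * (r' : ℤ) - (l : ℤ) : ℤ) : ℝ) * θ) i j := by
    intro k l i j
    have key : (2 : ℂ) ^ (k + l) * ((tt lam pts i j ^ k * tt θ pts i j ^ l : ℝ) : ℂ)
        = (((2 * Real.cos (lam * (uu pts i - uu pts j)) : ℝ) : ℂ)) ^ k *
          (((2 * Real.cos (θ * (uu pts i - uu pts j)) : ℝ) : ℂ)) ^ l *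
          ((GG pts i j : ℝ) : ℂ) ^ (k + l) := by
      push_cast
      rw [pow_add]
      ring
    rw [key, two_cos_pow, two_cos_pow, Finset.sum_mul_sum, Finset.sum_mul]
    refine Finset.sum_congr rfl fun j' _ => ?_
    rw [Finset.sum_mul]
    refine Finset.sum_congr rfl fun r' _ => ?_
    rw [hN]
    simp only
    rw [← hsplit (((2 * (j' : ℤ) - (k : ℤ) : ℤ) : ℝ) * lam
      + ((2 * (r' : ℤ) - (l : ℤ) : ℤ) : ℝ) * θ) i j]
    have hee : Complex.exp ((((2 * (j' : ℤ) - (k : ℤ) : ℤ) : ℝ) : ℂ)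
          * ((lam * (uu pts i - uu pts j) : ℝ) : ℂ) * I)
        * Complex.exp ((((2 * (r' : ℤ) - (l : ℤ) : ℤ) : ℝ) : ℂ)
          * ((θ * (uu pts i - uu pts j) : ℝ) : ℂ) * I)
        = Complex.exp (((((2 * (j' : ℤ) - (k : ℤ) : ℤ) : ℝ) * lam
            + ((2 * (r' : ℤ) - (l : ℤ) : ℤ) : ℝ) * θ : ℝ) : ℂ)
          * ((uu pts i - uu pts j : ℝ) : ℂ) * I) := by
      rw [← Complex.exp_add]
      congr 1
      push_cast
      ring
    rw [← hee]
    ring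
  have hTc2 : ∀ k l : ℕ, (2 : ℂ) ^ (k + l) * Tc k l
      = ∑ j' ∈ Finset.range (k + 1), ∑ r' ∈ Finset.range (l + 1),
          ((k.choose j' : ℂ) * (l.choose r' : ℂ)) *
            Qc (k + l) (((2 * (j' : ℤ) - (k : ℤ) : ℤ) : ℝ) * lam
              + ((2 * (r' : ℤ) - (l : ℤ) : ℤ) : ℝ) * θ) := by
    intro k l
    calc (2 : ℂ) ^ (k + l) * Tc k l
        = ∑ i, ∑ j, ∑ j' ∈ Finset.range (k + 1), ∑ r' ∈ Finset.range (l + 1),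
            c i * conj (c j) * (((k.choose j' : ℂ) * (l.choose r' : ℂ)) *
              Nmat (k + l) (((2 * (j' : ℤ) - (k : ℤ) : ℤ) : ℝ) * lam
                + ((2 * (r' : ℤ) - (l : ℤ) : ℤ) : ℝ) * θ) i j) := by
          rw [hTcd]
          simp only
          rw [Finset.mul_sum]
          refine Finset.sum_congr rfl fun i _ => ?_
          rw [Finset.mul_sum]
          refine Finset.sum_congr rfl fun j _ => ?_
          calc (2 : ℂ) ^ (k + l) *
                (c i * conj (c j) * ((tt lam pts i j ^ k * tt θ pts i j ^ l : ℝ) : ℂ))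
              = c i * conj (c j) *
                ((2 : ℂ) ^ (k + l) * ((tt lam pts i j ^ k * tt θ pts i j ^ l : ℝ) : ℂ)) := by
                ring
            _ = _ := by
                rw [hentry k l i j, Finset.mul_sum]
                refine Finset.sum_congr rfl fun j' _ => ?_
                rw [Finset.mul_sum]
      _ = ∑ j' ∈ Finset.range (k + 1), ∑ r' ∈ Finset.range (l + 1), ∑ i, ∑ j,
            c i * conj (c j) * (((k.choose j' : ℂ) * (l.choose r' : ℂ)) *
              Nmat (k + l) (((2 * (j' : ℤ) - (k : ℤ) : ℤ) : ℝ) * lam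
                + ((2 * (r' : ℤ) - (l : ℤ) : ℤ) : ℝ) * θ) i j) :=
          sum_swap4 _ _ _ _ _
      _ = _ := by
          refine Finset.sum_congr rfl fun j' _ => Finset.sum_congr rfl fun r' _ => ?_
          rw [hQcd]
          simp only
          rw [Finset.mul_sum]
          refine Finset.sum_congr rfl fun i _ => ?_
          rw [Finset.mul_sum]
          exact Finset.sum_congr rfl fun j _ => by ring
  have hTcreal : ∀ k l : ℕ, Tc k l = (((Tc k l).re : ℝ) : ℂ) ∧ 0 ≤ (Tc k l).re ∧
      ((Tc k l).re = 0 → ∀ j' ∈ Finset.range (k + 1), ∀ r' ∈ Finset.range (l + 1),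
        (Qc (k + l) (((2 * (j' : ℤ) - (k : ℤ) : ℤ) : ℝ) * lam
          + ((2 * (r' : ℤ) - (l : ℤ) : ℤ) : ℝ) * θ)).re = 0) := by
    intro k l
    set X : ℝ := ∑ j' ∈ Finset.range (k + 1), ∑ r' ∈ Finset.range (l + 1),
      ((k.choose j' : ℝ) * (l.choose r' : ℝ)) *
        (Qc (k + l) (((2 * (j' : ℤ) - (k : ℤ) : ℤ) : ℝ) * lam
          + ((2 * (r' : ℤ) - (l : ℤ) : ℤ) : ℝ) * θ)).re with hX
    have hX0 : 0 ≤ X := by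
      rw [hX]
      refine Finset.sum_nonneg fun j' _ => Finset.sum_nonneg fun r' _ => ?_
      exact mul_nonneg (by positivity) (hQ _ _).2.1
    have hXeq : (2 : ℂ) ^ (k + l) * Tc k l = ((X : ℝ) : ℂ) := by
      rw [hTc2 k l, hX]
      push_cast
      refine Finset.sum_congr rfl fun j' _ => Finset.sum_congr rfl fun r' _ => ?_
      rw [(hQ (k + l) _).1]
      simp
    have h2c : ((2 : ℝ) ^ (k + l) : ℂ) ≠ 0 := by
      push_cast
      exact pow_ne_zero _ two_ne_zero
    have hTeq : Tc k l = ((X / 2 ^ (k + l) : ℝ) : ℂ) := by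
      rw [Complex.ofReal_div]
      rw [eq_div_iff (by push_cast; exact pow_ne_zero _ two_ne_zero)]
      rw [mul_comm]
      rw [← hXeq]
      push_cast
      ring
    have hre : (Tc k l).re = X / 2 ^ (k + l) := by rw [hTeq]; exact Complex.ofReal_re _
    refine ⟨by rw [hre, hTeq], by rw [hre]; positivity, ?_⟩
    intro h0 j' hj' r' hr'
    have hXz : X = 0 := by
      have := hre.symm.trans h0
      field_simp at this
      simpa using this
    have := (Finset.sum_eq_zero_iff_of_nonneg (fun j' _ => Finset.sum_nonneg fun r' _ =>
      mul_nonneg (by positivity) (hQ _ _).2.1)).mp (hX ▸ hXz) j' hj'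
    have := (Finset.sum_eq_zero_iff_of_nonneg (fun r' _ =>
      mul_nonneg (by positivity) (hQ _ _).2.1)).mp this r' hr'
    have hcpos : (0 : ℝ) < (k.choose j' : ℝ) * (l.choose r' : ℝ) := by
      have h1 : 0 < k.choose j' := Nat.choose_pos (Nat.lt_succ_iff.mp (Finset.mem_range.mp hj'))
      have h2 : 0 < l.choose r' := Nat.choose_pos (Nat.lt_succ_iff.mp (Finset.mem_range.mp hr'))
      positivity
    exact (mul_eq_zero.mp this).resolve_left (ne_of_gt hcpos)
  -- the weights
  set w : ℕ × ℕ → ℝ := fun kl => a kl.1 * b kl.2 * (Tc kl.1 kl.2).re with hw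
  have hw0 : ∀ kl, 0 ≤ w kl := fun kl =>
    mul_nonneg (mul_nonneg (ha _) (hb _)) (hTcreal kl.1 kl.2).2.1
  have hfam : Summable (fun kl : ℕ × ℕ => ∑ i, ∑ j, F i j kl) :=
    summable_sum (fun i _ => summable_sum (fun j _ => hFs i j))
  have hweq : ∀ kl : ℕ × ℕ, (∑ i, ∑ j, F i j kl) = ((w kl : ℝ) : ℂ) := by
    intro kl
    rw [hT kl, (hTcreal kl.1 kl.2).1, hw]
    push_cast
    ring
  have hwsum : Summable w := by
    have : Summable (fun kl : ℕ × ℕ => ((w kl : ℝ) : ℂ)) := by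
      refine hfam.congr fun kl => hweq kl
    exact (Complex.summable_ofReal).mp this
  refine ⟨w, hw0, hwsum, ?_, ?_⟩
  · rw [hS1, Complex.ofReal_tsum]
    exact tsum_congr hweq
  · intro k l hak hbl hw0' p q hp hq hdp hdq i
    have hTre0 : (Tc k l).re = 0 := by
      have : a k * b l * (Tc k l).re = 0 := hw0'
      rcases mul_eq_zero.mp this with h | h
      · exact absurd h (by positivity)
      · exact h
    obtain ⟨j', hj', hjv⟩ := exists_freq_index (k := k) (p := -p) (by omega) (by omega)
    obtain ⟨r', hr', hrv⟩ := exists_freq_index (k := l) (p := -q) (by omega) (by omega)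
    have hQre0 := (hTcreal k l).2.2 hTre0 j' hj' r' hr'
    rw [hjv, hrv] at hQre0
    have hrows := (hQ (k + l) _).2.2 hQre0 i
    -- factor out exp(ξ u_i I)
    set ξ : ℝ := ((-p : ℤ) : ℝ) * lam + ((-q : ℤ) : ℝ) * θ with hxi
    have hfact : (∑ j, conj (c j) * Nmat (k + l) ξ i j)
        = Complex.exp (ξ * uu pts i * I) *
          ∑ j, conj (c j) * ((GG pts i j : ℝ) : ℂ) ^ (k + l) *
            conj (Complex.exp (ξ * uu pts j * I)) := by
      rw [hN]
      simp only
      rw [Finset.mul_sum]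
      exact Finset.sum_congr rfl fun j _ => by ring
    rw [hfact] at hrows
    have hsum0 := (mul_eq_zero.mp hrows).resolve_left (Complex.exp_ne_zero _)
    rw [← hsum0]
    refine Finset.sum_congr rfl fun j _ => ?_
    congr 1
    rw [← Complex.exp_conj]
    congr 1
    rw [hxi]
    push_cast
    simp only [_root_.map_mul, map_add, map_sub, map_neg, map_intCast, Complex.conj_ofReal, Complex.conj_I]
    ring

set_option maxHeartbeats 1000000 in
lemma strict_aux
    (lam θ : ℝ) (hθ : θ ≠ 0) (hirr : Irrational (lam / θ))
    (a b : ℕ → ℝ)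
    (hae : ({k : ℕ | 0 < a k} ∩ {n : ℕ | Even n}).Infinite)
    (hao : ({k : ℕ | 0 < a k} ∩ {n : ℕ | Odd n}).Infinite)
    (hbe : ({l : ℕ | 0 < b l} ∩ {n : ℕ | Even n}).Infinite)
    (hbo : ({l : ℕ | 0 < b l} ∩ {n : ℕ | Odd n}).Infinite)
    (n : ℕ) (pts : Fin n → ℝ × Metric.sphere (0 : EllTwo') 1) (c : Fin n → ℂ)
    (hinj : Function.Injective pts)
    (hvan : ∀ k l : ℕ, 0 < a k → 0 < b l →
        ∀ p q : ℤ, p.natAbs ≤ k → q.natAbs ≤ l →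
          (2 : ℤ) ∣ ((k : ℤ) + p) → (2 : ℤ) ∣ ((l : ℤ) + q) →
          ∀ i, ∑ j, conj (c j) * ((GG pts i j : ℝ) : ℂ) ^ (k + l) *
              Complex.exp ((((p : ℝ) * lam + (q : ℝ) * θ : ℝ) : ℂ) *
                ((uu pts j : ℝ) : ℂ) * Complex.I) = 0) :
    c = 0 := by
  classical
  funext i0
  set P : Finset (Fin n) := Finset.univ.filter (fun j => yy pts j = yy pts i0) with hP
  set Nn : Finset (Fin n) := Finset.univ.filter (fun j => yy pts j = -yy pts i0) with hNn
  have hy1 : ∀ j, ‖yy pts j‖ = 1 := fun j => norm_eq_of_mem_sphere _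
  have hyne : yy pts i0 ≠ -yy pts i0 := by
    intro h
    have h2 : (2 : ℝ) • yy pts i0 = 0 := by
      rw [two_smul]
      nth_rewrite 2 [h]
      simp
    have h3 : yy pts i0 = 0 := by
      have := smul_eq_zero.mp h2
      rcases this with h' | h'
      · norm_num at h'
      · exact h'
    have := hy1 i0
    rw [h3] at this
    simp at this
  have hdisj : Disjoint P Nn := by
    rw [Finset.disjoint_left]
    intro j hjP hjN
    rw [hP] at hjP; rw [hNn] at hjN
    exact hyne ((Finset.mem_filter.mp hjP).2.symm.trans (Finset.mem_filter.mp hjN).2)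
  have hGP : ∀ j ∈ P, GG pts i0 j = 1 := by
    intro j hj
    have hyj : yy pts j = yy pts i0 := (Finset.mem_filter.mp hj).2
    exact (inner_eq_one_iff_of_norm_eq_one (hy1 i0) (hy1 j)).mpr hyj.symm
  have hGN : ∀ j ∈ Nn, GG pts i0 j = -1 := by
    intro j hj
    have hyj : yy pts j = -yy pts i0 := (Finset.mem_filter.mp hj).2
    show ⟪yy pts i0, yy pts j⟫ = -1
    rw [hyj, inner_neg_right, real_inner_self_eq_norm_mul_norm, hy1 i0]
    norm_num
  have hGR : ∀ j, j ∉ P → j ∉ Nn → |GG pts i0 j| < 1 := by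
    intro j hjP hjN
    have h1 : |GG pts i0 j| ≤ 1 := (helem pts).2.1 i0 j
    rcases eq_or_lt_of_le h1 with he | h
    · exfalso
      rcases abs_eq (by norm_num : (0:ℝ) ≤ 1) |>.mp he with hv | hv
      · exact hjP (by
          rw [hP]
          refine Finset.mem_filter.mpr ⟨Finset.mem_univ _, ?_⟩
          exact ((inner_eq_one_iff_of_norm_eq_one (hy1 i0) (hy1 j)).mp hv).symm)
      · refine hjN (by
          rw [hNn]
          refine Finset.mem_filter.mpr ⟨Finset.mem_univ _, ?_⟩
          have hv' : ⟪yy pts i0, -(yy pts j)⟫ = 1 := by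
            rw [inner_neg_right, show ⟪yy pts i0, yy pts j⟫ = -1 from hv]; norm_num
          have := (inner_eq_one_iff_of_norm_eq_one (hy1 i0) (by rw [norm_neg]; exact hy1 j)).mp hv'
          rw [this, neg_neg])
    · exact h
  set e1 : Fin n → ℂ := fun j => (if j ∈ Nn then (-1 : ℂ) else 1) *
      Complex.exp (lam * uu pts j * I) with he1
  set e2 : Fin n → ℂ := fun j => (if j ∈ Nn then (-1 : ℂ) else 1) *
      Complex.exp (θ * uu pts j * I) with he2
  have he1z : ∀ j, e1 j ≠ 0 := by
    intro j
    rw [he1]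
    exact mul_ne_zero (by split <;> norm_num) (Complex.exp_ne_zero _)
  have he2z : ∀ j, e2 j ≠ 0 := by
    intro j
    rw [he2]
    exact mul_ne_zero (by split <;> norm_num) (Complex.exp_ne_zero _)
  have C1 : ∀ p q : ℤ, ∑ j ∈ P ∪ Nn, conj (c j) * (e1 j ^ p * e2 j ^ q) = 0 := by
    intro p q
    set ξ : ℝ := (p : ℝ) * lam + (q : ℝ) * θ with hξ
    set wj : Fin n → ℂ := fun j => conj (c j) *
      Complex.exp ((ξ : ℂ) * ((uu pts j : ℝ) : ℂ) * I) with hwj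
    have hval : ∀ j, conj (c j) * (e1 j ^ p * e2 j ^ q)
        = (if j ∈ Nn then (-1 : ℂ) ^ (p + q) else 1) * wj j := by
      intro j
      rw [he1, he2, hwj]
      simp only
      have hEE : Complex.exp (lam * uu pts j * I) ^ p * Complex.exp (θ * uu pts j * I) ^ q
          = Complex.exp ((ξ : ℂ) * ((uu pts j : ℝ) : ℂ) * I) := by
        rw [← Complex.exp_int_mul, ← Complex.exp_int_mul, ← Complex.exp_add]
        congr 1
        rw [hξ]
        push_cast
        ring
      by_cases hj : j ∈ Nn
      · rw [if_pos hj, if_pos hj]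
        have hz1 : ((-1 : ℂ) * Complex.exp (lam * uu pts j * I)) ^ p
            = (-1 : ℂ) ^ p * Complex.exp (lam * uu pts j * I) ^ p := mul_zpow _ _ _
        have hz2 : ((-1 : ℂ) * Complex.exp (θ * uu pts j * I)) ^ q
            = (-1 : ℂ) ^ q * Complex.exp (θ * uu pts j * I) ^ q := mul_zpow _ _ _
        rw [hz1, hz2, zpow_add₀ (show (-1:ℂ) ≠ 0 by norm_num) p q, ← hEE]
        ring
      · rw [if_neg hj, if_neg hj]
        have hz1 : ((1 : ℂ) * Complex.exp (lam * uu pts j * I)) ^ p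
            = Complex.exp (lam * uu pts j * I) ^ p := by rw [one_mul]
        have hz2 : ((1 : ℂ) * Complex.exp (θ * uu pts j * I)) ^ q
            = Complex.exp (θ * uu pts j * I) ^ q := by rw [one_mul]
        rw [hz1, hz2, ← hEE]
        ring
    have hsum_split : ∑ j ∈ P ∪ Nn, conj (c j) * (e1 j ^ p * e2 j ^ q)
        = (∑ j ∈ P, wj j) + (-1 : ℂ) ^ (p + q) * ∑ j ∈ Nn, wj j := by
      rw [Finset.sum_union hdisj]
      congr 1
      · refine Finset.sum_congr rfl fun j hj => ?_
        rw [hval j, if_neg (Finset.disjoint_left.mp hdisj hj)]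
        ring
      · rw [Finset.mul_sum]
        refine Finset.sum_congr rfl fun j hj => ?_
        rw [hval j, if_pos hj]
    rw [hsum_split]
    refine norm_eq_zero_of_forall_lt ?_
    intro ε hε
    set Rest : Finset (Fin n) := Finset.univ \ (P ∪ Nn) with hRest
    have hBt : Filter.Tendsto (fun m : ℕ => ∑ j ∈ Rest, ‖c j‖ * |GG pts i0 j| ^ m)
        Filter.atTop (nhds 0) := by
      rw [show (0:ℝ) = ∑ j ∈ Rest, (0:ℝ) by simp]
      refine tendsto_finset_sum _ fun j hj => ?_
      have hjm := Finset.mem_sdiff.mp (hRest ▸ hj)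
      have hjP : j ∉ P := fun h => hjm.2 (Finset.mem_union_left _ h)
      have hjN : j ∉ Nn := fun h => hjm.2 (Finset.mem_union_right _ h)
      have hlt : |GG pts i0 j| < 1 := hGR j hjP hjN
      simpa using (tendsto_pow_atTop_nhds_zero_of_lt_one (abs_nonneg _) hlt).const_mul (‖c j‖)
    obtain ⟨M, hM⟩ := Filter.eventually_atTop.mp (hBt.eventually_lt_const hε)
    have hk : ∃ k : ℕ, 0 < a k ∧ p.natAbs ≤ k ∧ M ≤ k ∧ (2:ℤ) ∣ ((k:ℤ) + p) := by
      rcases Int.even_or_odd p with hpe | hpo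
      · obtain ⟨k, hk1, hk2⟩ := hae.exists_gt (M + p.natAbs)
        refine ⟨k, hk1.1, by omega, by omega, ?_⟩
        have hke : Even k := hk1.2
        rcases hke with ⟨t, ht⟩
        rcases hpe with ⟨t', ht'⟩
        omega
      · obtain ⟨k, hk1, hk2⟩ := hao.exists_gt (M + p.natAbs)
        refine ⟨k, hk1.1, by omega, by omega, ?_⟩
        rcases hk1.2 with ⟨t, ht⟩
        rcases hpo with ⟨t', ht'⟩
        omega
    have hl : ∃ l : ℕ, 0 < b l ∧ q.natAbs ≤ l ∧ (2:ℤ) ∣ ((l:ℤ) + q) := by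
      rcases Int.even_or_odd q with hqe | hqo
      · obtain ⟨l, hl1, hl2⟩ := hbe.exists_gt (q.natAbs)
        refine ⟨l, hl1.1, by omega, ?_⟩
        rcases hl1.2 with ⟨t, ht⟩
        rcases hqe with ⟨t', ht'⟩
        omega
      · obtain ⟨l, hl1, hl2⟩ := hbo.exists_gt (q.natAbs)
        refine ⟨l, hl1.1, by omega, ?_⟩
        rcases hl1.2 with ⟨t, ht⟩
        rcases hqo with ⟨t', ht'⟩
        omega
    obtain ⟨k, hak, hpk, hMk, hdp⟩ := hk
    obtain ⟨l, hbl, hql, hdq⟩ := hl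
    have hrow := hvan k l hak hbl p q hpk hql hdp hdq i0
    rw [← hξ] at hrow
    have hcover : (Finset.univ : Finset (Fin n)) = (P ∪ Nn) ∪ Rest := by
      rw [hRest]
      exact (Finset.union_sdiff_of_subset (Finset.subset_univ _)).symm
    have hdisj2 : Disjoint (P ∪ Nn) Rest := by
      rw [hRest]
      exact Finset.disjoint_sdiff
    rw [hcover, Finset.sum_union hdisj2, Finset.sum_union hdisj] at hrow
    have hmpar : ((-1 : ℂ)) ^ (k + l : ℕ) = (-1 : ℂ) ^ (p + q) := by
      refine neg_one_zpow_congr ?_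
      omega
    have hPsum : ∑ j ∈ P, conj (c j) * ((GG pts i0 j : ℝ) : ℂ) ^ (k + l) *
        Complex.exp ((ξ : ℂ) * ((uu pts j : ℝ) : ℂ) * I) = ∑ j ∈ P, wj j := by
      refine Finset.sum_congr rfl fun j hj => ?_
      rw [hGP j hj, hwj]
      push_cast
      ring
    have hNsum : ∑ j ∈ Nn, conj (c j) * ((GG pts i0 j : ℝ) : ℂ) ^ (k + l) *
        Complex.exp ((ξ : ℂ) * ((uu pts j : ℝ) : ℂ) * I)
        = (-1 : ℂ) ^ (p + q) * ∑ j ∈ Nn, wj j := by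
      rw [Finset.mul_sum]
      refine Finset.sum_congr rfl fun j hj => ?_
      rw [hGN j hj, hwj]
      push_cast
      rw [hmpar]
      ring
    rw [hPsum, hNsum] at hrow
    have hLval : (∑ j ∈ P, wj j) + (-1 : ℂ) ^ (p + q) * ∑ j ∈ Nn, wj j
        = -(∑ j ∈ Rest, conj (c j) * ((GG pts i0 j : ℝ) : ℂ) ^ (k + l) *
            Complex.exp ((ξ : ℂ) * ((uu pts j : ℝ) : ℂ) * I)) := by
      linear_combination hrow
    rw [hLval, norm_neg]
    calc ‖∑ j ∈ Rest, conj (c j) * ((GG pts i0 j : ℝ) : ℂ) ^ (k + l) *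
            Complex.exp ((ξ : ℂ) * ((uu pts j : ℝ) : ℂ) * I)‖
        ≤ ∑ j ∈ Rest, ‖conj (c j) * ((GG pts i0 j : ℝ) : ℂ) ^ (k + l) *
            Complex.exp ((ξ : ℂ) * ((uu pts j : ℝ) : ℂ) * I)‖ := norm_sum_le _ _
      _ = ∑ j ∈ Rest, ‖c j‖ * |GG pts i0 j| ^ (k + l) := by
          refine Finset.sum_congr rfl fun j hj => ?_
          rw [norm_mul, norm_mul, RCLike.norm_conj, norm_pow, Complex.norm_real,
            Real.norm_eq_abs]
          have hone : ‖Complex.exp ((ξ : ℂ) * ((uu pts j : ℝ) : ℂ) * I)‖ = 1 := by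
            rw [Complex.norm_exp]
            simp
          rw [hone, mul_one]
      _ < ε := hM (k + l) (by omega)
  set T : Finset (Fin n) := P ∪ Nn with hT
  set χ : Fin n → (Multiplicative (ℤ × ℤ) →* ℂ) :=
    fun j => chiHom (e1 j) (e2 j) (he1z j) (he2z j) with hχ
  have hmemP : ∀ j ∈ T, j ∉ Nn → yy pts j = yy pts i0 := by
    intro j hj hjN
    rw [hT] at hj
    have hjP : j ∈ P := (Finset.mem_union.mp hj).resolve_right hjN
    rw [hP] at hjP
    exact (Finset.mem_filter.mp hjP).2
  have hmemN : ∀ j ∈ Nn, yy pts j = -yy pts i0 := by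
    intro j hj
    rw [hNn] at hj
    exact (Finset.mem_filter.mp hj).2
  have hdist : ∀ j ∈ T, ∀ j' ∈ T, χ j = χ j' → j = j' := by
    intro j hj j' hj' hjj
    have hE1 : e1 j = e1 j' := by
      have := congrArg (fun φ : Multiplicative (ℤ × ℤ) →* ℂ =>
        φ (Multiplicative.ofAdd ((1:ℤ), (0:ℤ)))) hjj
      simpa [hχ, chiHom_apply] using this
    have hE2 : e2 j = e2 j' := by
      have := congrArg (fun φ : Multiplicative (ℤ × ℤ) →* ℂ =>
        φ (Multiplicative.ofAdd ((0:ℤ), (1:ℤ)))) hjj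
      simpa [hχ, chiHom_apply] using this
    rw [he1] at hE1
    rw [he2] at hE2
    simp only at hE1 hE2
    by_cases hs : (j ∈ Nn) ↔ (j' ∈ Nn)
    · -- same side
      have hexp1 : Complex.exp (lam * uu pts j * I) = Complex.exp (lam * uu pts j' * I) := by
        by_cases hjN : j ∈ Nn
        · have hj'N : j' ∈ Nn := hs.mp hjN
          rw [if_pos hjN, if_pos hj'N] at hE1
          exact mul_left_cancel₀ (by norm_num) hE1
        · have hj'N : j' ∉ Nn := fun h => hjN (hs.mpr h)
          rw [if_neg hjN, if_neg hj'N, one_mul, one_mul] at hE1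
          exact hE1
      have hexp2 : Complex.exp (θ * uu pts j * I) = Complex.exp (θ * uu pts j' * I) := by
        by_cases hjN : j ∈ Nn
        · have hj'N : j' ∈ Nn := hs.mp hjN
          rw [if_pos hjN, if_pos hj'N] at hE2
          exact mul_left_cancel₀ (by norm_num) hE2
        · have hj'N : j' ∉ Nn := fun h => hjN (hs.mpr h)
          rw [if_neg hjN, if_neg hj'N, one_mul, one_mul] at hE2
          exact hE2
      obtain ⟨s, hsint⟩ := Complex.exp_eq_exp_iff_exists_int.mp hexp1
      obtain ⟨t, htint⟩ := Complex.exp_eq_exp_iff_exists_int.mp hexp2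
      have h1 : lam * (uu pts j - uu pts j') = (s : ℝ) * (2 * Real.pi) := by
        have hc : ((lam * (uu pts j - uu pts j') : ℝ) : ℂ)
            = (((s : ℝ) * (2 * Real.pi) : ℝ) : ℂ) := by
          apply mul_right_cancel₀ Complex.I_ne_zero
          push_cast
          linear_combination hsint
        exact_mod_cast hc
      have h2 : θ * (uu pts j - uu pts j') = (t : ℝ) * (2 * Real.pi) := by
        have hc : ((θ * (uu pts j - uu pts j') : ℝ) : ℂ)
            = (((t : ℝ) * (2 * Real.pi) : ℝ) : ℂ) := by
          apply mul_right_cancel₀ Complex.I_ne_zero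
          push_cast
          linear_combination htint
        exact_mod_cast hc
      by_cases hd : uu pts j - uu pts j' = 0
      · have huj : uu pts j = uu pts j' := by linarith
        have hyj : yy pts j = yy pts j' := by
          by_cases hjN : j ∈ Nn
          · have hj'N : j' ∈ Nn := hs.mp hjN
            rw [hmemN j hjN, hmemN j' hj'N]
          · have hj'N : j' ∉ Nn := fun h => hjN (hs.mpr h)
            rw [hmemP j hj hjN, hmemP j' hj' hj'N]
        apply hinj
        exact Prod.ext huj (Subtype.coe_injective hyj)
      · exfalso
        have ht0 : t ≠ 0 := by
          intro h
          rw [h] at h2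
          simp at h2
          rcases h2 with h' | h'
          · exact hθ h'
          · exact hd h'
        exact irr_contra hirr hθ
          (mul_ne_zero two_ne_zero Real.pi_ne_zero) ht0 h1 h2
    · -- mixed
      exfalso
      have hmix : ∃ d : ℝ, d ≠ 0 ∧ (∃ s : ℤ, lam * d = ((2*s+1 : ℤ) : ℝ) * Real.pi)
          ∧ (∃ t : ℤ, θ * d = ((2*t+1 : ℤ) : ℝ) * Real.pi) := by
        -- orient: get exp(lam * u_A * I) = - exp(lam * u_B * I) with d := u_A - u_B
        have key : ∀ (x x' : ℝ), Complex.exp ((x : ℂ) * I) = -Complex.exp ((x' : ℂ) * I) →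
            ∃ s : ℤ, x - x' = ((2*s+1 : ℤ) : ℝ) * Real.pi := by
          intro x x' hxx
          have : Complex.exp ((x : ℂ) * I) = Complex.exp ((x' : ℂ) * I + Real.pi * I) := by
            rw [Complex.exp_add, Complex.exp_pi_mul_I]
            rw [hxx]
            ring
          obtain ⟨s, hs'⟩ := Complex.exp_eq_exp_iff_exists_int.mp this
          refine ⟨s, ?_⟩
          have hc : ((x - x' : ℝ) : ℂ) = ((((2*s+1 : ℤ) : ℝ) * Real.pi : ℝ) : ℂ) := by
            apply mul_right_cancel₀ Complex.I_ne_zero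
            push_cast
            linear_combination hs'
          exact_mod_cast hc
        by_cases hjN : j ∈ Nn
        · have hj'N : j' ∉ Nn := fun h => hs (⟨fun _ => h, fun _ => hjN⟩)
          rw [if_pos hjN, if_neg hj'N, one_mul] at hE1 hE2
          refine ⟨uu pts j' - uu pts j, ?_, ?_, ?_⟩
          · intro h
            have huu : uu pts j = uu pts j' := by linarith
            rw [huu] at hE1
            exact Complex.exp_ne_zero (lam * uu pts j' * I)
              (by linear_combination (-(1:ℂ)/2) * hE1)
          · obtain ⟨s, hs'⟩ := key (lam * uu pts j') (lam * uu pts j) (by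
              rw [show ((lam * uu pts j' : ℝ) : ℂ) = (lam : ℂ) * ((uu pts j' : ℝ) : ℂ) by push_cast; ring,
                show ((lam * uu pts j : ℝ) : ℂ) = (lam : ℂ) * ((uu pts j : ℝ) : ℂ) by push_cast; ring]
              rw [← hE1]; ring)
            exact ⟨s, by rw [← hs']; ring⟩
          · obtain ⟨t, ht'⟩ := key (θ * uu pts j') (θ * uu pts j) (by
              rw [show ((θ * uu pts j' : ℝ) : ℂ) = (θ : ℂ) * ((uu pts j' : ℝ) : ℂ) by push_cast; ring,
                show ((θ * uu pts j : ℝ) : ℂ) = (θ : ℂ) * ((uu pts j : ℝ) : ℂ) by push_cast; ring]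
              rw [← hE2]; ring)
            exact ⟨t, by rw [← ht']; ring⟩
        · have hj'N : j' ∈ Nn := by
            by_contra hj'N
            exact hs ⟨fun h => absurd h hjN, fun h => absurd h hj'N⟩
          rw [if_neg hjN, if_pos hj'N, one_mul] at hE1 hE2
          refine ⟨uu pts j - uu pts j', ?_, ?_, ?_⟩
          · intro h
            have huu : uu pts j = uu pts j' := by linarith
            rw [huu] at hE1
            exact Complex.exp_ne_zero (lam * uu pts j' * I)
              (by linear_combination ((1:ℂ)/2) * hE1)
          · obtain ⟨s, hs'⟩ := key (lam * uu pts j) (lam * uu pts j') (by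
              rw [show ((lam * uu pts j : ℝ) : ℂ) = (lam : ℂ) * ((uu pts j : ℝ) : ℂ) by push_cast; ring,
                show ((lam * uu pts j' : ℝ) : ℂ) = (lam : ℂ) * ((uu pts j' : ℝ) : ℂ) by push_cast; ring]
              rw [hE1]; ring)
            exact ⟨s, by rw [← hs']; ring⟩
          · obtain ⟨t, ht'⟩ := key (θ * uu pts j) (θ * uu pts j') (by
              rw [show ((θ * uu pts j : ℝ) : ℂ) = (θ : ℂ) * ((uu pts j : ℝ) : ℂ) by push_cast; ring,
                show ((θ * uu pts j' : ℝ) : ℂ) = (θ : ℂ) * ((uu pts j' : ℝ) : ℂ) by push_cast; ring]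
              rw [hE2]; ring)
            exact ⟨t, by rw [← ht']; ring⟩
      obtain ⟨d, hd0, ⟨s, hs'⟩, ⟨t, ht'⟩⟩ := hmix
      have ht0 : (2*t+1 : ℤ) ≠ 0 := by omega
      exact irr_contra hirr hθ Real.pi_ne_zero ht0 hs' ht'
  have hzero : ∀ j ∈ T, conj (c j) = 0 := by
    have hinj' : Function.Injective (fun j : {j // j ∈ T} => χ j.1) := by
      intro j j' h
      exact Subtype.ext (hdist j.1 j.2 j'.1 j'.2 h)
    have key : ∀ p q : ℤ, ∑ j : {j // j ∈ T},
        conj (c j.1) * (χ j.1) (Multiplicative.ofAdd (p, q)) = 0 := by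
      intro p q
      have hc1 := C1 p q
      rw [← Finset.sum_coe_sort T (fun j => conj (c j) * (e1 j ^ p * e2 j ^ q))] at hc1
      rw [← hc1]
      refine Finset.sum_congr rfl fun j _ => ?_
      rw [hχ]
      rfl
    have hDD := dedekind (fun j : {j // j ∈ T} => χ j.1) hinj'
      (fun j => conj (c j.1)) key
    intro j hj
    exact hDD ⟨j, hj⟩
  have hi0 : i0 ∈ T := by
    rw [hT, hP]
    exact Finset.mem_union_left _ (Finset.mem_filter.mpr ⟨Finset.mem_univ _, rfl⟩)
  have := hzero i0 hi0
  have hc0 : c i0 = 0 := by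
    have := congrArg conj this
    simpa using this
  exact hc0


end SPDAux

theorem product_spd_on_time_cross_sphere
    (a b : ℕ → ℝ) (ha : ∀ k, 0 ≤ a k) (hb : ∀ l, 0 ≤ b l)
    (hsa : Summable a) (hsb : Summable b)
    (hae : ({k : ℕ | 0 < a k} ∩ {n : ℕ | Even n}).Infinite)
    (hao : ({k : ℕ | 0 < a k} ∩ {n : ℕ | Odd n}).Infinite)
    (hbe : ({l : ℕ | 0 < b l} ∩ {n : ℕ | Even n}).Infinite)
    (hbo : ({l : ℕ | 0 < b l} ∩ {n : ℕ | Odd n}).Infinite)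
    (f g : ℝ → ℝ)
    (hf : ∀ t ∈ Set.Icc (-1 : ℝ) 1, f t = ∑' k : ℕ, a k * t ^ k)
    (hg : ∀ t ∈ Set.Icc (-1 : ℝ) 1, g t = ∑' l : ℕ, b l * t ^ l)
    (lam θ : ℝ) (hlam : lam ≠ 0) (hθ : θ ≠ 0) (hirr : Irrational (lam / θ)) :
    IsStrictPosDefKernelC
      (fun p q : ℝ × Metric.sphere (0 : EllTwo) 1 =>
        ((f (⟪(p.2 : EllTwo), (q.2 : EllTwo)⟫ * Real.cos (lam * (p.1 - q.1))) *
          g (⟪(p.2 : EllTwo), (q.2 : EllTwo)⟫ * Real.cos (θ * (p.1 - q.1))) : ℝ) : ℂ)) := by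
  classical
  constructor
  · intro n x c
    obtain ⟨w, hw0, hwsum, hS, -⟩ :=
      SPDAux.main_aux a b ha hb hsa hsb f g hf hg lam θ n x c
    have hS' : (∑ i, ∑ j, c i * conj (c j) *
        ((fun p q : ℝ × Metric.sphere (0 : EllTwo) 1 =>
          ((f (⟪(p.2 : EllTwo), (q.2 : EllTwo)⟫ * Real.cos (lam * (p.1 - q.1))) *
            g (⟪(p.2 : EllTwo), (q.2 : EllTwo)⟫ * Real.cos (θ * (p.1 - q.1))) : ℝ) : ℂ))
          (x i) (x j)))
        = (((∑' kl : ℕ × ℕ, w kl) : ℝ) : ℂ) := hS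
    rw [hS']
    exact ⟨by rw [Complex.ofReal_re]; exact tsum_nonneg hw0, Complex.ofReal_im _⟩
  · intro n x c hinjx hc
    obtain ⟨w, hw0, hwsum, hS, hvanc⟩ :=
      SPDAux.main_aux a b ha hb hsa hsb f g hf hg lam θ n x c
    have hS' : (∑ i, ∑ j, c i * conj (c j) *
        ((fun p q : ℝ × Metric.sphere (0 : EllTwo) 1 =>
          ((f (⟪(p.2 : EllTwo), (q.2 : EllTwo)⟫ * Real.cos (lam * (p.1 - q.1))) *
            g (⟪(p.2 : EllTwo), (q.2 : EllTwo)⟫ * Real.cos (θ * (p.1 - q.1))) : ℝ) : ℂ))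
          (x i) (x j)))
        = (((∑' kl : ℕ × ℕ, w kl) : ℝ) : ℂ) := hS
    rw [hS', Complex.ofReal_re]
    rcases (tsum_nonneg hw0 : (0 : ℝ) ≤ ∑' kl, w kl).lt_or_eq with h | h
    · exact h
    · exfalso
      apply hc
      have hwall : ∀ kl : ℕ × ℕ, w kl = 0 := by
        intro kl
        have hle : w kl ≤ ∑' kl, w kl := Summable.le_tsum hwsum kl (fun _ _ => hw0 _)
        exact le_antisymm (by rw [← h] at hle; exact hle) (hw0 kl)
      refine SPDAux.strict_aux lam θ hθ hirr a b hae hao hbe hbo n x c hinjx ?_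
      intro k l hak hbl p q hp hq hdp hdq i
      exact hvanc k l hak hbl (hwall (k, l)) p q hp hq hdp hdq i

end
end

section
/- Let λ, θ be nonzero real numbers with λ/θ irrational, and let Δ be a nonzero real number. Then cos(λΔ)^k · cos(θΔ)^l tends to 0 as min(k,l) → ∞; that is, for every ε > 0 there exists N such that |cos(λΔ)^k cos(θΔ)^l| < ε whenever k ≥ N and l ≥ N. -/
lemma abs_cos_lt_one_of_ne {x : ℝ} (h : ¬ ∃ n : ℤ, (n : ℝ) * Real.pi = x) :
    |Real.cos x| < 1 := by
  rcases lt_or_eq_of_le (Real.abs_cos_le_one x) with h1 | h1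
  · exact h1
  · exfalso
    apply h
    rw [← Real.sin_eq_zero_iff]
    have h2 : Real.sin x ^ 2 = 0 := by
      have := Real.sin_sq_add_cos_sq x
      have : Real.cos x ^ 2 = 1 := by
        rw [← sq_abs, h1]; norm_num
      nlinarith [Real.sin_sq_add_cos_sq x]
    exact pow_eq_zero_iff (n := 2) (by norm_num) |>.mp h2

theorem cos_pow_mul_cos_pow_tendsto_zero
    (lam θ Δ : ℝ) (hlam : lam ≠ 0) (hθ : θ ≠ 0)
    (hirr : Irrational (lam / θ)) (hΔ : Δ ≠ 0) :
    ∀ ε > 0, ∃ N : ℕ, ∀ k l : ℕ, N ≤ k → N ≤ l →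
      |Real.cos (lam * Δ) ^ k * Real.cos (θ * Δ) ^ l| < ε := by
  intro ε hε
  set a := Real.cos (lam * Δ) with ha
  set b := Real.cos (θ * Δ) with hb
  have hclaim : |a| < 1 ∨ |b| < 1 := by
    by_contra hcon
    push_neg at hcon
    obtain ⟨h1, h2⟩ := hcon
    have ha1 : |a| = 1 := le_antisymm (Real.abs_cos_le_one _) h1
    have hb1 : |b| = 1 := le_antisymm (Real.abs_cos_le_one _) h2
    -- get integer multiples of π
    have hma : ∃ n : ℤ, (n : ℝ) * Real.pi = lam * Δ := by
      by_contra h; exact absurd ha1 (ne_of_lt (abs_cos_lt_one_of_ne h))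
    have hmb : ∃ n : ℤ, (n : ℝ) * Real.pi = θ * Δ := by
      by_contra h; exact absurd hb1 (ne_of_lt (abs_cos_lt_one_of_ne h))
    obtain ⟨m, hm⟩ := hma
    obtain ⟨n, hn⟩ := hmb
    have hπ := Real.pi_ne_zero
    have hn0 : (n : ℝ) ≠ 0 := by
      intro h0
      rw [h0, zero_mul] at hn
      exact (mul_ne_zero hθ hΔ) hn.symm
    have : lam / θ = (m : ℝ) / (n : ℝ) := by
      have hθΔ : θ * Δ ≠ 0 := mul_ne_zero hθ hΔ
      field_simp
      have : lam * Δ * (n : ℝ) = (m : ℝ) * (θ * Δ) := by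
        rw [← hm, ← hn]; ring
      have hΔ' : Δ ≠ 0 := hΔ
      field_simp at this ⊢
      exact mul_right_cancel₀ hΔ (by linear_combination Δ * this)
    apply hirr
    exact ⟨(m : ℚ) / (n : ℚ), by push_cast [this]; ring⟩
  have key : ∀ c d : ℝ, |c| < 1 → |d| ≤ 1 →
      ∃ N : ℕ, ∀ k l : ℕ, N ≤ k → N ≤ l → |c ^ k * d ^ l| < ε := by
    intro c d hc hd
    obtain ⟨N, hN⟩ := exists_pow_lt_of_lt_one hε hc
    refine ⟨N, fun k l hk hl => ?_⟩
    calc |c ^ k * d ^ l| = |c| ^ k * |d| ^ l := by rw [abs_mul, abs_pow, abs_pow]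
      _ ≤ |c| ^ N * 1 := by
          apply mul_le_mul (pow_le_pow_of_le_one (abs_nonneg _) hc.le hk)
            (pow_le_one₀ (abs_nonneg _) hd) (pow_nonneg (abs_nonneg _) _)
            (pow_nonneg (abs_nonneg _) _)
      _ = |c| ^ N := mul_one _
      _ < ε := hN
  rcases hclaim with h | h
  · exact key a b h (Real.abs_cos_le_one _)
  · obtain ⟨N, hN⟩ := key b a h (Real.abs_cos_le_one _)
    exact ⟨N, fun k l hk hl => by rw [mul_comm]; exact hN l k hl hk⟩
end

section
/- Let a, b : ℕ → ℝ be sequences with a_k ≥ 0 and b_l ≥ 0 for all k, l, and with Σ_{k=0}^∞ a_k < ∞ and Σ_{l=0}^∞ b_l < ∞. Define f(t) = Σ_{k=0}^∞ a_k t^k and g(t) = Σ_{l=0}^∞ b_l t^l for t ∈ [-1,1], and let α, β ≥ 0 be real numbers. Then the kernel (x,y) ∈ S^∞ × S^∞ ↦ α f(⟨x,y⟩) + β g(⟨x,y⟩) is strictly positive definite on S^∞ if, and only if, the set {k : α·a_k > 0} ∪ {l : β·b_l > 0} contains infinitely many even integers and infinitely many odd integers. -/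
open scoped BigOperators RealInnerProductSpace
open Filter

noncomputable section

section AuxLemmas

lemma auxGramPow {ι : Type*} [Fintype ι] {E : Type*} [NormedAddCommGroup E]
    [InnerProductSpace ℝ E]
    (x : ι → E) (k : ℕ) (c : ι → ℝ) :
    0 ≤ ∑ i, ∑ j, c i * c j * (⟪x i, x j⟫) ^ k := by
  have hpsd : (Matrix.of fun i j => (⟪x i, x j⟫ : ℝ)).PosSemidef := by
    refine Matrix.PosSemidef.of_dotProduct_mulVec_nonneg ?_ ?_
    · ext i j
      simp [Matrix.conjTranspose_apply, real_inner_comm]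
    · intro v
      have h2 : dotProduct (star v) ((Matrix.of fun i j => (⟪x i, x j⟫ : ℝ)).mulVec v)
          = ⟪(∑ i, v i • x i), (∑ j, v j • x j)⟫ := by
        simp only [dotProduct, Matrix.mulVec, Matrix.of_apply, star_trivial,
          sum_inner, inner_sum, real_inner_smul_left, real_inner_smul_right, Finset.mul_sum]
        exact Finset.sum_congr rfl fun i _ => Finset.sum_congr rfl fun j _ => by
          rw [real_inner_comm]; ring
      rw [h2]
      exact real_inner_self_nonneg
  obtain ⟨m, B, hB0⟩ := Matrix.posSemidef_iff_eq_sum_vecMulVec.mp hpsd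
  have hB : ∀ i j, (⟪x i, x j⟫ : ℝ) = ∑ r, B r i * B r j := by
    intro i j
    have := congrFun (congrFun hB0 i) j
    simpa [Matrix.sum_apply, Matrix.vecMulVec_apply] using this
  clear hB0 hpsd
  induction k generalizing c with
  | zero =>
      have h0 : ∑ i, ∑ j, c i * c j * (⟪x i, x j⟫) ^ 0 = (∑ i, c i) * (∑ j, c j) := by
        rw [Finset.sum_mul_sum]
        simp
      rw [h0]
      exact mul_self_nonneg _
  | succ k ih =>
      have key : ∑ i, ∑ j, c i * c j * (⟪x i, x j⟫) ^ (k + 1)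
          = ∑ r, ∑ i, ∑ j, (c i * B r i) * (c j * B r j) * (⟪x i, x j⟫) ^ k := by
        calc ∑ i, ∑ j, c i * c j * (⟪x i, x j⟫) ^ (k + 1)
            = ∑ i, ∑ j, ∑ r, (c i * B r i) * (c j * B r j) * (⟪x i, x j⟫) ^ k := by
              refine Finset.sum_congr rfl fun i _ => Finset.sum_congr rfl fun j _ => ?_
              rw [pow_succ]
              nth_rewrite 2 [hB i j]
              rw [Finset.mul_sum, Finset.mul_sum]
              refine Finset.sum_congr rfl fun r _ => by ring
          _ = ∑ i, ∑ r, ∑ j, (c i * B r i) * (c j * B r j) * (⟪x i, x j⟫) ^ k :=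
              Finset.sum_congr rfl fun i _ => Finset.sum_comm
          _ = ∑ r, ∑ i, ∑ j, (c i * B r i) * (c j * B r j) * (⟪x i, x j⟫) ^ k :=
              Finset.sum_comm
      rw [key]
      exact Finset.sum_nonneg fun r _ => ih _

lemma auxSummable (w : ℕ → ℝ) (hw : ∀ k, 0 ≤ w k) (hsw : Summable w)
    {t : ℝ} (ht : |t| ≤ 1) : Summable (fun k => w k * t ^ k) := by
  refine Summable.of_norm_bounded hsw fun k => ?_
  rw [norm_mul, norm_pow]
  calc ‖w k‖ * ‖t‖ ^ k ≤ ‖w k‖ * 1 := by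
        refine mul_le_mul_of_nonneg_left ?_ (norm_nonneg _)
        exact pow_le_one₀ (norm_nonneg t) ht
    _ = w k := by rw [mul_one, Real.norm_eq_abs, abs_of_nonneg (hw k)]

lemma auxInnerMem (x y : Metric.sphere (0 : EllTwo) 1) :
    |(⟪(x : EllTwo), (y : EllTwo)⟫ : ℝ)| ≤ 1 := by
  have hx : ‖(x : EllTwo)‖ = 1 := by
    simpa using mem_sphere_zero_iff_norm.mp x.2
  have hy : ‖(y : EllTwo)‖ = 1 := by
    simpa using mem_sphere_zero_iff_norm.mp y.2
  calc |(⟪(x : EllTwo), (y : EllTwo)⟫ : ℝ)| ≤ ‖(x : EllTwo)‖ * ‖(y : EllTwo)‖ :=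
        abs_real_inner_le_norm _ _
    _ = 1 := by rw [hx, hy, mul_one]

lemma auxFormEq (w : ℕ → ℝ) (hw : ∀ k, 0 ≤ w k) (hsw : Summable w)
    {ι : Type*} [Fintype ι] (x : ι → Metric.sphere (0 : EllTwo) 1) (c : ι → ℝ) :
    ∑ i, ∑ j, c i * c j * (∑' k, w k * (⟪(x i : EllTwo), (x j : EllTwo)⟫ : ℝ) ^ k)
      = ∑' k, w k * ∑ i, ∑ j, c i * c j * (⟪(x i : EllTwo), (x j : EllTwo)⟫ : ℝ) ^ k := by
  set G : ι → ι → ℝ := fun i j => ⟪(x i : EllTwo), (x j : EllTwo)⟫ with hG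
  have hsum : ∀ i j : ι, Summable (fun k => w k * G i j ^ k) :=
    fun i j => auxSummable w hw hsw (auxInnerMem (x i) (x j))
  have hsum2 : ∀ i j : ι, Summable (fun k => c i * c j * (w k * G i j ^ k)) :=
    fun i j => (hsum i j).mul_left _
  calc ∑ i, ∑ j, c i * c j * (∑' k, w k * G i j ^ k)
      = ∑ i, ∑ j, ∑' k, c i * c j * (w k * G i j ^ k) := by
        refine Finset.sum_congr rfl fun i _ => Finset.sum_congr rfl fun j _ => ?_
        rw [tsum_mul_left]
    _ = ∑ i, ∑' k, ∑ j, c i * c j * (w k * G i j ^ k) := by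
        refine Finset.sum_congr rfl fun i _ => ?_
        exact (Summable.tsum_finsetSum (fun j _ => hsum2 i j)).symm
    _ = ∑' k, ∑ i, ∑ j, c i * c j * (w k * G i j ^ k) := by
        refine (Summable.tsum_finsetSum (fun i _ => ?_)).symm
        exact summable_sum fun j _ => hsum2 i j
    _ = ∑' k, w k * ∑ i, ∑ j, c i * c j * G i j ^ k := by
        refine tsum_congr fun k => ?_
        rw [Finset.mul_sum]
        refine Finset.sum_congr rfl fun i _ => ?_
        rw [Finset.mul_sum]
        refine Finset.sum_congr rfl fun j _ => by ring

lemma auxKernelEq (a b : ℕ → ℝ) (ha : ∀ k, 0 ≤ a k) (hb : ∀ l, 0 ≤ b l)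
    (hsa : Summable a) (hsb : Summable b) (α β : ℝ)
    (f g : ℝ → ℝ)
    (hf : ∀ t ∈ Set.Icc (-1 : ℝ) 1, f t = ∑' k : ℕ, a k * t ^ k)
    (hg : ∀ t ∈ Set.Icc (-1 : ℝ) 1, g t = ∑' l : ℕ, b l * t ^ l)
    {t : ℝ} (ht : t ∈ Set.Icc (-1 : ℝ) 1) :
    α * f t + β * g t = ∑' k, (α * a k + β * b k) * t ^ k := by
  have ht' : |t| ≤ 1 := abs_le.mpr ⟨ht.1, ht.2⟩
  have hA := auxSummable a ha hsa ht'
  have hB := auxSummable b hb hsb ht'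
  rw [hf t ht, hg t ht, ← tsum_mul_left, ← tsum_mul_left,
    ← Summable.tsum_add (hA.mul_left α) (hB.mul_left β)]
  exact tsum_congr fun k => by ring

lemma auxKernelVec {ι : Type*} [Fintype ι] {p : ℕ} (h : Fintype.card ι < p)
    (v : ι → Fin p → ℝ) :
    ∃ d : Fin p → ℝ, d ≠ 0 ∧ ∀ r, ∑ i, d i * v r i = 0 := by
  have hni : ¬ Function.Injective ((Matrix.of v).mulVecLin) := by
    intro hinj
    have h1 := LinearMap.finrank_le_finrank_of_injective hinj
    rw [Module.finrank_pi, Module.finrank_pi] at h1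
    rw [Fintype.card_fin] at h1
    omega
  obtain ⟨u1, u2, hequ, hne⟩ := Function.not_injective_iff.mp hni
  refine ⟨u1 - u2, sub_ne_zero.mpr hne, fun r => ?_⟩
  have h2 : (Matrix.of v).mulVecLin (u1 - u2) = 0 := by rw [map_sub, hequ, sub_self]
  have h3 := congrFun h2 r
  simp only [Matrix.mulVecLin_apply, Matrix.mulVec, dotProduct, Matrix.of_apply,
    Pi.zero_apply] at h3
  rw [← h3]
  exact Finset.sum_congr rfl fun i _ => by ring
lemma auxStrictPos (w : ℕ → ℝ) (hw : ∀ k, 0 ≤ w k) (hsw : Summable w)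
    (he : ({k | 0 < w k} ∩ {m | Even m}).Infinite)
    (ho : ({k | 0 < w k} ∩ {m | Odd m}).Infinite)
    {n : ℕ} (x : Fin n → Metric.sphere (0 : EllTwo) 1) (c : Fin n → ℝ)
    (hinj : Function.Injective x) (hc : c ≠ 0) :
    0 < ∑' k, w k * ∑ i, ∑ j, c i * c j * (⟪(x i : EllTwo), (x j : EllTwo)⟫ : ℝ) ^ k := by
  set G : Fin n → Fin n → ℝ := fun i j => ⟪(x i : EllTwo), (x j : EllTwo)⟫ with hGdef
  set Q : ℕ → ℝ := fun k => ∑ i, ∑ j, c i * c j * G i j ^ k with hQdef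
  have hQ0 : ∀ k, 0 ≤ Q k := fun k => auxGramPow (fun i => (x i : EllTwo)) k c
  have habs : ∀ i j, |G i j| ≤ 1 := fun i j => auxInnerMem (x i) (x j)
  -- summability of the series
  have hQle : ∀ k, Q k ≤ ∑ i, ∑ j, |c i| * |c j| := by
    intro k
    refine Finset.sum_le_sum fun i _ => Finset.sum_le_sum fun j _ => ?_
    calc c i * c j * G i j ^ k ≤ |c i * c j * G i j ^ k| := le_abs_self _
      _ = |c i| * |c j| * (|G i j| ^ k) := by
          rw [abs_mul, abs_mul, abs_pow]
      _ ≤ |c i| * |c j| * 1 := by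
          refine mul_le_mul_of_nonneg_left ?_ (by positivity)
          exact pow_le_one₀ (abs_nonneg _) (habs i j)
      _ = |c i| * |c j| := mul_one _
  have hsQ : Summable (fun k => w k * Q k) := by
    refine Summable.of_nonneg_of_le (fun k => mul_nonneg (hw k) (hQ0 k))
      (fun k => mul_le_mul_of_nonneg_left (hQle k) (hw k))
      (hsw.mul_right _)
  -- suffices to find a positive term
  have hex : ∃ k, 0 < w k * Q k := by
    by_contra hnone
    push_neg at hnone
    have hzero : ∀ k, 0 < w k → Q k = 0 := by
      intro k hk
      have h1 : w k * Q k = 0 :=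
        le_antisymm (hnone k) (mul_nonneg (hw k) (hQ0 k))
      exact (mul_eq_zero.mp h1).resolve_left (ne_of_gt hk)
    -- enumerate even and odd indices
    have he' : (setOf fun k => k ∈ {k | 0 < w k} ∩ {m | Even m}).Infinite := he
    have ho' : (setOf fun k => k ∈ {k | 0 < w k} ∩ {m | Odd m}).Infinite := ho
    set eN : ℕ → ℕ := Nat.nth (fun k => k ∈ {k | 0 < w k} ∩ {m | Even m}) with heN
    set oN : ℕ → ℕ := Nat.nth (fun k => k ∈ {k | 0 < w k} ∩ {m | Odd m}) with hoN
    have heMem : ∀ m, eN m ∈ {k | 0 < w k} ∩ {m | Even m} := Nat.nth_mem_of_infinite he'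
    have hoMem : ∀ m, oN m ∈ {k | 0 < w k} ∩ {m | Odd m} := Nat.nth_mem_of_infinite ho'
    have heGe : ∀ m, m ≤ eN m := fun m => (Nat.nth_strictMono he').le_apply
    have hoGe : ∀ m, m ≤ oN m := fun m => (Nat.nth_strictMono ho').le_apply
    -- pointwise limits
    set E : Fin n → Fin n → ℝ := fun i j => if |G i j| = 1 then 1 else 0 with hEdef
    set O : Fin n → Fin n → ℝ := fun i j => if G i j = 1 then 1 else if G i j = -1 then -1 else 0
      with hOdef
    have hlt : ∀ i j, |G i j| ≠ 1 → |G i j| < 1 := fun i j h => lt_of_le_of_ne (habs i j) h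
    have htende : ∀ i j, Tendsto (fun m => G i j ^ eN m) atTop (nhds (E i j)) := by
      intro i j
      by_cases h1 : |G i j| = 1
      · have hE : E i j = 1 := by simp only [hEdef]; rw [if_pos h1]
        rw [hE]
        rcases abs_eq (by norm_num : (0:ℝ) ≤ 1) |>.mp h1 with h | h
        · refine tendsto_const_nhds.congr fun m => ?_
          rw [h, one_pow]
        · refine tendsto_const_nhds.congr fun m => ?_
          rw [h, (heMem m).2.neg_one_pow]
      · have hE : E i j = 0 := by simp only [hEdef]; rw [if_neg h1]
        rw [hE]
        refine squeeze_zero_norm (a := fun m => |G i j| ^ m) (fun m => ?_) ?_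
        · rw [norm_pow, Real.norm_eq_abs]
          exact pow_le_pow_of_le_one (abs_nonneg _) (habs i j) (heGe m)
        · exact tendsto_pow_atTop_nhds_zero_of_lt_one (abs_nonneg _) (hlt i j h1)
    have htendo : ∀ i j, Tendsto (fun m => G i j ^ oN m) atTop (nhds (O i j)) := by
      intro i j
      by_cases h1 : G i j = 1
      · have hO : O i j = 1 := by simp only [hOdef]; rw [if_pos h1]
        rw [hO]
        refine tendsto_const_nhds.congr fun m => by rw [h1, one_pow]
      · by_cases h2 : G i j = -1
        · have hO : O i j = -1 := by simp only [hOdef]; rw [if_neg h1, if_pos h2]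
          rw [hO]
          refine tendsto_const_nhds.congr fun m => ?_
          rw [h2, (hoMem m).2.neg_one_pow]
        · have h3 : |G i j| ≠ 1 := by
            intro hcon
            rcases (abs_eq (by norm_num : (0:ℝ) ≤ 1)).mp hcon with h | h
            exacts [h1 h, h2 h]
          have hO : O i j = 0 := by simp only [hOdef]; rw [if_neg h1, if_neg h2]
          rw [hO]
          refine squeeze_zero_norm (a := fun m => |G i j| ^ m) (fun m => ?_) ?_
          · rw [norm_pow, Real.norm_eq_abs]
            exact pow_le_pow_of_le_one (abs_nonneg _) (habs i j) (hoGe m)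
          · exact tendsto_pow_atTop_nhds_zero_of_lt_one (abs_nonneg _) (hlt i j h3)
    -- limits of the (zero) sequences
    have hQe : ∀ m, Q (eN m) = 0 := fun m => hzero _ (heMem m).1
    have hQo : ∀ m, Q (oN m) = 0 := fun m => hzero _ (hoMem m).1
    have hLE : (∑ i, ∑ j, c i * c j * E i j) = 0 := by
      have h1 : Tendsto (fun m => Q (eN m)) atTop (nhds (∑ i, ∑ j, c i * c j * E i j)) := by
        refine tendsto_finset_sum _ fun i _ => tendsto_finset_sum _ fun j _ => ?_
        exact (htende i j).const_mul _
      have h2 : Tendsto (fun m => Q (eN m)) atTop (nhds 0) := by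
        simp only [hQe]; exact tendsto_const_nhds
      exact tendsto_nhds_unique h1 h2
    have hLO : (∑ i, ∑ j, c i * c j * O i j) = 0 := by
      have h1 : Tendsto (fun m => Q (oN m)) atTop (nhds (∑ i, ∑ j, c i * c j * O i j)) := by
        refine tendsto_finset_sum _ fun i _ => tendsto_finset_sum _ fun j _ => ?_
        exact (htendo i j).const_mul _
      have h2 : Tendsto (fun m => Q (oN m)) atTop (nhds 0) := by
        simp only [hQo]; exact tendsto_const_nhds
      exact tendsto_nhds_unique h1 h2
    -- combine
    have hGone : ∀ i j, G i j = 1 ↔ i = j := by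
      intro i j
      have hxi : ‖(x i : EllTwo)‖ = 1 := by simpa using mem_sphere_zero_iff_norm.mp (x i).2
      have hxj : ‖(x j : EllTwo)‖ = 1 := by simpa using mem_sphere_zero_iff_norm.mp (x j).2
      constructor
      · intro h
        have h' : (⟪(x i : EllTwo), (x j : EllTwo)⟫ : ℝ) = 1 := h
        have := (inner_eq_one_iff_of_norm_eq_one (𝕜 := ℝ) hxi hxj).mp h'
        exact hinj (Subtype.coe_injective this)
      · intro h
        subst h
        show (⟪(x i : EllTwo), (x i : EllTwo)⟫ : ℝ) = 1
        rw [real_inner_self_eq_norm_sq, hxi]; norm_num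
    have hsum : (∑ i, ∑ j, c i * c j * E i j) + (∑ i, ∑ j, c i * c j * O i j)
        = ∑ i, 2 * c i ^ 2 := by
      rw [← Finset.sum_add_distrib]
      refine Finset.sum_congr rfl fun i _ => ?_
      rw [← Finset.sum_add_distrib]
      have hterm : ∀ j, c i * c j * E i j + c i * c j * O i j
          = if j = i then 2 * c i ^ 2 else 0 := by
        intro j
        by_cases h1 : G i j = 1
        · have hij : i = j := (hGone i j).mp h1
          subst hij
          have habs1 : |G i i| = 1 := by rw [h1]; norm_num
          have hE : E i i = 1 := by simp only [hEdef]; rw [if_pos habs1]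
          have hO : O i i = 1 := by simp only [hOdef]; rw [if_pos h1]
          rw [hE, hO, if_pos rfl]
          ring
        · have hji : ¬ (j = i) := fun h => h1 ((hGone i j).mpr h.symm)
          by_cases h2 : G i j = -1
          · have habs1 : |G i j| = 1 := by rw [h2]; norm_num
            have hE : E i j = 1 := by simp only [hEdef]; rw [if_pos habs1]
            have hO : O i j = -1 := by simp only [hOdef]; rw [if_neg h1, if_pos h2]
            rw [hE, hO, if_neg hji]
            ring
          · have habs1 : |G i j| ≠ 1 := by
              intro hcon
              rcases (abs_eq (by norm_num : (0:ℝ) ≤ 1)).mp hcon with h | h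
              exacts [h1 h, h2 h]
            have hE : E i j = 0 := by simp only [hEdef]; rw [if_neg habs1]
            have hO : O i j = 0 := by simp only [hOdef]; rw [if_neg h1, if_neg h2]
            rw [hE, hO, if_neg hji]
            ring
      rw [Finset.sum_congr rfl fun j _ => hterm j, Finset.sum_ite_eq' Finset.univ i]
      simp
    rw [hLE, hLO] at hsum
    have hpos : 0 < ∑ i, 2 * c i ^ 2 := by
      obtain ⟨i, hi⟩ := Function.ne_iff.mp hc
      have hsq : 0 < c i ^ 2 := lt_of_le_of_ne (sq_nonneg (c i)) (Ne.symm (pow_ne_zero 2 hi))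
      refine Finset.sum_pos' (fun i _ => by positivity) ⟨i, Finset.mem_univ i, ?_⟩
      exact mul_pos (by norm_num : (0:ℝ) < 2) hsq
    rw [← hsum] at hpos
    norm_num at hpos
  obtain ⟨k₀, hk₀⟩ := hex
  exact Summable.tsum_pos hsQ (fun k => mul_nonneg (hw k) (hQ0 k)) k₀ hk₀

lemma auxNotStrict (w : ℕ → ℝ) (hw : ∀ k, 0 ≤ w k) (hsw : Summable w)
    (s : ℝ) (hs2 : s ^ 2 = 1)
    (hfin : {k | 0 < w k ∧ 1 + s * (-1 : ℝ) ^ k ≠ 0}.Finite) :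
    ∃ (m : ℕ) (x : Fin m → Metric.sphere (0 : EllTwo) 1) (c : Fin m → ℝ),
      Function.Injective x ∧ c ≠ 0 ∧
      ∑ i, ∑ j, c i * c j * (∑' k, w k * (⟪(x i : EllTwo), (x j : EllTwo)⟫ : ℝ) ^ k) = 0 := by
  classical
  set K0 : ℕ := hfin.toFinset.sup id + 1 with hK0def
  have hK0 : ∀ k, 0 < w k → 1 + s * (-1:ℝ)^k ≠ 0 → k < K0 := by
    intro k h1 h2
    have hmem : k ∈ hfin.toFinset := hfin.mem_toFinset.mpr ⟨h1, h2⟩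
    exact Nat.lt_succ_of_le (Finset.le_sup (f := id) hmem)
  set p : ℕ := K0 * K0 + 1 with hpdef
  have hcard : Fintype.card (Fin K0 × Fin K0) < p := by
    simp [hpdef]
  -- angles
  set θ : Fin p → ℝ := fun i => (i : ℕ) * (Real.pi / p) with hθdef
  have hp0 : (0:ℝ) < (p : ℝ) := by positivity
  have hπp : (0:ℝ) < Real.pi / p := div_pos Real.pi_pos hp0
  have hθ0 : ∀ i, 0 ≤ θ i := fun i => by positivity
  have hθπ : ∀ i, θ i < Real.pi := by
    intro i
    have h1 : ((i : ℕ) : ℝ) < (p : ℝ) := by exact_mod_cast i.2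
    calc θ i < (p : ℝ) * (Real.pi / p) := by
          exact mul_lt_mul_of_pos_right h1 hπp
      _ = Real.pi := by field_simp
  have hθinj : Function.Injective θ := by
    intro i j h
    have h2 : ((i : ℕ) : ℝ) = ((j : ℕ) : ℝ) := mul_right_cancel₀ (ne_of_gt hπp) h
    exact Fin.ext (Nat.cast_injective h2)
  -- coefficients killing the moments
  obtain ⟨d, hd0, hdm⟩ := auxKernelVec hcard
    (fun uv i => Real.cos (θ i) ^ (uv.1 : ℕ) * Real.sin (θ i) ^ (uv.2 : ℕ))
  -- points on the circle
  set y : Fin p → EllTwo := fun i =>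
    Real.cos (θ i) • lp.single 2 0 1 + Real.sin (θ i) • lp.single 2 1 1 with hydef
  have hyy : ∀ i j, (⟪y i, y j⟫ : ℝ)
      = Real.cos (θ i) * Real.cos (θ j) + Real.sin (θ i) * Real.sin (θ j) := by
    intro i j
    simp only [hydef, inner_add_left, inner_add_right, real_inner_smul_left,
      real_inner_smul_right, lp.inner_single_left, lp.single_apply]
    norm_num
    ring
  have hycos : ∀ i j, (⟪y i, y j⟫ : ℝ) = Real.cos (θ i - θ j) := by
    intro i j
    rw [hyy, Real.cos_sub]
  have hself : ∀ i, (⟪y i, y i⟫ : ℝ) = 1 := by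
    intro i
    rw [hycos, sub_self, Real.cos_zero]
  have hnorm : ∀ i, ‖y i‖ = 1 := by
    intro i
    have h1 : ‖y i‖ * ‖y i‖ = 1 := by
      rw [← real_inner_self_eq_norm_mul_norm, hself]
    rcases mul_self_eq_one_iff.mp h1 with h | h
    · exact h
    · have := norm_nonneg (y i)
      linarith
  -- inner products distinguish points
  have habsθ : ∀ i j : Fin p, |θ i - θ j| < Real.pi := by
    intro i j
    rw [abs_sub_lt_iff]
    constructor <;> have := hθ0 i <;> have := hθ0 j <;> have := hθπ i <;> have := hθπ j <;>
      linarith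
  have hginj : ∀ i j, (⟪y i, y j⟫ : ℝ) = 1 → i = j := by
    intro i j h
    rw [hycos] at h
    have h1 : Real.cos |θ i - θ j| = Real.cos 0 := by
      rw [Real.cos_abs, h, Real.cos_zero]
    have h2 : |θ i - θ j| = 0 := by
      refine Real.injOn_cos ⟨abs_nonneg _, le_of_lt (habsθ i j)⟩
        ⟨le_refl 0, le_of_lt Real.pi_pos⟩ h1
    exact hθinj (sub_eq_zero.mp (abs_eq_zero.mp h2))
  have hgneg : ∀ i j, (⟪y i, y j⟫ : ℝ) ≠ -1 := by
    intro i j h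
    rw [hycos] at h
    have h1 : Real.cos |θ i - θ j| = Real.cos Real.pi := by
      rw [Real.cos_abs, h, Real.cos_pi]
    have h2 : |θ i - θ j| = Real.pi := by
      refine Real.injOn_cos ⟨abs_nonneg _, le_of_lt (habsθ i j)⟩
        ⟨le_of_lt Real.pi_pos, le_refl _⟩ h1
    exact absurd h2 (ne_of_lt (habsθ i j))
  -- the sphere points (pairs of antipodes)
  set xS : Fin p ⊕ Fin p → Metric.sphere (0 : EllTwo) 1 :=
    Sum.elim (fun i => ⟨y i, mem_sphere_zero_iff_norm.mpr (hnorm i)⟩)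
      (fun i => ⟨-y i, mem_sphere_zero_iff_norm.mpr (by rw [norm_neg]; exact hnorm i)⟩)
    with hxSdef
  have hyinj : Function.Injective y := by
    intro i j h
    refine hginj i j ?_
    rw [h, hself]
  have hxinj : Function.Injective xS := by
    intro I J h
    have hval : (xS I : EllTwo) = (xS J : EllTwo) := congrArg Subtype.val h
    rcases I with i | i <;> rcases J with j | j
    · exact congrArg Sum.inl (hyinj (by simpa [hxSdef] using hval))
    · exfalso
      have h2 : y i = -y j := by simpa [hxSdef] using hval
      refine hgneg i j ?_
      rw [h2, inner_neg_left, hself j]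
    · exfalso
      have h2 : -y i = y j := by simpa [hxSdef] using hval
      refine hgneg j i ?_
      rw [← h2, inner_neg_left, hself i]
    · exact congrArg Sum.inr (hyinj (neg_injective (by simpa [hxSdef] using hval)))
  -- coefficients
  set cS : Fin p ⊕ Fin p → ℝ := Sum.elim d (fun i => s * d i) with hcSdef
  have hcS0 : cS ≠ 0 := by
    obtain ⟨i, hi⟩ := Function.ne_iff.mp hd0
    refine Function.ne_iff.mpr ⟨Sum.inl i, ?_⟩
    simpa [hcSdef] using hi
  -- the base quadratic forms
  set q : ℕ → ℝ := fun k => ∑ i, ∑ j, d i * d j * (⟪y i, y j⟫ : ℝ) ^ k with hqdef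
  have hq0 : ∀ k, k < K0 → q k = 0 := by
    intro k hk
    have hm : ∀ r : ℕ, r ≤ k → (∑ i, d i * (Real.cos (θ i) ^ r * Real.sin (θ i) ^ (k - r))) = 0 := by
      intro r hr
      exact hdm (⟨r, lt_of_le_of_lt hr hk⟩, ⟨k - r, lt_of_le_of_lt (Nat.sub_le k r) hk⟩)
    have hstep : ∀ i j : Fin p, d i * d j * (⟪y i, y j⟫ : ℝ) ^ k
        = ∑ r ∈ Finset.range (k + 1),
            (d i * (Real.cos (θ i) ^ r * Real.sin (θ i) ^ (k - r)))
            * (d j * (Real.cos (θ j) ^ r * Real.sin (θ j) ^ (k - r)))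
            * (k.choose r : ℝ) := by
      intro i j
      rw [hyy, add_pow, Finset.mul_sum]
      refine Finset.sum_congr rfl fun r _ => ?_
      rw [mul_pow, mul_pow]
      ring
    calc q k = ∑ i, ∑ j, ∑ r ∈ Finset.range (k + 1),
            (d i * (Real.cos (θ i) ^ r * Real.sin (θ i) ^ (k - r)))
            * (d j * (Real.cos (θ j) ^ r * Real.sin (θ j) ^ (k - r)))
            * (k.choose r : ℝ) := by
          exact Finset.sum_congr rfl fun i _ => Finset.sum_congr rfl fun j _ => hstep i j
      _ = ∑ i, ∑ r ∈ Finset.range (k + 1), ∑ j,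
            (d i * (Real.cos (θ i) ^ r * Real.sin (θ i) ^ (k - r)))
            * (d j * (Real.cos (θ j) ^ r * Real.sin (θ j) ^ (k - r)))
            * (k.choose r : ℝ) :=
          Finset.sum_congr rfl fun i _ => Finset.sum_comm
      _ = ∑ r ∈ Finset.range (k + 1), ∑ i, ∑ j,
            (d i * (Real.cos (θ i) ^ r * Real.sin (θ i) ^ (k - r)))
            * (d j * (Real.cos (θ j) ^ r * Real.sin (θ j) ^ (k - r)))
            * (k.choose r : ℝ) :=
          Finset.sum_comm
      _ = 0 := by
          refine Finset.sum_eq_zero fun r hr => ?_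
          have hr' : r ≤ k := Nat.lt_succ_iff.mp (Finset.mem_range.mp hr)
          refine Finset.sum_eq_zero fun i _ => ?_
          have hinner : ∑ j, (d i * (Real.cos (θ i) ^ r * Real.sin (θ i) ^ (k - r)))
              * (d j * (Real.cos (θ j) ^ r * Real.sin (θ j) ^ (k - r)))
              * (k.choose r : ℝ)
              = (d i * (Real.cos (θ i) ^ r * Real.sin (θ i) ^ (k - r))) * (k.choose r : ℝ)
                * ∑ j, d j * (Real.cos (θ j) ^ r * Real.sin (θ j) ^ (k - r)) := by
            rw [Finset.mul_sum]
            exact Finset.sum_congr rfl fun j _ => by ring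
          rw [hinner, hm r hr', mul_zero]
  -- the quadratic form over the antipodal configuration
  have hGval1 : ∀ i j, (⟪(xS (Sum.inl i) : EllTwo), (xS (Sum.inl j) : EllTwo)⟫ : ℝ)
      = ⟪y i, y j⟫ := fun i j => rfl
  have hGval2 : ∀ i j, (⟪(xS (Sum.inl i) : EllTwo), (xS (Sum.inr j) : EllTwo)⟫ : ℝ)
      = -⟪y i, y j⟫ := fun i j => by
    show (⟪y i, -y j⟫ : ℝ) = _
    rw [inner_neg_right]
  have hGval3 : ∀ i j, (⟪(xS (Sum.inr i) : EllTwo), (xS (Sum.inl j) : EllTwo)⟫ : ℝ)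
      = -⟪y i, y j⟫ := fun i j => by
    show (⟪-y i, y j⟫ : ℝ) = _
    rw [inner_neg_left]
  have hGval4 : ∀ i j, (⟪(xS (Sum.inr i) : EllTwo), (xS (Sum.inr j) : EllTwo)⟫ : ℝ)
      = ⟪y i, y j⟫ := fun i j => by
    show (⟪-y i, -y j⟫ : ℝ) = _
    rw [inner_neg_neg]
  have hQI : ∀ k : ℕ, (∑ I, ∑ J, cS I * cS J
        * (⟪(xS I : EllTwo), (xS J : EllTwo)⟫ : ℝ) ^ k)
      = (1 + s * (-1:ℝ)^k)^2 * q k := by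
    intro k
    have hε : ((-1:ℝ)^k)^2 = 1 := by
      rw [← pow_mul, mul_comm, pow_mul]
      norm_num
    have hterm : ∀ i j : Fin p,
        d i * d j * (⟪y i, y j⟫ : ℝ) ^ k
        + d i * (s * d j) * (-(⟪y i, y j⟫ : ℝ)) ^ k
        + ((s * d i) * d j * (-(⟪y i, y j⟫ : ℝ)) ^ k
        + (s * d i) * (s * d j) * (⟪y i, y j⟫ : ℝ) ^ k)
        = (1 + s * (-1:ℝ)^k)^2 * (d i * d j * (⟪y i, y j⟫ : ℝ) ^ k) := by
      intro i j
      rw [neg_pow]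
      linear_combination (-(d i * d j * (⟪y i, y j⟫ : ℝ) ^ k * s ^ 2)) * hε
    calc (∑ I, ∑ J, cS I * cS J * (⟪(xS I : EllTwo), (xS J : EllTwo)⟫ : ℝ) ^ k)
        = ∑ I, (∑ j, cS I * cS (Sum.inl j) * (⟪(xS I : EllTwo), (xS (Sum.inl j) : EllTwo)⟫ : ℝ) ^ k
            + ∑ j, cS I * cS (Sum.inr j) * (⟪(xS I : EllTwo), (xS (Sum.inr j) : EllTwo)⟫ : ℝ) ^ k) := by
          exact Finset.sum_congr rfl fun I _ => Fintype.sum_sum_type _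
      _ = (∑ i, (∑ j, cS (Sum.inl i) * cS (Sum.inl j) * (⟪(xS (Sum.inl i) : EllTwo), (xS (Sum.inl j) : EllTwo)⟫ : ℝ) ^ k
            + ∑ j, cS (Sum.inl i) * cS (Sum.inr j) * (⟪(xS (Sum.inl i) : EllTwo), (xS (Sum.inr j) : EllTwo)⟫ : ℝ) ^ k))
          + (∑ i, (∑ j, cS (Sum.inr i) * cS (Sum.inl j) * (⟪(xS (Sum.inr i) : EllTwo), (xS (Sum.inl j) : EllTwo)⟫ : ℝ) ^ k
            + ∑ j, cS (Sum.inr i) * cS (Sum.inr j) * (⟪(xS (Sum.inr i) : EllTwo), (xS (Sum.inr j) : EllTwo)⟫ : ℝ) ^ k)) :=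
          Fintype.sum_sum_type _
      _ = ∑ i, ∑ j, ((cS (Sum.inl i) * cS (Sum.inl j) * (⟪(xS (Sum.inl i) : EllTwo), (xS (Sum.inl j) : EllTwo)⟫ : ℝ) ^ k
            + cS (Sum.inl i) * cS (Sum.inr j) * (⟪(xS (Sum.inl i) : EllTwo), (xS (Sum.inr j) : EllTwo)⟫ : ℝ) ^ k)
            + (cS (Sum.inr i) * cS (Sum.inl j) * (⟪(xS (Sum.inr i) : EllTwo), (xS (Sum.inl j) : EllTwo)⟫ : ℝ) ^ k
            + cS (Sum.inr i) * cS (Sum.inr j) * (⟪(xS (Sum.inr i) : EllTwo), (xS (Sum.inr j) : EllTwo)⟫ : ℝ) ^ k)) := by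
          rw [← Finset.sum_add_distrib]
          refine Finset.sum_congr rfl fun i _ => ?_
          rw [← Finset.sum_add_distrib, ← Finset.sum_add_distrib,
            ← Finset.sum_add_distrib]
      _ = ∑ i, ∑ j, (1 + s * (-1:ℝ)^k)^2 * (d i * d j * (⟪y i, y j⟫ : ℝ) ^ k) := by
          refine Finset.sum_congr rfl fun i _ => Finset.sum_congr rfl fun j _ => ?_
          rw [hGval1, hGval2, hGval3, hGval4]
          have hc1 : cS (Sum.inl i) = d i := rfl
          have hc2 : cS (Sum.inl j) = d j := rfl
          have hc3 : cS (Sum.inr i) = s * d i := rfl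
          have hc4 : cS (Sum.inr j) = s * d j := rfl
          rw [hc1, hc2, hc3, hc4]
          rw [← hterm i j]
      _ = (1 + s * (-1:ℝ)^k)^2 * q k := by
          rw [hqdef, Finset.mul_sum]
          refine Finset.sum_congr rfl fun i _ => ?_
          rw [Finset.mul_sum]
  -- every coefficient of the series vanishes
  have hzero : ∀ k : ℕ, w k * (∑ I, ∑ J, cS I * cS J
      * (⟪(xS I : EllTwo), (xS J : EllTwo)⟫ : ℝ) ^ k) = 0 := by
    intro k
    by_cases hwk : w k = 0
    · rw [hwk, zero_mul]
    · have hwk' : 0 < w k := lt_of_le_of_ne (hw k) (Ne.symm hwk)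
      by_cases hε : 1 + s * (-1:ℝ)^k = 0
      · rw [hQI k, hε]
        ring
      · have hk : k < K0 := hK0 k hwk' hε
        rw [hQI k, hq0 k hk, mul_zero, mul_zero]
  -- transfer to a `Fin` indexed family
  refine ⟨p + p, fun I => xS (finSumFinEquiv.symm I), fun I => cS (finSumFinEquiv.symm I),
    hxinj.comp finSumFinEquiv.symm.injective, ?_, ?_⟩
  · obtain ⟨A, hA⟩ := Function.ne_iff.mp hcS0
    refine Function.ne_iff.mpr ⟨finSumFinEquiv A, ?_⟩
    simpa using hA
  · have hsum1 : ∀ (F : (Fin p ⊕ Fin p) → ℝ),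
        ∑ I : Fin (p + p), F (finSumFinEquiv.symm I) = ∑ A, F A := fun F =>
      Equiv.sum_comp finSumFinEquiv.symm F
    calc ∑ I : Fin (p + p), ∑ J : Fin (p + p),
          cS (finSumFinEquiv.symm I) * cS (finSumFinEquiv.symm J)
          * (∑' k, w k * (⟪(xS (finSumFinEquiv.symm I) : EllTwo),
              (xS (finSumFinEquiv.symm J) : EllTwo)⟫ : ℝ) ^ k)
        = ∑ A, ∑ B, cS A * cS B
          * (∑' k, w k * (⟪(xS A : EllTwo), (xS B : EllTwo)⟫ : ℝ) ^ k) := by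
          rw [hsum1 (fun A => ∑ J : Fin (p + p), cS A * cS (finSumFinEquiv.symm J)
            * (∑' k, w k * (⟪(xS A : EllTwo), (xS (finSumFinEquiv.symm J) : EllTwo)⟫ : ℝ) ^ k))]
          refine Finset.sum_congr rfl fun A _ => ?_
          exact hsum1 (fun B => cS A * cS B
            * (∑' k, w k * (⟪(xS A : EllTwo), (xS B : EllTwo)⟫ : ℝ) ^ k))
      _ = ∑' k, w k * ∑ A, ∑ B, cS A * cS B * (⟪(xS A : EllTwo), (xS B : EllTwo)⟫ : ℝ) ^ k :=
          auxFormEq w hw hsw xS cS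
      _ = 0 := by
          rw [tsum_congr hzero]
          exact tsum_zero

end AuxLemmas

theorem sum_spd_on_infinite_sphere
    (a b : ℕ → ℝ) (ha : ∀ k, 0 ≤ a k) (hb : ∀ l, 0 ≤ b l)
    (hsa : Summable a) (hsb : Summable b)
    (f g : ℝ → ℝ)
    (hf : ∀ t ∈ Set.Icc (-1 : ℝ) 1, f t = ∑' k : ℕ, a k * t ^ k)
    (hg : ∀ t ∈ Set.Icc (-1 : ℝ) 1, g t = ∑' l : ℕ, b l * t ^ l)
    (α β : ℝ) (hα : 0 ≤ α) (hβ : 0 ≤ β) :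
    IsStrictPosDefKernel
      (fun x y : Metric.sphere (0 : EllTwo) 1 =>
        α * f ⟪(x : EllTwo), (y : EllTwo)⟫ + β * g ⟪(x : EllTwo), (y : EllTwo)⟫) ↔
    (({k : ℕ | 0 < α * a k} ∪ {l : ℕ | 0 < β * b l}) ∩ {n : ℕ | Even n}).Infinite ∧
      (({k : ℕ | 0 < α * a k} ∪ {l : ℕ | 0 < β * b l}) ∩ {n : ℕ | Odd n}).Infinite := by
  classical
  set w : ℕ → ℝ := fun k => α * a k + β * b k with hwdef
  have hw : ∀ k, 0 ≤ w k := fun k => add_nonneg (mul_nonneg hα (ha k)) (mul_nonneg hβ (hb k))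
  have hsw : Summable w := (hsa.mul_left α).add (hsb.mul_left β)
  have hset : ({k : ℕ | 0 < α * a k} ∪ {l : ℕ | 0 < β * b l}) = {k | 0 < w k} := by
    ext k
    simp only [Set.mem_union, Set.mem_setOf_eq, hwdef]
    have h1 : 0 ≤ α * a k := mul_nonneg hα (ha k)
    have h2 : 0 ≤ β * b k := mul_nonneg hβ (hb k)
    constructor
    · rintro (h | h) <;> linarith
    · intro h
      rcases lt_or_ge 0 (α * a k) with h' | h'
      · exact Or.inl h'
      · exact Or.inr (by linarith)
  have hker : ∀ (x y : Metric.sphere (0 : EllTwo) 1),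
      α * f (⟪(x : EllTwo), (y : EllTwo)⟫ : ℝ) + β * g (⟪(x : EllTwo), (y : EllTwo)⟫ : ℝ)
        = ∑' k, w k * (⟪(x : EllTwo), (y : EllTwo)⟫ : ℝ) ^ k := by
    intro x y
    have habs := auxInnerMem x y
    exact auxKernelEq a b ha hb hsa hsb α β f g hf hg (Set.mem_Icc.mpr (abs_le.mp habs))
  have hform : ∀ (n : ℕ) (x : Fin n → Metric.sphere (0 : EllTwo) 1) (c : Fin n → ℝ),
      (∑ i, ∑ j, c i * c j
          * (α * f (⟪(x i : EllTwo), (x j : EllTwo)⟫ : ℝ)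
            + β * g (⟪(x i : EllTwo), (x j : EllTwo)⟫ : ℝ)))
        = ∑' k, w k * ∑ i, ∑ j, c i * c j * (⟪(x i : EllTwo), (x j : EllTwo)⟫ : ℝ) ^ k := by
    intro n x c
    rw [← auxFormEq w hw hsw x c]
    exact Finset.sum_congr rfl fun i _ => Finset.sum_congr rfl fun j _ => by
      rw [hker (x i) (x j)]
  constructor
  · rintro ⟨hpd, hstrict⟩
    rw [hset]
    by_contra hcon
    rw [not_and_or] at hcon
    have hcase : ∃ s : ℝ, s ^ 2 = 1 ∧ {k | 0 < w k ∧ 1 + s * (-1:ℝ)^k ≠ 0}.Finite := by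
      rcases hcon with h | h
      · refine ⟨1, by norm_num, ?_⟩
        have hseteq : {k | 0 < w k ∧ 1 + (1:ℝ) * (-1:ℝ)^k ≠ 0}
            = {k | 0 < w k} ∩ {n | Even n} := by
          ext k
          simp only [Set.mem_setOf_eq, Set.mem_inter_iff, one_mul]
          constructor
          · rintro ⟨h1, h2⟩
            refine ⟨h1, ?_⟩
            rcases Nat.even_or_odd k with he | ho
            · exact he
            · exact absurd (by rw [ho.neg_one_pow]; ring) h2
          · rintro ⟨h1, h2⟩
            refine ⟨h1, ?_⟩
            rw [h2.neg_one_pow]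
            norm_num
        rw [hseteq]
        exact Set.not_infinite.mp h
      · refine ⟨-1, by norm_num, ?_⟩
        have hseteq : {k | 0 < w k ∧ 1 + (-1:ℝ) * (-1:ℝ)^k ≠ 0}
            = {k | 0 < w k} ∩ {n | Odd n} := by
          ext k
          simp only [Set.mem_setOf_eq, Set.mem_inter_iff]
          constructor
          · rintro ⟨h1, h2⟩
            refine ⟨h1, ?_⟩
            rcases Nat.even_or_odd k with he | ho
            · exact absurd (by rw [he.neg_one_pow]; ring) h2
            · exact ho
          · rintro ⟨h1, h2⟩
            refine ⟨h1, ?_⟩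
            rw [h2.neg_one_pow]
            norm_num
        rw [hseteq]
        exact Set.not_infinite.mp h
    obtain ⟨s, hs2, hfin⟩ := hcase
    obtain ⟨m, x, c, hinj, hc0, hzero⟩ := auxNotStrict w hw hsw s hs2 hfin
    have hpos := hstrict m x c hinj hc0
    have heq : (∑ i, ∑ j, c i * c j
        * (α * f (⟪(x i : EllTwo), (x j : EllTwo)⟫ : ℝ)
          + β * g (⟪(x i : EllTwo), (x j : EllTwo)⟫ : ℝ)))
        = ∑ i, ∑ j, c i * c j
          * (∑' k, w k * (⟪(x i : EllTwo), (x j : EllTwo)⟫ : ℝ) ^ k) := by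
      exact Finset.sum_congr rfl fun i _ => Finset.sum_congr rfl fun j _ => by
        rw [hker (x i) (x j)]
    have hpos' : (0 : ℝ) < ∑ i, ∑ j, c i * c j
        * (α * f (⟪(x i : EllTwo), (x j : EllTwo)⟫ : ℝ)
          + β * g (⟪(x i : EllTwo), (x j : EllTwo)⟫ : ℝ)) := hpos
    rw [heq, hzero] at hpos'
    exact lt_irrefl 0 hpos'
  · rintro ⟨hev, hod⟩
    rw [hset] at hev hod
    constructor
    · intro n x c
      have h1 : (0:ℝ) ≤ ∑' k, w k
          * ∑ i, ∑ j, c i * c j * (⟪(x i : EllTwo), (x j : EllTwo)⟫ : ℝ) ^ k :=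
        tsum_nonneg fun k => mul_nonneg (hw k)
          (auxGramPow (fun i => (x i : EllTwo)) k c)
      calc (0:ℝ) ≤ _ := h1
        _ = _ := (hform n x c).symm
    · intro n x c hinj hc0
      have h1 := auxStrictPos w hw hsw hev hod x c hinj hc0
      calc (0:ℝ) < _ := h1
        _ = _ := (hform n x c).symm
end
end

section
/- Let a, b : ℕ → ℝ be sequences with a_k ≥ 0 and b_l ≥ 0 for all k, l, and with Σ_{k=0}^∞ a_k < ∞ and Σ_{l=0}^∞ b_l < ∞. Define c_0 = a_0 b_0 + (1/2) Σ_{μ=1}^∞ a_μ b_μ, and for m ≥ 1 define c_m = (1/2) Σ_{ν=0}^{m} a_ν b_{m−ν} + (1/2) Σ_{μ=0}^∞ (a_μ b_{μ+m} + a_{μ+m} b_μ). Then Σ_{m=0}^∞ c_m < ∞ and, for every θ ∈ ℝ, (Σ_{k=0}^∞ a_k cos(kθ)) · (Σ_{l=0}^∞ b_l cos(lθ)) = Σ_{m=0}^∞ c_m cos(mθ). -/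
open scoped BigOperators

set_option maxHeartbeats 1000000

noncomputable section

private lemma cos_mul_cos' (x y : ℝ) :
    Real.cos x * Real.cos y = 1 / 2 * (Real.cos (x + y) + Real.cos (x - y)) := by
  rw [Real.cos_add, Real.cos_sub]; ring

private lemma half_abs_cos_le {x : ℝ} (c : ℝ) (hx : 0 ≤ x) :
    ‖1 / 2 * x * Real.cos c‖ ≤ x := by
  rw [Real.norm_eq_abs, abs_mul, abs_mul, abs_of_nonneg hx]
  have h1 := Real.abs_cos_le_one c
  have h2 : |Real.cos c| ≥ 0 := abs_nonneg _
  have : |(1:ℝ)/2| = 1/2 := by norm_num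
  rw [this]
  nlinarith

/-- the equiv onto the set `p.1 ≤ p.2`, sending `(d, k)` to `(k, k + d)`. -/
private def eqUpper : (ℕ × ℕ) ≃ {p : ℕ × ℕ // p.1 ≤ p.2} where
  toFun p := ⟨(p.2, p.2 + p.1), Nat.le_add_right _ _⟩
  invFun q := (q.1.2 - q.1.1, q.1.1)
  left_inv p := by
    obtain ⟨d, k⟩ := p
    refine Prod.ext_iff.2 ⟨?_, rfl⟩
    show k + d - k = d
    omega
  right_inv q := by
    obtain ⟨⟨k, l⟩, h⟩ := q
    refine Subtype.ext (Prod.ext_iff.2 ⟨rfl, ?_⟩)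
    show k + (l - k) = l
    have h' : k ≤ l := h
    omega

/-- the equiv onto the set `¬ p.1 ≤ p.2`, sending `(d, l)` to `(l + d + 1, l)`. -/
private def eqLower : (ℕ × ℕ) ≃ {p : ℕ × ℕ // ¬ p.1 ≤ p.2} where
  toFun p := ⟨(p.2 + p.1 + 1, p.2), by omega⟩
  invFun q := (q.1.1 - q.1.2 - 1, q.1.2)
  left_inv p := by
    obtain ⟨d, l⟩ := p
    refine Prod.ext_iff.2 ⟨?_, rfl⟩
    show l + d + 1 - l - 1 = d
    omega
  right_inv q := by
    obtain ⟨⟨k, l⟩, h⟩ := q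
    refine Subtype.ext (Prod.ext_iff.2 ⟨?_, rfl⟩)
    have h' : ¬ k ≤ l := h
    show l + (k - l - 1) + 1 = k
    omega

theorem cosine_series_product
    (a b : ℕ → ℝ) (ha : ∀ k, 0 ≤ a k) (hb : ∀ l, 0 ≤ b l)
    (hsa : Summable a) (hsb : Summable b)
    (c : ℕ → ℝ)
    (hc0 : c 0 = a 0 * b 0 + (1 / 2) * ∑' μ : ℕ, a (μ + 1) * b (μ + 1))
    (hcm : ∀ m : ℕ, 1 ≤ m →
      c m = (1 / 2) * (∑ ν ∈ Finset.range (m + 1), a ν * b (m - ν)) +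
        (1 / 2) * ∑' μ : ℕ, (a μ * b (μ + m) + a (μ + m) * b μ)) :
    Summable c ∧
      ∀ θ : ℝ,
        (∑' k : ℕ, a k * Real.cos ((k : ℝ) * θ)) *
            (∑' l : ℕ, b l * Real.cos ((l : ℝ) * θ)) =
          ∑' m : ℕ, c m * Real.cos ((m : ℝ) * θ) := by
  -- basic summability of the double family
  have hna : Summable (fun k : ℕ => ‖a k‖) := by
    simpa only [Real.norm_eq_abs, abs_of_nonneg (ha _)] using hsa
  have hnb : Summable (fun l : ℕ => ‖b l‖) := by
    simpa only [Real.norm_eq_abs, abs_of_nonneg (hb _)] using hsb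
  have hab : Summable (fun p : ℕ × ℕ => a p.1 * b p.2) :=
    summable_mul_of_summable_norm hna hnb
  have hab_nn : ∀ p : ℕ × ℕ, 0 ≤ a p.1 * b p.2 := fun p => mul_nonneg (ha _) (hb _)
  -- summability of various composed families
  have habS : Summable (fun p : ℕ × ℕ => a p.2 * b (p.2 + p.1)) := by
    have : Function.Injective (fun p : ℕ × ℕ => ((p.2, p.2 + p.1) : ℕ × ℕ)) := by
      intro p q h
      simp only [Prod.mk.injEq] at h
      exact Prod.ext_iff.2 ⟨by omega, by omega⟩
    exact hab.comp_injective this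
  have habT : Summable (fun p : ℕ × ℕ => a (p.2 + p.1 + 1) * b p.2) := by
    have : Function.Injective (fun p : ℕ × ℕ => ((p.2 + p.1 + 1, p.2) : ℕ × ℕ)) := by
      intro p q h
      simp only [Prod.mk.injEq] at h
      exact Prod.ext_iff.2 ⟨by omega, by omega⟩
    exact hab.comp_injective this
  have habD : Summable (fun k : ℕ => a k * b k) := by
    have hinj : Function.Injective (fun k : ℕ => ((k, k) : ℕ × ℕ)) := by
      intro p q h
      simpa using congrArg Prod.fst h
    exact hab.comp_injective hinj
  -- fiberwise sums
  have hP : Summable (fun d : ℕ => ∑' k : ℕ, a k * b (k + d)) := habS.prod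
  have hP_nn : ∀ d : ℕ, 0 ≤ ∑' k : ℕ, a k * b (k + d) := fun d =>
    tsum_nonneg fun k => mul_nonneg (ha _) (hb _)
  have hPfib : ∀ d : ℕ, Summable (fun k : ℕ => a k * b (k + d)) := fun d =>
    habS.prod_factor d
  have hQfib : ∀ m : ℕ, Summable (fun l : ℕ => a (l + m) * b l) := by
    intro m
    apply hab.comp_injective (i := fun l : ℕ => ((l + m, l) : ℕ × ℕ))
    intro p q h; simp only [Prod.mk.injEq] at h; exact h.2
  have hQ_nn : ∀ m : ℕ, 0 ≤ ∑' l : ℕ, a (l + m) * b l := fun m =>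
    tsum_nonneg fun l => mul_nonneg (ha _) (hb _)
  have hQ : Summable (fun m : ℕ => ∑' l : ℕ, a (l + m) * b l) := by
    rw [← summable_nat_add_iff 1]
    exact habT.prod
  -- Cauchy-product coefficients
  have hA' : Summable (fun n : ℕ => ∑ ν ∈ Finset.range (n + 1), a ν * b (n - ν)) :=
    summable_sum_mul_range_of_summable_mul hab
  have hA'_nn : ∀ n : ℕ, 0 ≤ ∑ ν ∈ Finset.range (n + 1), a ν * b (n - ν) := fun n =>
    Finset.sum_nonneg fun ν _ => mul_nonneg (ha _) (hb _)
  -- the main computation, for every θ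
  have key : ∀ θ : ℝ,
      Summable (fun m : ℕ => c m * Real.cos ((m : ℝ) * θ)) ∧
      (∑' k : ℕ, a k * Real.cos ((k : ℝ) * θ)) *
          (∑' l : ℕ, b l * Real.cos ((l : ℝ) * θ)) =
        ∑' m : ℕ, c m * Real.cos ((m : ℝ) * θ) := by
    intro θ
    obtain ⟨f, hf_def⟩ : ∃ f : ℕ → ℝ, f = fun k => a k * Real.cos ((k : ℝ) * θ) := ⟨_, rfl⟩
    obtain ⟨g, hg_def⟩ : ∃ g : ℕ → ℝ, g = fun l => b l * Real.cos ((l : ℝ) * θ) := ⟨_, rfl⟩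
    have habs_f : ∀ k, ‖f k‖ ≤ a k := by
      intro k
      simp only [hf_def]
      rw [Real.norm_eq_abs, abs_mul, abs_of_nonneg (ha k)]
      exact mul_le_of_le_one_right (ha k) (Real.abs_cos_le_one _)
    have habs_g : ∀ l, ‖g l‖ ≤ b l := by
      intro l
      simp only [hg_def]
      rw [Real.norm_eq_abs, abs_mul, abs_of_nonneg (hb l)]
      exact mul_le_of_le_one_right (hb l) (Real.abs_cos_le_one _)
    have hfs : Summable f := Summable.of_norm_bounded hsa habs_f
    have hgs : Summable g := Summable.of_norm_bounded hsb habs_g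
    have hfg : Summable (fun p : ℕ × ℕ => f p.1 * g p.2) := by
      apply Summable.of_norm_bounded hab
      intro p
      rw [norm_mul]
      exact mul_le_mul (habs_f _) (habs_g _) (norm_nonneg _) (ha _)
    -- step 1 : product of sums = sum over pairs
    have step1 : (∑' k, f k) * (∑' l, g l) = ∑' p : ℕ × ℕ, f p.1 * g p.2 :=
      Summable.tsum_mul_tsum hfs hgs hfg
    -- split each term using the product-to-sum formula
    obtain ⟨H, hH_def⟩ : ∃ H : ℕ × ℕ → ℝ,
        H = fun p => 1 / 2 * (a p.1 * b p.2) * Real.cos (((p.1 + p.2 : ℕ) : ℝ) * θ) := ⟨_, rfl⟩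
    obtain ⟨G, hG_def⟩ : ∃ G : ℕ × ℕ → ℝ,
        G = fun p => 1 / 2 * (a p.1 * b p.2) * Real.cos (((p.1 : ℝ) - (p.2 : ℝ)) * θ) := ⟨_, rfl⟩
    have hHG : ∀ p : ℕ × ℕ, f p.1 * g p.2 = H p + G p := by
      rintro ⟨k, l⟩
      simp only [hf_def, hg_def, hH_def, hG_def]
      have h1 : ((k + l : ℕ) : ℝ) * θ = (k : ℝ) * θ + (l : ℝ) * θ := by push_cast; ring
      have h2 : ((k : ℝ) - (l : ℝ)) * θ = (k : ℝ) * θ - (l : ℝ) * θ := by ring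
      rw [h1, h2]
      have := cos_mul_cos' ((k : ℝ) * θ) ((l : ℝ) * θ)
      linear_combination (a k * b l) * this
    have hH : Summable H := by
      apply Summable.of_norm_bounded hab
      intro p
      simp only [hH_def]
      exact half_abs_cos_le _ (hab_nn p)
    have hG : Summable G := by
      apply Summable.of_norm_bounded hab
      intro p
      simp only [hG_def]
      exact half_abs_cos_le _ (hab_nn p)
    have step2 : ∑' p : ℕ × ℕ, f p.1 * g p.2 = (∑' p, H p) + (∑' p, G p) := by
      rw [tsum_congr hHG]
      exact Summable.tsum_add hH hG
    -- the three series
    obtain ⟨T1, hT1_def⟩ : ∃ T1 : ℕ → ℝ, T1 = fun n =>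
      1 / 2 * (∑ ν ∈ Finset.range (n + 1), a ν * b (n - ν)) * Real.cos ((n : ℝ) * θ) := ⟨_, rfl⟩
    obtain ⟨T2, hT2_def⟩ : ∃ T2 : ℕ → ℝ, T2 = fun d =>
      (∑' k : ℕ, a k * b (k + d)) * (1 / 2 * Real.cos ((d : ℝ) * θ)) := ⟨_, rfl⟩
    obtain ⟨T3, hT3_def⟩ : ∃ T3 : ℕ → ℝ, T3 = fun m =>
      if m = 0 then 0 else (∑' l : ℕ, a (l + m) * b l) * (1 / 2 * Real.cos ((m : ℝ) * θ))
      := ⟨_, rfl⟩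
    have hT1 : Summable T1 := by
      apply Summable.of_norm_bounded hA'
      intro n
      simp only [hT1_def]
      exact half_abs_cos_le _ (hA'_nn n)
    have hT2 : Summable T2 := by
      apply Summable.of_norm_bounded hP
      intro d
      simp only [hT2_def]
      have h := half_abs_cos_le (x := ∑' k : ℕ, a k * b (k + d)) ((d : ℝ) * θ) (hP_nn d)
      rw [show (∑' k : ℕ, a k * b (k + d)) * (1 / 2 * Real.cos ((d : ℝ) * θ))
          = 1 / 2 * (∑' k : ℕ, a k * b (k + d)) * Real.cos ((d : ℝ) * θ) from by ring]
      exact h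
    have hT3 : Summable T3 := by
      apply Summable.of_norm_bounded hQ
      intro m
      simp only [hT3_def]
      by_cases hm : m = 0
      · rw [if_pos hm]
        simpa using hQ_nn m
      · rw [if_neg hm]
        have h := half_abs_cos_le (x := ∑' l : ℕ, a (l + m) * b l) ((m : ℝ) * θ) (hQ_nn m)
        rw [show (∑' l : ℕ, a (l + m) * b l) * (1 / 2 * Real.cos ((m : ℝ) * θ))
            = 1 / 2 * (∑' l : ℕ, a (l + m) * b l) * Real.cos ((m : ℝ) * θ) from by ring]
        exact h
    -- step S1 : antidiagonal grouping for H
    have hS1 : ∑' p : ℕ × ℕ, H p = ∑' n : ℕ, T1 n := by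
      rw [← Finset.HasAntidiagonal.sigmaAntidiagonalEquivProd.tsum_eq H]
      have hHsig : Summable (fun x : Σ n : ℕ, Finset.HasAntidiagonal.antidiagonal n =>
          H (Finset.HasAntidiagonal.sigmaAntidiagonalEquivProd x)) :=
        Finset.HasAntidiagonal.sigmaAntidiagonalEquivProd.summable_iff.2 hH
      rw [Summable.tsum_sigma hHsig]
      refine tsum_congr fun n => ?_
      have : ∑' (p : Finset.HasAntidiagonal.antidiagonal n),
          H (Finset.HasAntidiagonal.sigmaAntidiagonalEquivProd ⟨n, p⟩) = ∑ p ∈ Finset.HasAntidiagonal.antidiagonal n, H p := by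
        rw [tsum_fintype]
        exact Finset.sum_coe_sort (Finset.HasAntidiagonal.antidiagonal n) H
      rw [this, Finset.Nat.sum_antidiagonal_eq_sum_range_succ (f := fun k l => H (k, l))]
      have : ∀ ν ∈ Finset.range (n + 1),
          H (ν, n - ν) = 1 / 2 * (a ν * b (n - ν)) * Real.cos ((n : ℝ) * θ) := by
        intro ν hν
        have hν' : ν + (n - ν) = n := Nat.add_sub_cancel' (Nat.lt_succ_iff.mp (Finset.mem_range.mp hν))
        simp only [hH_def]
        rw [hν']
      rw [Finset.sum_congr rfl this]
      simp only [hT1_def]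
      rw [← Finset.sum_mul, ← Finset.mul_sum]
    -- step S2 : grouping G by the difference
    have hS2 : ∑' p : ℕ × ℕ, G p = (∑' d : ℕ, T2 d) + (∑' d : ℕ, T3 (d + 1)) := by
      rw [← Summable.tsum_subtype_add_tsum_subtype_compl hG {p : ℕ × ℕ | p.1 ≤ p.2}]
      congr 1
      · -- upper part : pairs with p.1 ≤ p.2
        have he : ∑' (x : {p : ℕ × ℕ // p.1 ≤ p.2}), G ↑x
            = ∑' p : ℕ × ℕ, G (p.2, p.2 + p.1) :=
          (eqUpper.tsum_eq (fun x : {p : ℕ × ℕ // p.1 ≤ p.2} => G ↑x)).symm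
        have hGsum : Summable (fun p : ℕ × ℕ => G (p.2, p.2 + p.1)) := by
          have := (hG.subtype {p : ℕ × ℕ | p.1 ≤ p.2})
          exact eqUpper.summable_iff.2 this
        have he2 : ∑' p : ℕ × ℕ, G (p.2, p.2 + p.1)
            = ∑' (d : ℕ) (k : ℕ), G (k, k + d) := Summable.tsum_prod hGsum
        have he3 : ∀ d : ℕ, (∑' k : ℕ, G (k, k + d)) = T2 d := by
          intro d
          have : ∀ k : ℕ, G (k, k + d) = (a k * b (k + d)) * (1 / 2 * Real.cos ((d : ℝ) * θ)) := by
            intro k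
            simp only [hG_def]
            rw [show ((k : ℝ) - ((k + d : ℕ) : ℝ)) * θ = -((d : ℝ) * θ) by push_cast; ring,
              Real.cos_neg]
            ring
          rw [tsum_congr this, tsum_mul_right]
          simp only [hT2_def]
        calc (∑' (x : {p : ℕ × ℕ | p.1 ≤ p.2}), G ↑x)
            = ∑' p : ℕ × ℕ, G (p.2, p.2 + p.1) := he
          _ = ∑' (d : ℕ) (k : ℕ), G (k, k + d) := he2
          _ = ∑' d : ℕ, T2 d := tsum_congr he3
      · -- lower part : pairs with ¬ p.1 ≤ p.2
        have he : ∑' (x : {p : ℕ × ℕ // ¬ p.1 ≤ p.2}), G ↑x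
            = ∑' p : ℕ × ℕ, G (p.2 + p.1 + 1, p.2) :=
          (eqLower.tsum_eq (fun x : {p : ℕ × ℕ // ¬ p.1 ≤ p.2} => G ↑x)).symm
        have hGsum : Summable (fun p : ℕ × ℕ => G (p.2 + p.1 + 1, p.2)) := by
          have := (hG.subtype {p : ℕ × ℕ | p.1 ≤ p.2}ᶜ)
          exact eqLower.summable_iff.2 this
        have he2 : ∑' p : ℕ × ℕ, G (p.2 + p.1 + 1, p.2)
            = ∑' (d : ℕ) (l : ℕ), G (l + d + 1, l) := Summable.tsum_prod hGsum
        have he3 : ∀ d : ℕ, (∑' l : ℕ, G (l + d + 1, l)) = T3 (d + 1) := by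
          intro d
          have : ∀ l : ℕ, G (l + d + 1, l)
              = (a (l + (d + 1)) * b l) * (1 / 2 * Real.cos (((d + 1 : ℕ) : ℝ) * θ)) := by
            intro l
            simp only [hG_def]
            rw [show (((l + d + 1 : ℕ) : ℝ) - (l : ℝ)) * θ = (((d + 1 : ℕ)) : ℝ) * θ by
              push_cast; ring]
            rw [show l + d + 1 = l + (d + 1) by omega]
            ring
          rw [tsum_congr this, tsum_mul_right]
          simp only [hT3_def, Nat.succ_ne_zero, if_false, Nat.cast_add, Nat.cast_one]
        calc (∑' (x : ({p : ℕ × ℕ | p.1 ≤ p.2}ᶜ : Set (ℕ × ℕ))), G ↑x)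
            = ∑' p : ℕ × ℕ, G (p.2 + p.1 + 1, p.2) := he
          _ = ∑' (d : ℕ) (l : ℕ), G (l + d + 1, l) := he2
          _ = ∑' d : ℕ, T3 (d + 1) := tsum_congr he3
    -- reindex the T3 sum
    have hT30 : T3 0 = 0 := by simp [hT3_def]
    have hT3shift : ∑' d : ℕ, T3 (d + 1) = ∑' m : ℕ, T3 m := by
      rw [Summable.tsum_eq_zero_add hT3, hT30, zero_add]
    -- pointwise identification with c
    have hpoint : ∀ m : ℕ, T1 m + T2 m + T3 m = c m * Real.cos ((m : ℝ) * θ) := by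
      intro m
      cases m with
      | zero =>
        show T1 0 + T2 0 + T3 0 = c 0 * Real.cos (((0 : ℕ) : ℝ) * θ)
        have hdiag : (∑' k : ℕ, a k * b k) = a 0 * b 0 + ∑' μ : ℕ, a (μ + 1) * b (μ + 1) :=
          Summable.tsum_eq_zero_add habD
        have e1 : T1 0 = 1 / 2 * (a 0 * b 0) := by
          simp [hT1_def]
        have e2 : T2 0 = (∑' k : ℕ, a k * b k) * (1 / 2) := by
          simp [hT2_def]
        have e3 : T3 0 = 0 := hT30
        rw [e1, e2, e3, hdiag, hc0, Nat.cast_zero, zero_mul, Real.cos_zero]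
        ring
      | succ j =>
        have hm : 1 ≤ j + 1 := Nat.succ_le_succ (Nat.zero_le j)
        have hsplit : (∑' μ : ℕ, (a μ * b (μ + (j + 1)) + a (μ + (j + 1)) * b μ))
            = (∑' μ : ℕ, a μ * b (μ + (j + 1))) + ∑' μ : ℕ, a (μ + (j + 1)) * b μ :=
          Summable.tsum_add (hPfib (j + 1)) (hQfib (j + 1))
        rw [hcm (j + 1) hm, hsplit]
        simp only [hT1_def, hT2_def, hT3_def, if_neg (Nat.succ_ne_zero j)]
        ring
    -- assemble
    have hsum_all : Summable (fun m : ℕ => T1 m + T2 m + T3 m) := (hT1.add hT2).add hT3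
    have hsum_c : Summable (fun m : ℕ => c m * Real.cos ((m : ℝ) * θ)) :=
      hsum_all.congr hpoint
    refine ⟨hsum_c, ?_⟩
    calc (∑' k : ℕ, a k * Real.cos ((k : ℝ) * θ)) * (∑' l : ℕ, b l * Real.cos ((l : ℝ) * θ))
        = (∑' k, f k) * (∑' l, g l) := by rw [hf_def, hg_def]
      _ = ∑' p : ℕ × ℕ, f p.1 * g p.2 := step1
      _ = (∑' p, H p) + (∑' p, G p) := step2
      _ = (∑' n, T1 n) + ((∑' d, T2 d) + (∑' d, T3 (d + 1))) := by rw [hS1, hS2]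
      _ = (∑' n, T1 n) + ((∑' d, T2 d) + (∑' m, T3 m)) := by rw [hT3shift]
      _ = ∑' m : ℕ, (T1 m + T2 m + T3 m) := by
          rw [Summable.tsum_add (hT1.add hT2) hT3, Summable.tsum_add hT1 hT2]
          ring
      _ = ∑' m : ℕ, c m * Real.cos ((m : ℝ) * θ) := tsum_congr hpoint
  constructor
  · have h0 := (key 0).1
    apply h0.congr
    intro m
    simp
  · intro θ
    exact (key θ).2
end
end

section
/- Define f, g : [-1,1] → ℝ by f(t) = 1 + t and g(t) = Σ_{k=0}^∞ 3^{−(2k+1)} t^{2k+1}. Then: (1) the kernels (x,y) ↦ f(⟨x,y⟩) and (x,y) ↦ g(⟨x,y⟩) are positive definite on S^∞ but neither is strictly positive definite on S^∞; and (2) the product kernel (x,y) ↦ f(⟨x,y⟩) g(⟨x,y⟩) is strictly positive definite on S^∞. -/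
open scoped BigOperators RealInnerProductSpace

noncomputable section

namespace ProdStrictAux

/-- Positive semidefiniteness of the power kernels `⟨x,y⟩^m`. -/
lemma pow_psd (n : ℕ) (x : Fin n → EllTwo) (m : ℕ) :
    ∀ c : Fin n → ℝ, 0 ≤ ∑ i, ∑ j, c i * c j * ⟪x i, x j⟫ ^ m := by
  induction m with
  | zero =>
    intro c
    simp only [pow_zero, mul_one]
    rw [show ∑ i, ∑ j, c i * c j = (∑ i, c i) * (∑ j, c j) from (Finset.sum_mul_sum _ _ _ _).symm]
    exact mul_self_nonneg _
  | succ m ih =>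
    intro c
    have hsumm : ∀ i j : Fin n, Summable (fun k : ℕ =>
        c i * (x i) k * (c j * (x j) k) * ⟪x i, x j⟫ ^ m) := by
      intro i j
      have h := (lp.summable_inner (𝕜 := ℝ) (x i) (x j)).mul_left
        (c i * c j * ⟪x i, x j⟫ ^ m)
      refine h.congr fun k => ?_
      simp only [RCLike.inner_apply, conj_trivial]
      ring
    calc ∑ i, ∑ j, c i * c j * ⟪x i, x j⟫ ^ (m + 1)
        = ∑ i, ∑ j, ∑' k : ℕ, c i * (x i) k * (c j * (x j) k) * ⟪x i, x j⟫ ^ m := by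
          refine Finset.sum_congr rfl fun i _ => Finset.sum_congr rfl fun j _ => ?_
          have hin : ⟪x i, x j⟫ = ∑' k : ℕ, (x i) k * (x j) k := by
            rw [lp.inner_eq_tsum]; simp [RCLike.inner_apply]; exact tsum_congr fun k => mul_comm _ _
          rw [pow_succ, show c i * c j * (⟪x i, x j⟫ ^ m * ⟪x i, x j⟫)
              = (c i * c j * ⟪x i, x j⟫ ^ m) * ⟪x i, x j⟫ by ring, hin, ← tsum_mul_left]
          exact tsum_congr fun k => by ring
      _ = ∑ i, ∑' k : ℕ, ∑ j, c i * (x i) k * (c j * (x j) k) * ⟪x i, x j⟫ ^ m :=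
          Finset.sum_congr rfl fun i _ => (Summable.tsum_finsetSum fun j _ => hsumm i j).symm
      _ = ∑' k : ℕ, ∑ i, ∑ j, c i * (x i) k * (c j * (x j) k) * ⟪x i, x j⟫ ^ m :=
          (Summable.tsum_finsetSum fun i _ => summable_sum fun j _ => hsumm i j).symm
      _ ≥ 0 := by
          refine tsum_nonneg fun k => ?_
          have := ih (fun i => c i * (x i) k)
          refine le_trans this (le_of_eq ?_)
          exact Finset.sum_congr rfl fun i _ => Finset.sum_congr rfl fun j _ => by ring

lemma sph_norm (x : Metric.sphere (0:EllTwo) 1) : ‖(x : EllTwo)‖ = 1 := by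
  simpa using x.2

lemma inner_mem_Icc (x y : Metric.sphere (0:EllTwo) 1) :
    ⟪(x : EllTwo), (y : EllTwo)⟫ ∈ Set.Icc (-1:ℝ) 1 := by
  have h := abs_real_inner_le_norm (x : EllTwo) y
  rw [sph_norm, sph_norm, mul_one] at h
  exact abs_le.mp h

lemma inner_self_sph (x : Metric.sphere (0:EllTwo) 1) : ⟪(x : EllTwo), (x : EllTwo)⟫ = 1 := by
  rw [real_inner_self_eq_norm_sq, sph_norm]; norm_num

lemma inner_lt_one (x y : Metric.sphere (0:EllTwo) 1) (h : x ≠ y) :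
    ⟪(x : EllTwo), (y : EllTwo)⟫ < 1 := by
  refine lt_of_le_of_ne (inner_mem_Icc x y).2 (fun he => h ?_)
  exact Subtype.ext ((inner_eq_one_iff_of_norm_eq_one (sph_norm x) (sph_norm y)).mp he)

lemma exists_Q_pos (n : ℕ) (x : Fin n → Metric.sphere (0:EllTwo) 1) (c : Fin n → ℝ)
    (hx : Function.Injective x) (hc : c ≠ 0) :
    ∃ m, 1 ≤ m ∧ 0 < ∑ i, ∑ j, c i * c j * ⟪(x i : EllTwo), (x j : EllTwo)⟫ ^ m := by
  set t : Fin n → Fin n → ℝ := fun i j => ⟪(x i : EllTwo), (x j : EllTwo)⟫ with ht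
  set Q : ℕ → ℝ := fun m => ∑ i, ∑ j, c i * c j * t i j ^ m with hQdef
  have hQ : ∀ m, 0 ≤ Q m := fun m => pow_psd n (fun i => (x i : EllTwo)) m c
  set F : ℕ → ℝ := fun m => ∑ i, ∑ j, c i * c j * (t i j ^ (2*m) * (1 + t i j)) with hFdef
  have hF : ∀ m, F m = Q (2*m) + Q (2*m+1) := by
    intro m
    simp only [hFdef, hQdef, ← Finset.sum_add_distrib]
    refine Finset.sum_congr rfl fun i _ => Finset.sum_congr rfl fun j _ => ?_
    rw [pow_succ]; ring
  have hL : Filter.Tendsto F Filter.atTop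
      (nhds (∑ i, ∑ j, (if i = j then 2 * c i ^ 2 else 0))) := by
    refine tendsto_finset_sum _ fun i _ => tendsto_finset_sum _ fun j _ => ?_
    rcases eq_or_ne i j with rfl | hij
    · simp only [if_pos rfl]
      have : (fun m => c i * c i * (t i i ^ (2*m) * (1 + t i i))) = fun _ => 2 * c i ^ 2 := by
        funext m; rw [show t i i = 1 from inner_self_sph (x i)]; ring
      rw [this]; exact tendsto_const_nhds
    · simp only [if_neg hij]
      have h1 : t i j < 1 := inner_lt_one _ _ (fun he => hij (hx he))
      have h2 : -1 ≤ t i j := (inner_mem_Icc _ _).1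
      rcases eq_or_lt_of_le h2 with he | hlt
      · have : (fun m => c i * c j * (t i j ^ (2*m) * (1 + t i j))) = fun _ => 0 := by
          funext m; rw [← he]; ring
        rw [this]; exact tendsto_const_nhds
      · have habs : |t i j| < 1 := abs_lt.mpr ⟨hlt, h1⟩
        have hsq : t i j ^ 2 < 1 := (sq_lt_one_iff_abs_lt_one _).mpr habs
        have h0 : Filter.Tendsto (fun m : ℕ => (t i j ^ 2) ^ m) Filter.atTop (nhds 0) :=
          tendsto_pow_atTop_nhds_zero_of_lt_one (sq_nonneg _) hsq
        have := (h0.const_mul (c i * c j * (1 + t i j)))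
        rw [mul_zero] at this
        refine this.congr fun m => ?_
        rw [← pow_mul]; ring_nf
  have hdiag : (∑ i, ∑ j, (if i = j then 2 * c i ^ 2 else 0)) = ∑ i, 2 * c i ^ 2 := by
    refine Finset.sum_congr rfl fun i _ => ?_
    simp
  rw [hdiag] at hL
  obtain ⟨i0, hi0⟩ := Function.ne_iff.mp hc
  have hpos : 0 < ∑ i, 2 * c i ^ 2 :=
    Finset.sum_pos' (fun i _ => by positivity)
      ⟨i0, Finset.mem_univ i0, mul_pos two_pos (sq_pos_iff.mpr hi0)⟩
  obtain ⟨m, hm1, hm2⟩ := ((hL.eventually (eventually_gt_nhds hpos)).and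
    (Filter.eventually_ge_atTop 1)).exists
  rw [hF] at hm1
  rcases lt_or_ge 0 (Q (2*m)) with h | h
  · exact ⟨2*m, by omega, h⟩
  · exact ⟨2*m+1, by omega, by nlinarith [hQ (2*m+1)]⟩

lemma summable_aux1 (t : ℝ) (ht : |t| ≤ 1) :
    Summable (fun k : ℕ => (1/3:ℝ)^(2*k+1) * t^(2*k+1)) := by
  refine Summable.of_norm_bounded (g := fun k => (1/3:ℝ) * (1/9:ℝ)^k)
    ((summable_geometric_of_lt_one (by norm_num) (by norm_num)).mul_left _) fun k => ?_
  have h1 : |t ^ (2*k+1)| ≤ 1 := by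
    rw [abs_pow]; exact pow_le_one₀ (abs_nonneg t) ht
  have heq : ((1:ℝ)/3)^(2*k+1) = (1/3) * (1/9)^k := by
    rw [pow_succ, pow_mul]; norm_num; ring
  rw [norm_mul, norm_pow]
  calc ‖(1/3:ℝ)‖^(2*k+1) * ‖t^(2*k+1)‖ ≤ ‖(1/3:ℝ)‖^(2*k+1) * 1 := by
        refine mul_le_mul_of_nonneg_left ?_ (by positivity)
        simpa [Real.norm_eq_abs] using h1
    _ = (1/3:ℝ) * (1/9:ℝ)^k := by
        rw [mul_one, Real.norm_eq_abs, abs_of_nonneg (by norm_num : (0:ℝ) ≤ 1/3), heq]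

lemma summable_aux2 (t : ℝ) (ht : |t| ≤ 1) :
    Summable (fun k : ℕ => (1/3:ℝ)^(2*k+1) * (t^(2*k+1) + t^(2*k+2))) := by
  have h2 : Summable (fun k : ℕ => (1/3:ℝ)^(2*k+1) * (t^(2*k+1) * t)) := by
    have := (summable_aux1 t ht).mul_right t
    exact this.congr fun k => by ring
  refine ((summable_aux1 t ht).add h2).congr fun k => ?_
  rw [pow_succ]; ring

lemma abs_inner_le_one (x y : Metric.sphere (0:EllTwo) 1) :
    |⟪(x : EllTwo), (y : EllTwo)⟫| ≤ 1 := by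
  have := inner_mem_Icc x y
  exact abs_le.mpr this

/-- The `g`-kernel sum as a tsum. -/
lemma sum_g (g : ℝ → ℝ)
    (hg : ∀ t ∈ Set.Icc (-1:ℝ) 1, g t = ∑' k : ℕ, (1/3:ℝ)^(2*k+1) * t^(2*k+1))
    (n : ℕ) (x : Fin n → Metric.sphere (0:EllTwo) 1) (c : Fin n → ℝ) :
    ∑ i, ∑ j, c i * c j * g ⟪(x i : EllTwo), (x j : EllTwo)⟫
      = ∑' k : ℕ, ∑ i, ∑ j,
          c i * c j * ((1/3:ℝ)^(2*k+1) * ⟪(x i : EllTwo), (x j : EllTwo)⟫^(2*k+1)) := by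
  have hsumm : ∀ i j : Fin n, Summable (fun k : ℕ =>
      c i * c j * ((1/3:ℝ)^(2*k+1) * ⟪(x i : EllTwo), (x j : EllTwo)⟫^(2*k+1))) :=
    fun i j => (summable_aux1 _ (abs_inner_le_one (x i) (x j))).mul_left _
  calc ∑ i, ∑ j, c i * c j * g ⟪(x i : EllTwo), (x j : EllTwo)⟫
      = ∑ i, ∑ j, ∑' k : ℕ,
          c i * c j * ((1/3:ℝ)^(2*k+1) * ⟪(x i : EllTwo), (x j : EllTwo)⟫^(2*k+1)) := by
        refine Finset.sum_congr rfl fun i _ => Finset.sum_congr rfl fun j _ => ?_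
        rw [hg _ (inner_mem_Icc (x i) (x j)), ← tsum_mul_left]
    _ = ∑ i, ∑' k : ℕ, ∑ j,
          c i * c j * ((1/3:ℝ)^(2*k+1) * ⟪(x i : EllTwo), (x j : EllTwo)⟫^(2*k+1)) :=
        Finset.sum_congr rfl fun i _ => (Summable.tsum_finsetSum fun j _ => hsumm i j).symm
    _ = _ := (Summable.tsum_finsetSum fun i _ => summable_sum fun j _ => hsumm i j).symm

/-- The product-kernel sum as a tsum. -/
lemma sum_fg (f g : ℝ → ℝ)
    (hf : ∀ t ∈ Set.Icc (-1:ℝ) 1, f t = 1 + t)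
    (hg : ∀ t ∈ Set.Icc (-1:ℝ) 1, g t = ∑' k : ℕ, (1/3:ℝ)^(2*k+1) * t^(2*k+1))
    (n : ℕ) (x : Fin n → Metric.sphere (0:EllTwo) 1) (c : Fin n → ℝ) :
    ∑ i, ∑ j, c i * c j *
        (f ⟪(x i : EllTwo), (x j : EllTwo)⟫ * g ⟪(x i : EllTwo), (x j : EllTwo)⟫)
      = ∑' k : ℕ, ∑ i, ∑ j,
          c i * c j * ((1/3:ℝ)^(2*k+1) *
            (⟪(x i : EllTwo), (x j : EllTwo)⟫^(2*k+1)
              + ⟪(x i : EllTwo), (x j : EllTwo)⟫^(2*k+2))) := by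
  have hsumm : ∀ i j : Fin n, Summable (fun k : ℕ =>
      c i * c j * ((1/3:ℝ)^(2*k+1) *
        (⟪(x i : EllTwo), (x j : EllTwo)⟫^(2*k+1)
          + ⟪(x i : EllTwo), (x j : EllTwo)⟫^(2*k+2)))) :=
    fun i j => (summable_aux2 _ (abs_inner_le_one (x i) (x j))).mul_left _
  calc ∑ i, ∑ j, c i * c j *
        (f ⟪(x i : EllTwo), (x j : EllTwo)⟫ * g ⟪(x i : EllTwo), (x j : EllTwo)⟫)
      = ∑ i, ∑ j, ∑' k : ℕ,
          c i * c j * ((1/3:ℝ)^(2*k+1) *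
            (⟪(x i : EllTwo), (x j : EllTwo)⟫^(2*k+1)
              + ⟪(x i : EllTwo), (x j : EllTwo)⟫^(2*k+2))) := by
        refine Finset.sum_congr rfl fun i _ => Finset.sum_congr rfl fun j _ => ?_
        set s := ⟪(x i : EllTwo), (x j : EllTwo)⟫ with hs
        rw [hf _ (inner_mem_Icc (x i) (x j)), hg _ (inner_mem_Icc (x i) (x j)),
          ← tsum_mul_left, ← tsum_mul_left]
        refine tsum_congr fun k => ?_
        rw [pow_succ]
        ring
    _ = ∑ i, ∑' k : ℕ, ∑ j, c i * c j * ((1/3:ℝ)^(2*k+1) *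
            (⟪(x i : EllTwo), (x j : EllTwo)⟫^(2*k+1)
              + ⟪(x i : EllTwo), (x j : EllTwo)⟫^(2*k+2))) :=
        Finset.sum_congr rfl fun i _ => (Summable.tsum_finsetSum fun j _ => hsumm i j).symm
    _ = _ := (Summable.tsum_finsetSum fun i _ => summable_sum fun j _ => hsumm i j).symm

lemma term_g_eq (n : ℕ) (x : Fin n → Metric.sphere (0:EllTwo) 1) (c : Fin n → ℝ) (k : ℕ) :
    ∑ i, ∑ j, c i * c j * ((1/3:ℝ)^(2*k+1) * ⟪(x i : EllTwo), (x j : EllTwo)⟫^(2*k+1))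
      = (1/3:ℝ)^(2*k+1) *
          (∑ i, ∑ j, c i * c j * ⟪(x i : EllTwo), (x j : EllTwo)⟫^(2*k+1)) := by
  rw [Finset.mul_sum]
  refine Finset.sum_congr rfl fun i _ => ?_
  rw [Finset.mul_sum]
  exact Finset.sum_congr rfl fun j _ => by ring

lemma term_fg_eq (n : ℕ) (x : Fin n → Metric.sphere (0:EllTwo) 1) (c : Fin n → ℝ) (k : ℕ) :
    ∑ i, ∑ j, c i * c j * ((1/3:ℝ)^(2*k+1) *
        (⟪(x i : EllTwo), (x j : EllTwo)⟫^(2*k+1) + ⟪(x i : EllTwo), (x j : EllTwo)⟫^(2*k+2)))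
      = (1/3:ℝ)^(2*k+1) *
          ((∑ i, ∑ j, c i * c j * ⟪(x i : EllTwo), (x j : EllTwo)⟫^(2*k+1))
            + ∑ i, ∑ j, c i * c j * ⟪(x i : EllTwo), (x j : EllTwo)⟫^(2*k+2)) := by
  rw [← Finset.sum_add_distrib, Finset.mul_sum]
  refine Finset.sum_congr rfl fun i _ => ?_
  rw [← Finset.sum_add_distrib, Finset.mul_sum]
  exact Finset.sum_congr rfl fun j _ => by ring

end ProdStrictAux

namespace ProdStrictAux

lemma gram_identity (n : ℕ) (x : Fin n → Metric.sphere (0:EllTwo) 1) (c : Fin n → ℝ) :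
    ∑ i, ∑ j, c i * c j * ⟪(x i : EllTwo), (x j : EllTwo)⟫
      = ⟪∑ i, c i • (x i : EllTwo), ∑ j, c j • (x j : EllTwo)⟫ := by
  rw [sum_inner]
  refine Finset.sum_congr rfl fun i _ => ?_
  rw [inner_sum]
  refine Finset.sum_congr rfl fun j _ => ?_
  rw [real_inner_smul_left, real_inner_smul_right]; ring

lemma sum_f (f : ℝ → ℝ) (hf : ∀ t ∈ Set.Icc (-1:ℝ) 1, f t = 1 + t)
    (n : ℕ) (x : Fin n → Metric.sphere (0:EllTwo) 1) (c : Fin n → ℝ) :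
    ∑ i, ∑ j, c i * c j * f ⟪(x i : EllTwo), (x j : EllTwo)⟫
      = (∑ i, c i)^2 + ⟪∑ i, c i • (x i : EllTwo), ∑ j, c j • (x j : EllTwo)⟫ := by
  have key : ∀ i j : Fin n, c i * c j * f ⟪(x i : EllTwo), (x j : EllTwo)⟫
      = c i * c j + c i * c j * ⟪(x i : EllTwo), (x j : EllTwo)⟫ := by
    intro i j
    rw [hf _ (inner_mem_Icc (x i) (x j))]; ring
  simp only [key, Finset.sum_add_distrib]
  rw [gram_identity, ← Finset.sum_mul_sum, sq]

def E (i : ℕ) : EllTwo := lp.single 2 i (1:ℝ)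

lemma normE (i : ℕ) : ‖E i‖ = 1 := by
  have := lp.norm_single (E := fun _ : ℕ => ℝ) (p := 2) (by norm_num) i (1:ℝ)
  simpa [E] using this

lemma E_apply (i j : ℕ) : (E i) j = if j = i then 1 else 0 := by
  rcases eq_or_ne j i with rfl | h
  · simp [E, lp.single_apply_self]
  · simp [E, lp.single_apply_ne 2 i 1 h, h]

lemma E_mem (i : ℕ) : E i ∈ Metric.sphere (0:EllTwo) 1 := by
  simp [mem_sphere_iff_norm, normE]
lemma negE_mem (i : ℕ) : -E i ∈ Metric.sphere (0:EllTwo) 1 := by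
  simp [mem_sphere_iff_norm, normE]

def xf : Fin 4 → Metric.sphere (0:EllTwo) 1 :=
  ![⟨E 0, E_mem 0⟩, ⟨-E 0, negE_mem 0⟩, ⟨E 1, E_mem 1⟩, ⟨-E 1, negE_mem 1⟩]

lemma xf_inj : Function.Injective xf := by
  have key : ∀ a b : Fin 4, a ≠ b → ((xf a : EllTwo) ≠ (xf b : EllTwo)) := by
    intro a b hab
    fin_cases a <;> fin_cases b <;> (try exact absurd rfl hab) <;>
      (intro h;
       have h0 := congrFun (congrArg (fun z : EllTwo => (z : ℕ → ℝ)) h) 0;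
       have h1 := congrFun (congrArg (fun z : EllTwo => (z : ℕ → ℝ)) h) 1;
       simp [xf, E_apply] at h0 h1 <;> linarith)
  intro a b h
  by_contra hab
  exact key a b hab (congrArg _ h)

def xg : Fin 2 → Metric.sphere (0:EllTwo) 1 :=
  ![⟨E 0, E_mem 0⟩, ⟨-E 0, negE_mem 0⟩]

lemma xg_inj : Function.Injective xg := by
  have key : ∀ a b : Fin 2, a ≠ b → ((xg a : EllTwo) ≠ (xg b : EllTwo)) := by
    intro a b hab
    fin_cases a <;> fin_cases b <;> (try exact absurd rfl hab) <;>
      (intro h;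
       have h0 := congrFun (congrArg (fun z : EllTwo => (z : ℕ → ℝ)) h) 0;
       simp [xg, E_apply] at h0 <;> norm_num at h0)
  intro a b h
  by_contra hab
  exact key a b hab (congrArg _ h)

lemma g_neg_one (g : ℝ → ℝ)
    (hg : ∀ t ∈ Set.Icc (-1:ℝ) 1, g t = ∑' k : ℕ, (1/3:ℝ)^(2*k+1) * t^(2*k+1)) :
    g (-1) = - g 1 := by
  rw [hg (-1) (by norm_num), hg 1 (by norm_num), ← tsum_neg]
  refine tsum_congr fun k => ?_
  have h1 : ((-1:ℝ))^(2*k+1) = -1 := Odd.neg_one_pow (odd_two_mul_add_one k)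
  rw [h1, one_pow]
  ring

end ProdStrictAux

open ProdStrictAux

theorem product_of_nonstrict_can_be_strict
    (f g : ℝ → ℝ)
    (hf : ∀ t ∈ Set.Icc (-1 : ℝ) 1, f t = 1 + t)
    (hg : ∀ t ∈ Set.Icc (-1 : ℝ) 1,
      g t = ∑' k : ℕ, (1 / 3 : ℝ) ^ (2 * k + 1) * t ^ (2 * k + 1)) :
    (IsPosDefKernel
        (fun x y : Metric.sphere (0 : EllTwo) 1 => f ⟪(x : EllTwo), (y : EllTwo)⟫) ∧
      IsPosDefKernel
        (fun x y : Metric.sphere (0 : EllTwo) 1 => g ⟪(x : EllTwo), (y : EllTwo)⟫) ∧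
      ¬ IsStrictPosDefKernel
        (fun x y : Metric.sphere (0 : EllTwo) 1 => f ⟪(x : EllTwo), (y : EllTwo)⟫) ∧
      ¬ IsStrictPosDefKernel
        (fun x y : Metric.sphere (0 : EllTwo) 1 => g ⟪(x : EllTwo), (y : EllTwo)⟫)) ∧
    IsStrictPosDefKernel
      (fun x y : Metric.sphere (0 : EllTwo) 1 =>
        f ⟪(x : EllTwo), (y : EllTwo)⟫ * g ⟪(x : EllTwo), (y : EllTwo)⟫) := by
  have hg' : ∀ t ∈ Set.Icc (-1:ℝ) 1, g t = ∑' k : ℕ, (1/3:ℝ)^(2*k+1) * t^(2*k+1) := by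
    intro t htt; rw [hg t htt]
  refine ⟨⟨?_, ?_, ?_, ?_⟩, ?_, ?_⟩
  · -- f positive definite
    intro n x c
    dsimp only
    rw [sum_f f hf n x c]
    exact add_nonneg (sq_nonneg _) real_inner_self_nonneg
  · -- g positive definite
    intro n x c
    dsimp only
    rw [sum_g g hg' n x c]
    refine tsum_nonneg fun k => ?_
    rw [term_g_eq]
    exact mul_nonneg (by positivity) (pow_psd n (fun i => (x i : EllTwo)) _ c)
  · -- f not strictly positive definite
    rintro ⟨-, hstrict⟩
    have h := hstrict 4 xf ![1, 1, -1, -1] xf_inj (by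
      intro hcz
      have := congrFun hcz 0
      norm_num at this)
    dsimp only at h
    rw [sum_f f hf] at h
    have h1 : (∑ i, (![1, 1, -1, -1] : Fin 4 → ℝ) i) = 0 := by
      simp [Fin.sum_univ_four]
    have h2 : (∑ i, (![1, 1, -1, -1] : Fin 4 → ℝ) i • (xf i : EllTwo)) = 0 := by
      simp only [Fin.sum_univ_four, xf]
      simp [Matrix.cons_val_zero, Matrix.cons_val_one]
      try abel
    rw [h1, h2] at h
    simp at h
  · -- g not strictly positive definite
    rintro ⟨-, hstrict⟩
    have h := hstrict 2 xg ![1, 1] xg_inj (by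
      intro hcz
      have := congrFun hcz 0
      norm_num at this)
    dsimp only at h
    have e00 : ⟪(xg 0 : EllTwo), (xg 0 : EllTwo)⟫ = 1 := inner_self_sph (xg 0)
    have e11 : ⟪(xg 1 : EllTwo), (xg 1 : EllTwo)⟫ = 1 := inner_self_sph (xg 1)
    have e01 : ⟪(xg 0 : EllTwo), (xg 1 : EllTwo)⟫ = -1 := by
      have : (xg 1 : EllTwo) = -(xg 0 : EllTwo) := by
        simp [xg]
      rw [this, inner_neg_right, e00]
    have e10 : ⟪(xg 1 : EllTwo), (xg 0 : EllTwo)⟫ = -1 := by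
      rw [real_inner_comm]; exact e01
    rw [Fin.sum_univ_two, Fin.sum_univ_two, Fin.sum_univ_two] at h
    rw [e00, e01, e10, e11, g_neg_one g hg'] at h
    norm_num at h
  · -- product positive definite
    intro n x c
    dsimp only
    rw [sum_fg f g hf hg' n x c]
    refine tsum_nonneg fun k => ?_
    rw [term_fg_eq]
    refine mul_nonneg (by positivity) (add_nonneg ?_ ?_)
    · exact pow_psd n (fun i => (x i : EllTwo)) _ c
    · exact pow_psd n (fun i => (x i : EllTwo)) _ c
  · -- product strictly positive definite
    intro n x c hx hc
    dsimp only
    rw [sum_fg f g hf hg' n x c]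
    have hsumm : ∀ i j : Fin n, Summable (fun k : ℕ =>
        c i * c j * ((1/3:ℝ)^(2*k+1) *
          (⟪(x i : EllTwo), (x j : EllTwo)⟫^(2*k+1)
            + ⟪(x i : EllTwo), (x j : EllTwo)⟫^(2*k+2)))) :=
      fun i j => (summable_aux2 _ (abs_inner_le_one (x i) (x j))).mul_left _
    have hsum : Summable (fun k : ℕ => ∑ i, ∑ j,
        c i * c j * ((1/3:ℝ)^(2*k+1) *
          (⟪(x i : EllTwo), (x j : EllTwo)⟫^(2*k+1)
            + ⟪(x i : EllTwo), (x j : EllTwo)⟫^(2*k+2)))) :=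
      summable_sum fun i _ => summable_sum fun j _ => hsumm i j
    have hnonneg : ∀ k : ℕ, 0 ≤ ∑ i, ∑ j,
        c i * c j * ((1/3:ℝ)^(2*k+1) *
          (⟪(x i : EllTwo), (x j : EllTwo)⟫^(2*k+1)
            + ⟪(x i : EllTwo), (x j : EllTwo)⟫^(2*k+2))) := by
      intro k
      rw [term_fg_eq]
      exact mul_nonneg (by positivity) (add_nonneg
        (pow_psd n (fun i => (x i : EllTwo)) _ c) (pow_psd n (fun i => (x i : EllTwo)) _ c))
    obtain ⟨m, hm1, hm2⟩ := exists_Q_pos n x c hx hc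
    -- find k such that m = 2k+1 or m = 2k+2
    have hkey : ∃ k : ℕ, 0 < ∑ i, ∑ j,
        c i * c j * ((1/3:ℝ)^(2*k+1) *
          (⟪(x i : EllTwo), (x j : EllTwo)⟫^(2*k+1)
            + ⟪(x i : EllTwo), (x j : EllTwo)⟫^(2*k+2))) := by
      rcases Nat.even_or_odd m with ⟨l, hl⟩ | ⟨l, hl⟩
      · -- m = 2l, l ≥ 1, use k = l - 1
        refine ⟨l - 1, ?_⟩
        have hl1 : 1 ≤ l := by omega
        have hme : m = 2*(l-1) + 2 := by omega
        rw [term_fg_eq]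
        refine mul_pos (by positivity) ?_
        have := pow_psd n (fun i => (x i : EllTwo)) (2*(l-1)+1) c
        rw [hme] at hm2
        linarith
      · -- m = 2l + 1, use k = l
        refine ⟨l, ?_⟩
        rw [term_fg_eq]
        refine mul_pos (by positivity) ?_
        have := pow_psd n (fun i => (x i : EllTwo)) (2*l+2) c
        rw [hl] at hm2
        linarith
    obtain ⟨k, hk⟩ := hkey
    exact Summable.tsum_pos hsum hnonneg k hk
end
end
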